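/- arXiv:2407.17168 — 4 statements merged into one kernel-verified Lean document; each statement's English description precedes it below -/
import Mathlib

section
/- For every r-Stirling permutation ν of the set {2,...,n} and for each integer m in [0, r(n-1)], there is exactly one position at which inserting the block 1^r into ν increases MAJ by exactly m; i.e., the multiset {MAJ(ν_i) - MAJ(ν) : 0 ≤ i ≤ r(n-1)} equals {0, 1, ..., r(n-1)}, where ν_i denotes ν with 1^r inserted after position i. -/
open Finset

/-- The letter of the word `w` at the 1-based position `p` (junk `0` out of range). -/
def sv {m : ℕ} (w : Fin m → ℕ) (p : ℕ) : ℕ :=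
  if h : p - 1 < m then w ⟨p - 1, h⟩ else 0

open scoped Classical in
/-- `MAJ(ν) = ∑_{j ∈ J(ν)} j` where
`J(ν) = {1 ≤ j ≤ m - r : ν_j > ν_{j+1} = ν_{j+2} = ⋯ = ν_{j+r}}` (1-based). -/
noncomputable def stMAJ (r : ℕ) {m : ℕ} (w : Fin m → ℕ) : ℕ :=
  ∑ j ∈ (Finset.Icc 1 (m - r)).filter
      (fun j => (∀ t ∈ Finset.Icc 1 r, sv w (j + t) = sv w (j + 1)) ∧
        sv w (j + 1) < sv w j), j

/-- The word obtained from `w` by inserting `r` consecutive copies of the letter `1`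
immediately after the `i`-th letter (0 ≤ i ≤ m). -/
def insertOnes (r : ℕ) {m : ℕ} (w : Fin m → ℕ) (i : ℕ) (k : Fin (m + r)) : ℕ :=
  if h1 : (k : ℕ) < i ∧ (k : ℕ) < m then w ⟨k, h1.2⟩
  else if (k : ℕ) < i + r then 1
  else if h3 : (k : ℕ) - r < m then w ⟨(k : ℕ) - r, h3⟩ else 0

namespace StirAux

abbrev Dp (r : ℕ) {M : ℕ} (w : Fin M → ℕ) (j : ℕ) : Prop :=
  (∀ t ∈ Finset.Icc 1 r, sv w (j + t) = sv w (j + 1)) ∧ sv w (j + 1) < sv w j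

def DS (r : ℕ) {M : ℕ} (w : Fin M → ℕ) : Finset ℕ :=
  (Finset.Icc 1 (M - r)).filter (Dp r w)

lemma stMAJ_eq (r : ℕ) {M : ℕ} (w : Fin M → ℕ) : stMAJ r w = ∑ j ∈ DS r w, j := by
  refine Finset.sum_congr ?_ (fun _ _ => rfl)
  ext j
  simp [stMAJ, DS, Dp, Finset.mem_filter]

lemma sv_insert_lo (r : ℕ) {M : ℕ} (w : Fin M → ℕ) {i p : ℕ} (hi : i ≤ M)
    (hp : 1 ≤ p) (hpi : p ≤ i) : sv (insertOnes r w i) p = sv w p := by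
  have h1 : p - 1 < M := by omega
  have h2 : p - 1 < M + r := by omega
  simp only [sv, insertOnes, dif_pos h1, dif_pos h2]
  rw [dif_pos ⟨by omega, h1⟩]

lemma sv_insert_mid (r : ℕ) {M : ℕ} (w : Fin M → ℕ) {i p : ℕ}
    (hpi : i < p) (hpir : p ≤ i + r) (hi : i ≤ M) : sv (insertOnes r w i) p = 1 := by
  have h2 : p - 1 < M + r := by omega
  simp only [sv, insertOnes, dif_pos h2]
  rw [dif_neg (by omega), if_pos (by omega)]

lemma sv_insert_hi (r : ℕ) {M : ℕ} (w : Fin M → ℕ) {i p : ℕ}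
    (hp : i + r < p) : sv (insertOnes r w i) p = sv w (p - r) := by
  have he : p - 1 - r = p - r - 1 := by omega
  by_cases h2 : p - 1 < M + r
  · simp only [sv, insertOnes, dif_pos h2]
    rw [dif_neg (by omega), if_neg (by omega)]
    by_cases h3 : p - r - 1 < M
    · rw [dif_pos (by omega), dif_pos h3]
      congr 1
      exact Fin.ext he
    · rw [dif_neg (by omega), dif_neg h3]
  · simp only [sv]
    rw [dif_neg h2, dif_neg (by omega)]


lemma sv_ge2 {M : ℕ} (w : Fin M → ℕ) (hval2 : ∀ k, 2 ≤ w k) {p : ℕ}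
    (hp : 1 ≤ p) (hpM : p ≤ M) : 2 ≤ sv w p := by
  have h : p - 1 < M := by omega
  rw [sv, dif_pos h]; exact hval2 _

lemma Dp_insert_iff (r : ℕ) {M : ℕ} (w : Fin M → ℕ) (hr : 1 ≤ r)
    (hval2 : ∀ k, 2 ≤ w k) {i j : ℕ} (hi : i ≤ M) (hj1 : 1 ≤ j) (hjM : j ≤ M) :
    Dp r (insertOnes r w i) j ↔
      (j + r ≤ i ∧ Dp r w j) ∨ j = i ∨ (i + r < j ∧ Dp r w (j - r)) := by
  by_cases hA : j + r ≤ i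
  · -- window entirely in the prefix
    have e : ∀ t, t ≤ r → sv (insertOnes r w i) (j + t) = sv w (j + t) := fun t ht =>
      sv_insert_lo r w hi (by omega) (by omega)
    have ej : sv (insertOnes r w i) j = sv w j := sv_insert_lo r w hi hj1 (by omega)
    constructor
    · rintro ⟨h1, h2⟩
      refine Or.inl ⟨hA, fun t htm => ?_, ?_⟩
      · have ht := Finset.mem_Icc.mp htm
        have := h1 t htm
        rwa [e t ht.2, e 1 hr] at this
      · have := h2
        rwa [e 1 hr, ej] at this
    · rintro (⟨-, h1, h2⟩ | h | ⟨h, -⟩)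
      · refine ⟨fun t htm => ?_, ?_⟩
        · have ht := Finset.mem_Icc.mp htm
          rw [e t ht.2, e 1 hr]; exact h1 t htm
        · rw [e 1 hr, ej]; exact h2
      · omega
      · omega
  · by_cases hji : j < i
    · -- window straddles the insertion point : no descent
      constructor
      · rintro ⟨h1, h2⟩
        exfalso
        have hv1 : sv (insertOnes r w i) (j + r) = 1 :=
          sv_insert_mid r w (by omega) (by omega) hi
        have hv2 : sv (insertOnes r w i) (j + 1) = sv w (j + 1) :=
          sv_insert_lo r w hi (by omega) (by omega)
        have h3 := h1 r (Finset.mem_Icc.mpr ⟨hr, le_refl r⟩)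
        have h4 : 2 ≤ sv w (j + 1) := sv_ge2 w hval2 (by omega) (by omega)
        omega
      · rintro (⟨h, -⟩ | h | ⟨h, -⟩) <;> omega
    · by_cases hje : j = i
      · subst hje
        constructor
        · intro _; exact Or.inr (Or.inl rfl)
        · intro _
          refine ⟨fun t htm => ?_, ?_⟩
          · have ht := Finset.mem_Icc.mp htm
            rw [sv_insert_mid r w (by omega) (by omega) hi,
              sv_insert_mid r w (by omega) (by omega) hi]
          · rw [sv_insert_mid r w (by omega) (by omega) hi,
              sv_insert_lo r w hi hj1 (le_refl j)]
            have := sv_ge2 w hval2 hj1 hjM; omega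
      · by_cases hD : i + r < j
        · -- window entirely in the shifted suffix
          have ej : sv (insertOnes r w i) j = sv w (j - r) := sv_insert_hi r w (by omega)
          have e : ∀ t, 1 ≤ t → t ≤ r → sv (insertOnes r w i) (j + t) = sv w (j - r + t) := by
            intro t h1 h2
            rw [sv_insert_hi r w (by omega)]
            congr 1; omega
          constructor
          · rintro ⟨h1, h2⟩
            refine Or.inr (Or.inr ⟨hD, fun t htm => ?_, ?_⟩)
            · have ht := Finset.mem_Icc.mp htm
              have := h1 t htm
              rwa [e t ht.1 ht.2, e 1 (le_refl 1) hr] at this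
            · have := h2
              rwa [e 1 (le_refl 1) hr, ej] at this
          · rintro (⟨h, -⟩ | h | ⟨-, h1, h2⟩)
            · omega
            · omega
            · refine ⟨fun t htm => ?_, ?_⟩
              · have ht := Finset.mem_Icc.mp htm
                rw [e t ht.1 ht.2, e 1 (le_refl 1) hr]; exact h1 t htm
              · rw [e 1 (le_refl 1) hr, ej]; exact h2
        · -- j inside the inserted block : no descent
          constructor
          · rintro ⟨h1, h2⟩
            exfalso
            have hvj : sv (insertOnes r w i) j = 1 :=
              sv_insert_mid r w (by omega) (by omega) hi
            by_cases hc : j + 1 ≤ i + r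
            · have : sv (insertOnes r w i) (j + 1) = 1 :=
                sv_insert_mid r w (by omega) hc hi
              omega
            · have hv1 : sv (insertOnes r w i) (j + 1) = sv w (j + 1 - r) :=
                sv_insert_hi r w (by omega)
              have hv2 : 2 ≤ sv w (j + 1 - r) := sv_ge2 w hval2 (by omega) (by omega)
              omega
          · rintro (⟨h, -⟩ | h | ⟨h, -⟩) <;> omega

lemma DS_insert_eq (r : ℕ) {M : ℕ} (w : Fin M → ℕ) (hr : 1 ≤ r)
    (hval2 : ∀ k, 2 ≤ w k) {i : ℕ} (hi : i ≤ M) :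
    DS r (insertOnes r w i) =
      ((DS r w).filter (fun j => j + r ≤ i) ∪
        ((DS r w).filter (fun j => i < j)).image (· + r)) ∪
      (if 1 ≤ i then {i} else ∅) := by
  have hMr : M + r - r = M := by omega
  ext j
  simp only [DS, Finset.mem_filter, Finset.mem_Icc, Finset.mem_union, Finset.mem_image]
  constructor
  · rintro ⟨⟨hj1, hj2⟩, hDp⟩
    rw [hMr] at hj2
    rcases (Dp_insert_iff r w hr hval2 hi hj1 hj2).mp hDp with ⟨h1, h2⟩ | h | ⟨h1, h2⟩
    · exact Or.inl (Or.inl ⟨⟨⟨hj1, by omega⟩, h2⟩, h1⟩)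
    · right
      rw [if_pos (by omega : 1 ≤ i)]
      simp [h]
    · refine Or.inl (Or.inr ⟨j - r, ⟨⟨⟨by omega, by omega⟩, h2⟩, by omega⟩, by omega⟩)
  · rintro ((⟨⟨⟨ha1, ha2⟩, hd⟩, hle⟩ | ⟨a, ⟨⟨⟨ha1, ha2⟩, hd⟩, hia⟩, hj⟩) | hite)
    · have hjM : j ≤ M := by omega
      refine ⟨⟨ha1, by omega⟩, ?_⟩
      exact (Dp_insert_iff r w hr hval2 hi ha1 hjM).mpr (Or.inl ⟨hle, hd⟩)
    · subst hj
      have hjM : a + r ≤ M := by omega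
      refine ⟨⟨by omega, by omega⟩, ?_⟩
      refine (Dp_insert_iff r w hr hval2 hi (by omega) hjM).mpr
        (Or.inr (Or.inr ⟨by omega, ?_⟩))
      rwa [show a + r - r = a from by omega]
    · by_cases h1i : 1 ≤ i
      · rw [if_pos h1i, Finset.mem_singleton] at hite
        subst hite
        refine ⟨⟨h1i, by omega⟩, ?_⟩
        exact (Dp_insert_iff r w hr hval2 hi h1i hi).mpr (Or.inr (Or.inl rfl))
      · rw [if_neg h1i] at hite
        exact absurd hite (Finset.notMem_empty j)

lemma DS_partition (r : ℕ) {M : ℕ} (w : Fin M → ℕ) (i : ℕ) :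
    ∑ j ∈ DS r w, j =
      ∑ j ∈ (DS r w).filter (fun j => j + r ≤ i), j +
      ∑ j ∈ (DS r w).filter (fun j => j ≤ i ∧ i < j + r), j +
      ∑ j ∈ (DS r w).filter (fun j => i < j), j := by
  classical
  rw [← Finset.sum_filter_add_sum_filter_not (DS r w) (fun j => j + r ≤ i), add_assoc]
  congr 1
  rw [← Finset.sum_filter_add_sum_filter_not ((DS r w).filter (fun j => ¬ j + r ≤ i))
    (fun j => j ≤ i)]
  congr 1
  · rw [Finset.filter_filter]
    apply Finset.sum_congr _ (fun _ _ => rfl)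
    apply Finset.filter_congr
    intro x _
    constructor <;> intro h <;> simp_all <;> omega
  · rw [Finset.filter_filter]
    apply Finset.sum_congr _ (fun _ _ => rfl)
    apply Finset.filter_congr
    intro x _
    constructor <;> intro h <;> simp_all <;> omega

lemma key_identity (r : ℕ) {M : ℕ} (w : Fin M → ℕ) (hr : 1 ≤ r)
    (hval2 : ∀ k, 2 ≤ w k) {i : ℕ} (hi : i ≤ M) :
    stMAJ r (insertOnes r w i) +
        ∑ j ∈ (DS r w).filter (fun j => j ≤ i ∧ i < j + r), j =
      stMAJ r w + (if 1 ≤ i then i else 0) +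
        r * ((DS r w).filter (fun j => i < j)).card := by
  classical
  rw [stMAJ_eq, stMAJ_eq, DS_insert_eq r w hr hval2 hi]
  have hAB : Disjoint ((DS r w).filter (fun j => j + r ≤ i))
      (((DS r w).filter (fun j => i < j)).image (· + r)) := by
    rw [Finset.disjoint_left]
    intro x hx hx'
    simp only [Finset.mem_filter, Finset.mem_image] at hx hx'
    obtain ⟨a, ⟨-, ha⟩, rfl⟩ := hx'
    omega
  have hABI : Disjoint ((DS r w).filter (fun j => j + r ≤ i) ∪
      ((DS r w).filter (fun j => i < j)).image (· + r))
      (if 1 ≤ i then ({i} : Finset ℕ) else ∅) := by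
    rw [Finset.disjoint_right]
    intro x hx hx'
    by_cases h1i : 1 ≤ i
    · rw [if_pos h1i, Finset.mem_singleton] at hx
      subst hx
      simp only [Finset.mem_union, Finset.mem_filter, Finset.mem_image] at hx'
      rcases hx' with ⟨-, h⟩ | ⟨a, ⟨-, ha⟩, h⟩ <;> omega
    · rw [if_neg h1i] at hx
      exact absurd hx (Finset.notMem_empty x)
  rw [Finset.sum_union hABI, Finset.sum_union hAB]
  rw [Finset.sum_image (by intro a _ b _ h; simp only at h; omega)]
  have himg : ∑ j ∈ (DS r w).filter (fun j => i < j), (j + r) =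
      ∑ j ∈ (DS r w).filter (fun j => i < j), j +
        r * ((DS r w).filter (fun j => i < j)).card := by
    rw [Finset.sum_add_distrib, Finset.sum_const, smul_eq_mul, mul_comm]
  have hIsum : ∑ j ∈ (if 1 ≤ i then ({i} : Finset ℕ) else ∅), j =
      (if 1 ≤ i then i else 0) := by
    by_cases h1i : 1 ≤ i
    · rw [if_pos h1i, if_pos h1i, Finset.sum_singleton]
    · rw [if_neg h1i, if_neg h1i, Finset.sum_empty]
  rw [himg, hIsum, DS_partition r w i]
  generalize r * ((DS r w).filter (fun j => i < j)).card = c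
  generalize (if 1 ≤ i then i else 0) = d
  omega

lemma DS_bounds (r : ℕ) {M : ℕ} (w : Fin M → ℕ) :
    ∀ j ∈ DS r w, 1 ≤ j ∧ j + r ≤ M := by
  intro j hj
  have := Finset.mem_Icc.mp (Finset.mem_filter.mp hj).1
  omega

lemma spread (r : ℕ) {M : ℕ} (w : Fin M → ℕ) :
    ∀ j ∈ DS r w, ∀ j' ∈ DS r w, j < j' → j + r ≤ j' := by
  intro j hj j' hj' hlt
  by_contra hcon
  push_neg at hcon
  have hd := (Finset.mem_filter.mp hj).2
  have hd' := (Finset.mem_filter.mp hj').2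
  have ha : sv w j' = sv w (j + 1) := by
    have := hd.1 (j' - j) (Finset.mem_Icc.mpr ⟨by omega, by omega⟩)
    rwa [show j + (j' - j) = j' from by omega] at this
  have hb : sv w (j' + 1) = sv w (j + 1) := by
    have := hd.1 (j' - j + 1) (Finset.mem_Icc.mpr ⟨by omega, by omega⟩)
    rwa [show j + (j' - j + 1) = j' + 1 from by omega] at this
  have := hd'.2
  omega

lemma chain (r : ℕ) {M : ℕ} (w : Fin M → ℕ) :
    ∀ (c : ℕ) (T : Finset ℕ) (a b : ℕ), T.card = c → T ⊆ DS r w →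
      (∀ j ∈ T, a < j ∧ j + r ≤ b) → T.Nonempty → a + 1 + r * c ≤ b := by
  intro c
  induction c with
  | zero =>
    intro T a b hc _ _ hne
    rw [Finset.card_eq_zero] at hc
    subst hc
    exact absurd hne Finset.not_nonempty_empty
  | succ c ih =>
    intro T a b hc hsub hmem hne
    have hjm : T.max' hne ∈ T := T.max'_mem hne
    set jm := T.max' hne with hjmdef
    have hc' : (T.erase jm).card = c := by rw [Finset.card_erase_of_mem hjm, hc]; omega
    have hmem' : ∀ j ∈ T.erase jm, a < j ∧ j + r ≤ jm := by
      intro j hj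
      have hjT := Finset.mem_of_mem_erase hj
      have hlt : j < jm :=
        lt_of_le_of_ne (Finset.le_max' T j hjT) (Finset.ne_of_mem_erase hj)
      exact ⟨(hmem j hjT).1, spread r w j (hsub hjT) jm (hsub hjm) hlt⟩
    have hjmb : jm + r ≤ b := (hmem jm hjm).2
    have hjma : a < jm := (hmem jm hjm).1
    have hmul : r * (c + 1) = r * c + r := by ring
    rcases (T.erase jm).eq_empty_or_nonempty with he | hne'
    · have hc0 : c = 0 := by rw [← hc', he]; rfl
      subst hc0
      omega
    · have := ih (T.erase jm) a jm hc'
        (fun x hx => hsub (Finset.mem_of_mem_erase hx)) hmem' hne'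
      omega

end StirAux

namespace StirAux

lemma endgame (r : ℕ) {M : ℕ} (w : Fin M → ℕ) :
    ∀ m₀ ≤ M, ∃! i, i ≤ M ∧
      m₀ + (∑ j ∈ (DS r w).filter (fun j => j ≤ i ∧ i < j + r), j)
        = (if 1 ≤ i then i else 0) +
            r * ((DS r w).filter (fun j => i < j)).card := by
  classical
  set D := DS r w with hDdef
  set d := D.card with hddef
  set bb : ℕ → ℕ := fun i => (D.filter (fun x => i < x)).card with hbdef
  set ss : ℕ → ℕ := fun i => ∑ j ∈ D.filter (fun j => j ≤ i ∧ i < j + r), j with hsdef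
  set ip : ℕ → ℕ := fun i => if 1 ≤ i then i else 0 with hipdef
  have hDb : ∀ j ∈ D, 1 ≤ j ∧ j + r ≤ M := DS_bounds r w
  have hsp : ∀ j ∈ D, ∀ j' ∈ D, j < j' → j + r ≤ j' := spread r w
  have hip_le : ∀ i, ip i ≤ i := by intro i; simp only [hipdef]; split <;> omega
  have hip_eq : ∀ i, 1 ≤ i → ip i = i := by intro i h; simp only [hipdef, if_pos h]
  have hwit_s : ∀ i, ∀ j ∈ D, j ≤ i → i < j + r → ss i = j := by
    intro i j hjD hj1 hj2
    have hone : D.filter (fun x => x ≤ i ∧ i < x + r) = {j} := by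
      apply Finset.eq_singleton_iff_unique_mem.mpr
      refine ⟨Finset.mem_filter.mpr ⟨hjD, hj1, hj2⟩, ?_⟩
      intro x hx
      obtain ⟨hxD, hx1, hx2⟩ := Finset.mem_filter.mp hx
      by_contra hne
      rcases lt_or_gt_of_ne hne with h | h
      · have := hsp x hxD j hjD h; omega
      · have := hsp j hjD x hxD h; omega
    simp only [hsdef, hone, Finset.sum_singleton]
  have hwit_b : ∀ i, ∀ j ∈ D, j ≤ i → i < j + r →
      D.filter (fun x => i < x) = D.filter (fun x => j + r ≤ x) := by
    intro i j hjD hj1 hj2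
    ext x
    simp only [Finset.mem_filter, and_congr_right_iff]
    intro hxD
    constructor
    · intro h
      exact hsp j hjD x hxD (by omega)
    · intro h; omega
  have hgap_s : ∀ i, (¬ ∃ j ∈ D, j ≤ i ∧ i < j + r) → ss i = 0 := by
    intro i hgap
    have hemp : D.filter (fun x => x ≤ i ∧ i < x + r) = ∅ := by
      apply Finset.filter_eq_empty_iff.mpr
      intro x hx hcon
      exact hgap ⟨x, hx, hcon⟩
    simp only [hsdef, hemp, Finset.sum_empty]
  have hgap_le : ∀ i, (¬ ∃ j ∈ D, j ≤ i ∧ i < j + r) →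
      ∀ j ∈ D, j ≤ i → j + r ≤ i := by
    intro i hgap j hj hji
    by_contra hcon
    exact hgap ⟨j, hj, hji, by omega⟩
  have hpart : ∀ i, (D.filter (fun x => x ≤ i)).card + bb i = d := by
    intro i
    have he : D.filter (fun x => i < x) = D.filter (fun x => ¬ x ≤ i) := by
      ext x
      simp only [Finset.mem_filter, and_congr_right_iff]
      intro _
      omega
    simp only [hbdef, hddef, he]
    exact Finset.card_filter_add_card_filter_not _
  have hchain : ∀ (T : Finset ℕ) (a c : ℕ), T ⊆ D →
      (∀ j ∈ T, a < j ∧ j + r ≤ c) → T.Nonempty → a + 1 + r * T.card ≤ c := by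
    intro T a c hsub hmem hne
    exact chain r w T.card T a c rfl hsub hmem hne
  -- a blocked index yields a value < r*d ; a gap index yields a value ≥ r*d
  have blocked_lt : ∀ m₀ i, i ≤ M → (∃ j ∈ D, j ≤ i ∧ i < j + r) →
      m₀ + ss i = ip i + r * bb i → m₀ < r * d := by
    intro m₀ i hiM hex hR
    obtain ⟨j, hjD, hj1, hj2⟩ := hex
    have hs := hwit_s i j hjD hj1 hj2
    have hb' : bb i + 1 ≤ d := by
      have hss : D.filter (fun x => i < x) ⊂ D := by
        refine (Finset.ssubset_iff_of_subset (Finset.filter_subset _ _)).mpr ?_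
        refine ⟨j, hjD, ?_⟩
        simp only [Finset.mem_filter]
        omega
      have := Finset.card_lt_card hss
      simp only [hbdef, hddef]
      omega
    have hmul : r * bb i + r ≤ r * d := by
      have := Nat.mul_le_mul_left r hb'
      rwa [mul_add, mul_one] at this
    have hj01 : 1 ≤ j := (hDb j hjD).1
    have hipi : ip i = i := hip_eq i (by omega)
    omega
  have gap_ge : ∀ m₀ i, i ≤ M → (¬ ∃ j ∈ D, j ≤ i ∧ i < j + r) →
      m₀ + ss i = ip i + r * bb i → r * d ≤ m₀ := by
    intro m₀ i hiM hgap hR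
    have hs := hgap_s i hgap
    have hp := hpart i
    rcases Nat.eq_zero_or_pos (D.filter (fun x => x ≤ i)).card with ht | ht
    · have hbd : bb i = d := by omega
      have := hip_le i
      have hmul : r * bb i = r * d := by rw [hbd]
      -- if i = 0 then ip i = 0 and m₀ = r*d ; if i ≥ 1, m₀ = i + r*d
      omega
    · have hT : ∀ j ∈ D.filter (fun x => x ≤ i), 0 < j ∧ j + r ≤ i := by
        intro j hj
        obtain ⟨hjD, hji⟩ := Finset.mem_filter.mp hj
        exact ⟨(hDb j hjD).1, hgap_le i hgap j hjD hji⟩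
      have hch := hchain (D.filter (fun x => x ≤ i)) 0 i
        (Finset.filter_subset _ _) hT (Finset.card_pos.mp ht)
      have hipi : ip i = i := hip_eq i (by omega)
      have hmul : r * (D.filter (fun x => x ≤ i)).card + r * bb i = r * d := by
        rw [← mul_add, hp]
      omega
  have Cuniq : ∀ m₀ i₁ i₂, i₁ ≤ M → i₂ ≤ M → i₁ < i₂ →
      m₀ + ss i₁ = ip i₁ + r * bb i₁ → m₀ + ss i₂ = ip i₂ + r * bb i₂ → False := by
    intro m₀ i₁ i₂ hi₁ hi₂ hlt h₁ h₂
    by_cases hB₁ : ∃ j ∈ D, j ≤ i₁ ∧ i₁ < j + r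
    · by_cases hB₂ : ∃ j ∈ D, j ≤ i₂ ∧ i₂ < j + r
      · -- both blocked
        obtain ⟨j₁, hj₁D, hj₁a, hj₁b⟩ := hB₁
        obtain ⟨j₂, hj₂D, hj₂a, hj₂b⟩ := hB₂
        have hs₁ := hwit_s i₁ j₁ hj₁D hj₁a hj₁b
        have hs₂ := hwit_s i₂ j₂ hj₂D hj₂a hj₂b
        have hip₁ : ip i₁ = i₁ := hip_eq i₁ (by have := (hDb j₁ hj₁D).1; omega)
        have hip₂ : ip i₂ = i₂ := hip_eq i₂ (by have := (hDb j₂ hj₂D).1; omega)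
        by_cases hjj : j₁ = j₂
        · subst hjj
          have hbeq : bb i₁ = bb i₂ := by
            have e₁ := hwit_b i₁ j₁ hj₁D hj₁a hj₁b
            have e₂ := hwit_b i₂ j₁ hj₂D hj₂a hj₂b
            simp only [hbdef, e₁, e₂]
          have hmul : r * bb i₁ = r * bb i₂ := by rw [hbeq]
          omega
        · have hj₁₂ : j₁ < j₂ := by
            rcases lt_or_gt_of_ne hjj with h | h
            · exact h
            · have := hsp j₂ hj₂D j₁ hj₁D h; omega
          have hspr := hsp j₁ hj₁D j₂ hj₂D hj₁₂
          have hcard : bb i₂ + 1 ≤ bb i₁ := by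
            have hsub : insert j₂ (D.filter (fun x => i₂ < x)) ⊆
                D.filter (fun x => i₁ < x) := by
              intro x hx
              rcases Finset.mem_insert.mp hx with rfl | hx'
              · exact Finset.mem_filter.mpr ⟨hj₂D, by omega⟩
              · obtain ⟨hxD, hxi⟩ := Finset.mem_filter.mp hx'
                exact Finset.mem_filter.mpr ⟨hxD, by omega⟩
            have hnm : j₂ ∉ D.filter (fun x => i₂ < x) := by
              simp only [Finset.mem_filter]
              omega
            have := Finset.card_le_card hsub
            rw [Finset.card_insert_of_notMem hnm] at this
            simp only [hbdef]
            omega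
          have hmul : r * bb i₂ + r ≤ r * bb i₁ := by
            have := Nat.mul_le_mul_left r hcard
            rwa [mul_add, mul_one] at this
          omega
      · exact absurd (gap_ge m₀ i₂ hi₂ hB₂ h₂) (by
          have := blocked_lt m₀ i₁ hi₁ hB₁ h₁; omega)
    · by_cases hB₂ : ∃ j ∈ D, j ≤ i₂ ∧ i₂ < j + r
      · exact absurd (gap_ge m₀ i₁ hi₁ hB₁ h₁) (by
          have := blocked_lt m₀ i₂ hi₂ hB₂ h₂; omega)
      · -- both gaps
        have hs₁ := hgap_s i₁ hB₁
        have hs₂ := hgap_s i₂ hB₂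
        have hip₂ : ip i₂ = i₂ := hip_eq i₂ (by omega)
        have hip₁ := hip_le i₁
        set T := D.filter (fun x => i₁ < x ∧ x ≤ i₂) with hTdef
        have hsplitset : D.filter (fun x => i₁ < x) =
            T ∪ D.filter (fun x => i₂ < x) := by
          ext x
          simp only [hTdef, Finset.mem_union, Finset.mem_filter]
          constructor
          · rintro ⟨hxD, hxi⟩
            by_cases hxi₂ : x ≤ i₂
            · exact Or.inl ⟨hxD, hxi, hxi₂⟩
            · exact Or.inr ⟨hxD, by omega⟩
          · rintro (⟨hxD, hx1, hx2⟩ | ⟨hxD, hx⟩) <;> exact ⟨hxD, by omega⟩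
        have hdisj : Disjoint T (D.filter (fun x => i₂ < x)) := by
          rw [Finset.disjoint_left]
          intro x hx hx'
          have h1 := (Finset.mem_filter.mp hx).2
          have h2 := (Finset.mem_filter.mp hx').2
          omega
        have hbsplit : bb i₁ = T.card + bb i₂ := by
          simp only [hbdef]
          rw [hsplitset, Finset.card_union_of_disjoint hdisj]
        rcases T.eq_empty_or_nonempty with he | hne
        · rw [he] at hbsplit
          simp only [Finset.card_empty, Nat.zero_add] at hbsplit
          have hmul : r * bb i₁ = r * bb i₂ := by rw [hbsplit]
          omega
        · have hT : ∀ j ∈ T, i₁ < j ∧ j + r ≤ i₂ := by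
            intro j hj
            obtain ⟨hjD, hj1, hj2⟩ := Finset.mem_filter.mp hj
            exact ⟨hj1, hgap_le i₂ hB₂ j hjD hj2⟩
          have hch := hchain T i₁ i₂ (Finset.filter_subset _ _) hT hne
          have hmul : r * bb i₁ = r * T.card + r * bb i₂ := by
            rw [hbsplit, mul_add]
          omega
  -- existence via counting
  have hval_le : ∀ i, i ≤ M → ss i ≤ ip i + r * bb i ∧ ip i + r * bb i - ss i ≤ M := by
    intro i hiM
    have hub : ip i + r * bb i ≤ M := by
      rcases Nat.eq_zero_or_pos (bb i) with hb0 | hbpos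
      · have := hip_le i
        have : r * bb i = 0 := by rw [hb0, mul_zero]
        omega
      · have hT : ∀ j ∈ D.filter (fun x => i < x), i < j ∧ j + r ≤ M := by
          intro j hj
          obtain ⟨hjD, hji⟩ := Finset.mem_filter.mp hj
          exact ⟨hji, (hDb j hjD).2⟩
        have hch := hchain (D.filter (fun x => i < x)) i M
          (Finset.filter_subset _ _) hT (Finset.card_pos.mp hbpos)
        have := hip_le i
        simp only [hbdef] at *
        omega
    constructor
    · by_cases hB : ∃ j ∈ D, j ≤ i ∧ i < j + r
      · obtain ⟨j, hjD, hj1, hj2⟩ := hB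
        have hs := hwit_s i j hjD hj1 hj2
        have hj01 := (hDb j hjD).1
        have hipi : ip i = i := hip_eq i (by omega)
        omega
      · have hs := hgap_s i hB
        omega
    · omega
  intro m₀ hm₀
  -- the function i ↦ ip i + r * bb i - ss i is injective from range (M+1) to range (M+1)
  set φ : ℕ → ℕ := fun i => ip i + r * bb i - ss i with hφdef
  have hφR : ∀ i, i ≤ M → m₀ = φ i → m₀ + ss i = ip i + r * bb i := by
    intro i hiM hφ
    have := (hval_le i hiM).1
    simp only [hφdef] at hφ
    omega
  have hφmem : (Finset.range (M + 1)).image φ ⊆ Finset.range (M + 1) := by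
    intro x hx
    obtain ⟨i, hi, rfl⟩ := Finset.mem_image.mp hx
    have hiM : i ≤ M := by have := Finset.mem_range.mp hi; omega
    have := (hval_le i hiM).2
    simp only [hφdef]
    exact Finset.mem_range.mpr (by omega)
  have hφinj : Set.InjOn φ (Finset.range (M + 1)) := by
    intro i₁ hi₁ i₂ hi₂ heq
    simp only [Finset.coe_range, Set.mem_Iio] at hi₁ hi₂
    by_contra hne
    have hR₁ : φ i₁ + ss i₁ = ip i₁ + r * bb i₁ := by
      have := (hval_le i₁ (by omega)).1
      simp only [hφdef]
      omega
    have hR₂ : φ i₂ + ss i₂ = ip i₂ + r * bb i₂ := by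
      have := (hval_le i₂ (by omega)).1
      simp only [hφdef]
      omega
    rw [heq] at hR₁
    rcases lt_or_gt_of_ne hne with h | h
    · exact Cuniq (φ i₂) i₁ i₂ (by omega) (by omega) h hR₁ hR₂
    · exact Cuniq (φ i₂) i₂ i₁ (by omega) (by omega) h hR₂ hR₁
  have himg : (Finset.range (M + 1)).image φ = Finset.range (M + 1) := by
    apply Finset.eq_of_subset_of_card_le hφmem
    rw [Finset.card_image_of_injOn hφinj]
  have hm₀mem : m₀ ∈ (Finset.range (M + 1)).image φ := by
    rw [himg]
    exact Finset.mem_range.mpr (by omega)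
  obtain ⟨i, hi, hφi⟩ := Finset.mem_image.mp hm₀mem
  have hiM : i ≤ M := by have := Finset.mem_range.mp hi; omega
  refine ⟨i, ⟨hiM, hφR i hiM hφi.symm⟩, ?_⟩
  intro y ⟨hyM, hy⟩
  by_contra hne
  rcases lt_or_gt_of_ne hne with h | h
  · exact Cuniq m₀ y i hyM hiM h hy (hφR i hiM hφi.symm)
  · exact Cuniq m₀ i y hiM hyM h (hφR i hiM hφi.symm) hy

end StirAux

open scoped Classical in
/-- For an `r`-Stirling permutation `w` of the set `{2,…,n}` and every
`m₀ ∈ [0, r(n-1)]`, there is exactly one position `i ∈ [0, r(n-1)]` such that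
inserting the block `1^r` after position `i` increases `MAJ` by exactly `m₀`. -/
theorem insert_ones_MAJ_bijective (r n : ℕ) (hr : 1 ≤ r) (hn : 1 ≤ n)
    (w : Fin (r * (n - 1)) → ℕ)
    (hval : ∀ i, 2 ≤ w i ∧ w i ≤ n)
    (hcount : ∀ v, 2 ≤ v → v ≤ n →
      (univ.filter (fun i => w i = v)).card = r)
    (hstir : ∀ a b c : Fin (r * (n - 1)), a < b → b < c → w a = w c → w a ≤ w b) :
    ∀ m₀ ≤ r * (n - 1), ∃! i, i ≤ r * (n - 1) ∧
      stMAJ r (insertOnes r w i) = stMAJ r w + m₀ := by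
  intro m₀ hm₀
  have hval2 : ∀ k, 2 ≤ w k := fun k => (hval k).1
  obtain ⟨i, ⟨hiM, hR⟩, huniq⟩ := StirAux.endgame r w m₀ hm₀
  refine ⟨i, ⟨hiM, ?_⟩, ?_⟩
  · have hk := StirAux.key_identity r w hr hval2 hiM
    omega
  · rintro y ⟨hyM, hy⟩
    have hk := StirAux.key_identity r w hr hval2 hyM
    exact huniq y ⟨hyM, by omega⟩
end

section
/- For a non-crossing partition π of [n], define wt(B) = 0 if block B is a singleton, and wt(B) = j_1 + j_p + 2∑_{k=2}^{p-1} j_k - p + 1 for B = (j_1 < ... < j_p) with p ≥ 2. Then ∑_{π ∈ NC(n)} q^{∑_{B∈π} wt(B)} = (1/[n+1]) qbinom(2n, n). -/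
open Finset Polynomial

/-- `P` is a set partition of `{1,…,n}`: blocks are nonempty subsets of `[n]` and
every element of `[n]` lies in exactly one block. -/
def IsPartitionOf (n : ℕ) (P : Finset (Finset ℕ)) : Prop :=
  (∀ B ∈ P, B.Nonempty) ∧ (∀ B ∈ P, B ⊆ Finset.Icc 1 n) ∧
  (∀ i ∈ Finset.Icc 1 n, ∃! B, B ∈ P ∧ i ∈ B)

/-- `P` is non-crossing: there are no `a < b < c < d` with `a, c` in one block and
`b, d` in a different block. -/
def IsNonCrossing (P : Finset (Finset ℕ)) : Prop :=
  ∀ B₁ ∈ P, ∀ B₂ ∈ P, ∀ a ∈ B₁, ∀ c ∈ B₁, ∀ b ∈ B₂, ∀ d ∈ B₂,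
    a < b → b < c → c < d → B₁ = B₂

/-- The weight of a block `B = (j_1 < … < j_p)`:
`wt(B) = 0` if `p = 1` and `wt(B) = j_1 + j_p + 2∑_{k=2}^{p-1} j_k - p + 1`
(equivalently `2∑_{j∈B} j + 1 - (min B + max B + p)`) if `p ≥ 2`. -/
def blockWt (B : Finset ℕ) : ℕ :=
  if h : 2 ≤ B.card then
    (∑ j ∈ B, 2 * j) + 1 -
      (B.min' (Finset.card_pos.mp (by omega)) + B.max' (Finset.card_pos.mp (by omega)) + B.card)
  else 0

/-- The `q`-integer `[m] = 1 + q + ⋯ + q^{m-1}`. -/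
noncomputable def qInt (m : ℕ) : Polynomial ℕ := ∑ i ∈ Finset.range m, X ^ i

/-- The Gaussian binomial coefficient. -/
noncomputable def qBinom : ℕ → ℕ → Polynomial ℕ
  | _, 0 => 1
  | 0, _ + 1 => 0
  | n + 1, k + 1 => qBinom n k + X ^ (k + 1) * qBinom n (k + 1)

noncomputable def bz (m : ℕ) (k : ℤ) : Polynomial ℤ :=
  if 0 ≤ k then (qBinom m k.toNat).map (Nat.castRingHom ℤ) else 0

noncomputable def qIz (m : ℕ) : Polynomial ℤ := (qInt m).map (Nat.castRingHom ℤ)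

lemma qBinom_zero_right (m : ℕ) : qBinom m 0 = 1 := by cases m <;> rfl

lemma qBinom_eq_zero {m k : ℕ} (h : m < k) : qBinom m k = 0 := by
  induction m generalizing k with
  | zero =>
      cases k with
      | zero => omega
      | succ k => rfl
  | succ m ih =>
      cases k with
      | zero => omega
      | succ k =>
        show qBinom m k + X ^ (k+1) * qBinom m (k+1) = 0
        rw [ih (by omega), ih (by omega)]; ring

lemma qBinom_self (m : ℕ) : qBinom m m = 1 := by
  induction m with
  | zero => rfl
  | succ m ih =>
      show qBinom m m + X ^ (m+1) * qBinom m (m+1) = 1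
      rw [ih, qBinom_eq_zero (by omega)]; ring

lemma bz_neg {m : ℕ} {k : ℤ} (h : k < 0) : bz m k = 0 := by
  simp [bz, not_le.mpr h]

lemma bz_of_nonneg {m : ℕ} {k : ℤ} (h : 0 ≤ k) :
    bz m k = (qBinom m k.toNat).map (Nat.castRingHom ℤ) := by simp [bz, h]

lemma bz_natCast (m k : ℕ) : bz m (k : ℤ) = (qBinom m k).map (Nat.castRingHom ℤ) := by
  simp [bz]

lemma bz_zero_right (m : ℕ) : bz m 0 = 1 := by
  rw [show ((0:ℤ)) = ((0:ℕ):ℤ) by norm_num, bz_natCast, qBinom_zero_right]; simp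

lemma bz_eq_zero_of_gt {m : ℕ} {k : ℤ} (h : (m : ℤ) < k) : bz m k = 0 := by
  rw [bz_of_nonneg (by omega), qBinom_eq_zero (by omega)]; simp

lemma bz_pascal (m : ℕ) (k : ℤ) :
    bz (m + 1) k = bz m (k - 1) + X ^ k.toNat * bz m k := by
  rcases lt_trichotomy k 0 with h | h | h
  · rw [bz_neg h, bz_neg (by omega), bz_neg h]; ring
  · subst h; rw [bz_zero_right, bz_zero_right, bz_neg (by omega)]; simp
  · obtain ⟨j, rfl⟩ : ∃ j : ℕ, k = (j : ℤ) + 1 := ⟨(k - 1).toNat, by omega⟩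
    rw [show ((j:ℤ) + 1 - 1) = (j : ℤ) by ring, bz_natCast,
      show ((j:ℤ)+1) = ((j+1 : ℕ):ℤ) by push_cast; ring, bz_natCast, bz_natCast]
    show (qBinom m j + X ^ (j+1) * qBinom m (j+1)).map (Nat.castRingHom ℤ) = _
    rw [Polynomial.map_add, Polynomial.map_mul, Polynomial.map_pow, Polynomial.map_X]
    norm_num

lemma bz_self (m : ℕ) : bz m (m : ℤ) = 1 := by
  rw [bz_natCast, qBinom_self]; simp

lemma bz_rev_pascal (m : ℕ) (k : ℤ) :
    bz (m + 1) k = X ^ ((m : ℤ) + 1 - k).toNat * bz m (k - 1) + bz m k := by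
  induction m generalizing k with
  | zero =>
      rcases lt_trichotomy k 0 with h | h | h
      · rw [bz_neg h, bz_neg (by omega), bz_neg h]; ring
      · subst h
        rw [bz_zero_right, bz_zero_right, bz_neg (by omega)]; simp
      · rcases lt_trichotomy k 1 with h1 | h1 | h1
        · omega
        · subst h1
          rw [bz_pascal 0 1]
          rw [show ((1:ℤ) - 1) = (0:ℤ) by ring, bz_zero_right,
            bz_eq_zero_of_gt (show ((0:ℕ):ℤ) < 1 by norm_num)]
          simp
        · rw [bz_eq_zero_of_gt (by omega), bz_eq_zero_of_gt (by omega),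
            bz_eq_zero_of_gt (by omega)]; ring
  | succ m ih =>
      rcases lt_trichotomy k 0 with h | h | h
      · rw [bz_neg h, bz_neg (by omega), bz_neg h]; ring
      · subst h
        rw [bz_zero_right, bz_zero_right, bz_neg (by omega)]; simp
      · obtain ⟨j, rfl⟩ : ∃ j : ℕ, k = (j : ℤ) + 1 := ⟨(k - 1).toNat, by omega⟩
        rcases lt_trichotomy (m + 1) j with hj | hj | hj
        · rw [bz_eq_zero_of_gt (by push_cast; omega), bz_eq_zero_of_gt (by push_cast; omega),
            bz_eq_zero_of_gt (by push_cast; omega)]; ring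
        · subst hj
          have A : ((m+1:ℕ):ℤ) + 1 = ((m+1+1:ℕ):ℤ) := by push_cast; ring
          rw [A, bz_self]
          have B : ((m+1+1:ℕ):ℤ) - 1 = ((m+1:ℕ):ℤ) := by push_cast; ring
          rw [B, bz_self]
          rw [bz_eq_zero_of_gt (by push_cast; omega)]
          simp
        · have hjm : j ≤ m := by omega
          conv_lhs => rw [bz_pascal (m+1) ((j:ℤ)+1)]
          rw [show ((j:ℤ) + 1 - 1) = (j:ℤ) by ring]
          conv_lhs => rw [ih ((j:ℤ)), ih ((j:ℤ)+1)]
          conv_rhs => rw [bz_pascal m ((j:ℤ)), bz_pascal m ((j:ℤ)+1)]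
          rw [show ((j:ℤ) + 1 - 1) = (j:ℤ) by ring]
          have t1 : (((m+1:ℕ):ℤ) + 1 - ((j:ℤ)+1)).toNat = m + 1 - j := by push_cast; omega
          have t2 : (((m:ℕ):ℤ) + 1 - (j:ℤ)).toNat = m + 1 - j := by omega
          have t3 : (((m:ℕ):ℤ) + 1 - ((j:ℤ)+1)).toNat = m - j := by omega
          have t4 : ((j:ℤ)+1).toNat = j + 1 := by omega
          have t5 : ((j:ℤ)).toNat = j := by omega
          rw [t1, t2, t3, t4, t5]
          set a := bz m ((j:ℤ) - 1)
          set b := bz m ((j:ℤ))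
          set c := bz m ((j:ℤ)+1)
          rw [mul_add, mul_add, ← mul_assoc (X ^ (j+1)) (X ^ (m-j)) b,
            ← mul_assoc (X ^ (m+1-j)) (X ^ j) b, ← pow_add, ← pow_add]
          have e : j + 1 + (m - j) = m + 1 - j + j := by omega
          rw [e]
          ring

/-! Section: qInt lemmas and absorption -/

lemma qInt_zero : qInt 0 = 0 := by simp [qInt]

lemma qInt_succ (n : ℕ) : qInt (n + 1) = qInt n + X ^ n := by
  simp [qInt, Finset.sum_range_succ]

lemma qInt_one : qInt 1 = 1 := by simp [qInt]

lemma qInt_add (a b : ℕ) : qInt (a + b) = qInt a + X ^ a * qInt b := by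
  induction b with
  | zero => simp [qInt_zero]
  | succ b ih =>
      rw [show a + (b+1) = (a+b) + 1 by ring, qInt_succ, ih, qInt_succ]
      rw [mul_add, ← pow_add]
      ring

lemma qIz_zero : qIz 0 = 0 := by simp [qIz, qInt_zero]

lemma qIz_one : qIz 1 = 1 := by simp [qIz, qInt_one]

lemma qIz_add (a b : ℕ) : qIz (a + b) = qIz a + X ^ a * qIz b := by
  simp [qIz, qInt_add, Polynomial.map_add, Polynomial.map_mul, Polynomial.map_pow]

lemma qIz_succ' (n : ℕ) : qIz (n + 1) = 1 + X * qIz n := by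
  rw [show n + 1 = 1 + n by ring, qIz_add, qIz_one, pow_one]

lemma bz_one_right (m : ℕ) : bz m 1 = qIz m := by
  induction m with
  | zero =>
      rw [bz_eq_zero_of_gt (by norm_num), qIz_zero]
  | succ m ih =>
      rw [bz_pascal m 1, show (1:ℤ) - 1 = (0:ℤ) by ring, bz_zero_right, ih,
        show (1:ℤ).toNat = 1 by norm_num, qIz_succ']
      ring

lemma bz_absorb (m : ℕ) : ∀ k : ℕ, qIz (k+1) * bz m ((k:ℤ)+1) = qIz (m - k) * bz m (k:ℤ) := by
  induction m with
  | zero =>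
      intro k
      rw [bz_eq_zero_of_gt (by push_cast; omega), show (0 - k) = 0 by omega, qIz_zero]
      ring
  | succ m ih =>
      intro k
      cases k with
      | zero =>
          rw [show ((0:ℕ):ℤ) + 1 = (1:ℤ) by norm_num, bz_one_right, qIz_one,
            show ((0:ℕ):ℤ) = (0:ℤ) by norm_num, bz_zero_right]
          simp
      | succ k =>
          rcases le_or_gt (k+1) m with hk | hk
          · have lhs1 : bz (m+1) (((k+1:ℕ):ℤ)+1) = bz m ((k:ℤ)+1) + X ^ (k+2) * bz m (((k:ℤ)+1)+1) := by
              rw [bz_pascal m (((k+1:ℕ):ℤ)+1),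
                show (((k+1:ℕ):ℤ)+1-1) = ((k:ℤ)+1) by push_cast; ring,
                show (((k+1:ℕ):ℤ)+1).toNat = k+2 by omega,
                show (((k+1:ℕ):ℤ)+1) = ((k:ℤ)+1)+1 by push_cast; ring]
            have rhs1 : bz (m+1) ((k+1:ℕ):ℤ) = bz m (k:ℤ) + X ^ (k+1) * bz m ((k:ℤ)+1) := by
              rw [bz_pascal m ((k+1:ℕ):ℤ),
                show (((k+1:ℕ):ℤ)-1) = ((k:ℤ)) by push_cast; ring,
                show (((k+1:ℕ):ℤ)).toNat = k+1 by omega,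
                show (((k+1:ℕ):ℤ)) = ((k:ℤ)+1) by push_cast; ring]
            rw [show ((k+1:ℕ):ℤ) + 1 = (((k+1:ℕ):ℤ)+1) by ring, lhs1, rhs1]
            have ih1 := ih (k+1)
            have ih2 := ih k
            rw [show (((k+1:ℕ)):ℤ) + 1 = ((k:ℤ)+1)+1 by push_cast; ring,
              show (((k+1:ℕ)):ℤ) = ((k:ℤ)+1) by push_cast; ring,
              show k+1+1 = k+2 from rfl] at ih1
            have key1 : qIz (k+2) + X ^ (k+2) * qIz (m - (k+1)) = qIz (m+1) := by
              rw [← qIz_add]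
              congr 1
              omega
            have key2 : qIz (k+1) + X ^ (k+1) * qIz (m - k) = qIz (m+1) := by
              rw [← qIz_add]
              congr 1
              omega
            rw [show (m + 1 - (k+1)) = m - k by omega, show k+1+1 = k+2 from rfl]
            linear_combination (X:Polynomial ℤ) ^ (k+2) * ih1 + ih2
              + bz m ((k:ℤ)+1) * key1 - bz m ((k:ℤ)+1) * key2
          · rw [bz_eq_zero_of_gt (by push_cast; omega), show (m + 1 - (k+1)) = 0 by omega,
              qIz_zero]
            ring

/-! Section: Phi and its recursion -/

noncomputable def Phi (n h : ℕ) : Polynomial ℤ :=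
  X ^ (h * (h+1) / 2) * (bz (2*n) ((n:ℤ) - h) - X ^ (h+1) * bz (2*n) ((n:ℤ) - h - 1))

noncomputable def PhiOdd (n h : ℕ) : Polynomial ℤ :=
  X ^ (h * (h+1) / 2) * (bz (2*n+1) ((n:ℤ) - h) - X ^ (h+1) * bz (2*n+1) ((n:ℤ) - h - 1))

lemma tri_succ (h : ℕ) : (h+1) * ((h+1)+1) / 2 = h * (h+1) / 2 + (h+1) := by
  obtain ⟨t, ht⟩ := Nat.even_mul_succ_self h
  have e : (h+1) * ((h+1)+1) = h*(h+1) + 2*(h+1) := by ring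
  rw [e, ht]
  omega

lemma phi_odd_step (n h : ℕ) : PhiOdd n h = Phi n h + X ^ n * Phi n (h+1) := by
  unfold PhiOdd Phi
  rw [show 2*n+1 = (2*n)+1 by ring,
    bz_rev_pascal (2*n) ((n:ℤ) - h), bz_rev_pascal (2*n) ((n:ℤ) - h - 1)]
  rw [show ((h+1:ℕ):ℤ) = (h:ℤ)+1 by push_cast; ring]
  rcases le_or_gt (h : ℤ) (n : ℤ) with hle | hlt
  · rw [show (((2*n:ℕ)):ℤ) + 1 - ((n:ℤ) - h) = (n:ℤ) + h + 1 by push_cast; ring,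
      show (((2*n:ℕ)):ℤ) + 1 - ((n:ℤ) - h - 1) = (n:ℤ) + h + 2 by push_cast; ring]
    rw [show ((n:ℤ) + h + 1).toNat = n + (h+1) by omega,
      show ((n:ℤ) + h + 2).toNat = n + (h+2) by omega]
    rw [show (n:ℤ) - h - 1 - 1 = (n:ℤ) - (h+1) - 1 by ring,
      show (n:ℤ) - h - 1 = (n:ℤ) - ((h:ℤ)+1) by ring]
    rw [tri_succ]
    rw [pow_add, pow_add, pow_add]
    ring
  · have z3 : bz (2*n) ((n:ℤ) - h - 1 - 1) = 0 := bz_neg (by omega)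
    have z2 : bz (2*n) ((n:ℤ) - h - 1) = 0 := bz_neg (by omega)
    have z1 : bz (2*n) ((n:ℤ) - h) = 0 := bz_neg (by omega)
    have z4 : bz (2*n) ((n:ℤ) - ((h:ℤ)+1)) = 0 := bz_neg (by omega)
    have z5 : bz (2*n) ((n:ℤ) - ((h:ℤ)+1) - 1) = 0 := bz_neg (by omega)
    rw [z3, z2, z1, z4, z5]
    ring

lemma bz_symm (m : ℕ) : ∀ k : ℤ, bz m k = bz m ((m:ℤ) - k) := by
  induction m with
  | zero =>
      intro k
      rcases lt_trichotomy k 0 with h | h | h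
      · rw [bz_neg h, bz_eq_zero_of_gt (by omega)]
      · subst h; norm_num
      · rw [bz_eq_zero_of_gt (by omega), bz_neg (by omega)]
  | succ m ih =>
      intro k
      rcases lt_or_ge k 0 with h | h
      · rw [bz_neg h, bz_eq_zero_of_gt (by push_cast; omega)]
      rcases lt_or_ge ((m:ℤ)+1) k with h2 | h2
      · rw [bz_eq_zero_of_gt (by push_cast; omega), bz_neg (by push_cast; omega)]
      · rw [bz_pascal m k, bz_rev_pascal m (((m+1:ℕ):ℤ) - k)]
        rw [show (((m:ℕ)):ℤ) + 1 - ((((m+1:ℕ)):ℤ) - k) = k by push_cast; ring]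
        rw [show (((m+1:ℕ)):ℤ) - k - 1 = (m:ℤ) - k by push_cast; ring]
        rw [← ih k]
        rw [show bz m (k-1) = bz m ((m:ℤ) - (k-1)) from ih (k-1)]
        rw [show (m:ℤ) - (k - 1) = (((m+1:ℕ)):ℤ) - k by push_cast; ring]
        ring

lemma phi_even_zero (n : ℕ) : Phi (n+1) 0 = PhiOdd n 0 := by
  unfold Phi PhiOdd
  rw [show 2*(n+1) = (2*n+1)+1 by ring]
  rw [show ((n+1:ℕ):ℤ) - ((0:ℕ):ℤ) - 1 = (n:ℤ) by push_cast; ring,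
    show ((n+1:ℕ):ℤ) - ((0:ℕ):ℤ) = (n:ℤ) + 1 by push_cast; ring,
    show ((n:ℕ):ℤ) - ((0:ℕ):ℤ) - 1 = (n:ℤ) - 1 by push_cast; ring,
    show ((n:ℕ):ℤ) - ((0:ℕ):ℤ) = (n:ℤ) by push_cast; ring]
  rw [bz_pascal (2*n+1) ((n:ℤ)+1), bz_pascal (2*n+1) ((n:ℤ))]
  rw [show ((n:ℤ) + 1 - 1) = (n:ℤ) by ring]
  rw [show ((n:ℤ)+1).toNat = n + 1 by omega, show ((n:ℤ)).toNat = n by omega]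
  have hs : bz (2*n+1) ((n:ℤ)+1) = bz (2*n+1) ((n:ℤ)) := by
    rw [bz_symm (2*n+1) ((n:ℤ)+1)]
    congr 1
    push_cast
    ring
  rw [hs]
  ring

lemma phi_even_succ (n h : ℕ) :
    Phi (n+1) (h+1) = PhiOdd n (h+1) + X ^ (n+1) * PhiOdd n h := by
  rcases lt_trichotomy h n with hlt | heq | hgt
  · obtain ⟨d, rfl⟩ : ∃ d, n = h + 1 + d := ⟨n - h - 1, by omega⟩
    unfold Phi PhiOdd
    rw [show ((h+1+d+1:ℕ):ℤ) - ((h+1:ℕ):ℤ) - 1 = (d:ℤ) by push_cast; ring,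
      show ((h+1+d+1:ℕ):ℤ) - ((h+1:ℕ):ℤ) = (d:ℤ) + 1 by push_cast; ring,
      show ((h+1+d:ℕ):ℤ) - ((h+1:ℕ):ℤ) - 1 = (d:ℤ) - 1 by push_cast; ring,
      show ((h+1+d:ℕ):ℤ) - ((h+1:ℕ):ℤ) = (d:ℤ) by push_cast; ring,
      show ((h+1+d:ℕ):ℤ) - ((h:ℕ):ℤ) - 1 = (d:ℤ) by push_cast; ring,
      show ((h+1+d:ℕ):ℤ) - ((h:ℕ):ℤ) = (d:ℤ) + 1 by push_cast; ring]
    rw [show 2*(h+1+d+1) = (2*(h+1+d)+1)+1 by ring]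
    rw [bz_pascal (2*(h+1+d)+1) ((d:ℤ)+1), bz_pascal (2*(h+1+d)+1) ((d:ℤ))]
    rw [show ((d:ℤ) + 1 - 1) = (d:ℤ) by ring]
    rw [show ((d:ℤ)+1).toNat = d + 1 by omega, show ((d:ℤ)).toNat = d by omega]
    rw [tri_succ]
    rw [pow_add, pow_add]
    ring
  · subst heq
    unfold Phi PhiOdd
    rw [show ((h+1:ℕ):ℤ) - ((h+1:ℕ):ℤ) - 1 = (-1:ℤ) by push_cast; ring,
      show ((h+1:ℕ):ℤ) - ((h+1:ℕ):ℤ) = (0:ℤ) by push_cast; ring,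
      show ((h:ℕ):ℤ) - ((h:ℕ):ℤ) - 1 = (-1:ℤ) by push_cast; ring,
      show ((h:ℕ):ℤ) - ((h:ℕ):ℤ) = (0:ℤ) by push_cast; ring]
    rw [bz_zero_right, bz_zero_right, bz_neg (show (-1:ℤ) < 0 by norm_num)]
    rw [bz_neg (show ((h:ℕ):ℤ) - ((h+1:ℕ):ℤ) < 0 by push_cast; omega)]
    rw [bz_neg (show ((h:ℕ):ℤ) - ((h+1:ℕ):ℤ) - 1 < 0 by push_cast; omega)]
    rw [show bz (2*h+1) (-1:ℤ) = 0 from bz_neg (by norm_num)]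
    rw [tri_succ]
    rw [pow_add]
    ring
  · unfold Phi PhiOdd
    rw [bz_neg (show ((n+1:ℕ):ℤ) - ((h+1:ℕ):ℤ) - 1 < 0 by push_cast; omega),
      bz_neg (show ((n+1:ℕ):ℤ) - ((h+1:ℕ):ℤ) < 0 by push_cast; omega),
      bz_neg (show ((n:ℕ):ℤ) - ((h+1:ℕ):ℤ) - 1 < 0 by push_cast; omega),
      bz_neg (show ((n:ℕ):ℤ) - ((h+1:ℕ):ℤ) < 0 by push_cast; omega),
      bz_neg (show ((n:ℕ):ℤ) - ((h:ℕ):ℤ) - 1 < 0 by push_cast; omega),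
      bz_neg (show ((n:ℕ):ℤ) - ((h:ℕ):ℤ) < 0 by push_cast; omega)]
    ring

lemma phi_rec_zero (n : ℕ) : Phi (n+1) 0 = Phi n 0 + X ^ n * Phi n 1 := by
  rw [phi_even_zero, phi_odd_step]

lemma phi_rec_succ (n h : ℕ) :
    Phi (n+1) (h+1) =
      Phi n (h+1) + X ^ (n+1) * Phi n h + X ^ n * Phi n (h+2) + X ^ (2*n+1) * Phi n (h+1) := by
  rw [phi_even_succ, phi_odd_step n (h+1), phi_odd_step n h]
  rw [show 2*n+1 = (n+1)+n by ring, pow_add]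
  ring

lemma phi_zero_zero : Phi 0 0 = 1 := by
  unfold Phi
  rw [show ((0:ℕ):ℤ) - ((0:ℕ):ℤ) - 1 = (-1:ℤ) by norm_num,
    show ((0:ℕ):ℤ) - ((0:ℕ):ℤ) = (0:ℤ) by norm_num]
  rw [bz_zero_right, bz_neg (show (-1:ℤ) < 0 by norm_num)]
  norm_num

lemma phi_zero_succ (h : ℕ) : Phi 0 (h+1) = 0 := by
  unfold Phi
  rw [bz_neg (show ((0:ℕ):ℤ) - ((h+1:ℕ):ℤ) - 1 < 0 by push_cast; omega),
    bz_neg (show ((0:ℕ):ℤ) - ((h+1:ℕ):ℤ) < 0 by push_cast; omega)]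
  ring

lemma phi_zero_form (n : ℕ) :
    Phi n 0 = bz (2*n) ((n:ℕ):ℤ) - X * bz (2*n) (((n:ℕ):ℤ) - 1) := by
  unfold Phi
  rw [show ((n:ℕ):ℤ) - ((0:ℕ):ℤ) - 1 = ((n:ℕ):ℤ) - 1 by norm_num,
    show ((n:ℕ):ℤ) - ((0:ℕ):ℤ) = ((n:ℕ):ℤ) by norm_num]
  norm_num

lemma final_alg (n : ℕ) :
    qIz (n+1) * (bz (2*n) ((n:ℕ):ℤ) - X * bz (2*n) (((n:ℕ):ℤ) - 1)) = bz (2*n) ((n:ℕ):ℤ) := by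
  cases n with
  | zero =>
      rw [show ((0:ℕ):ℤ) - 1 = (-1:ℤ) by norm_num, bz_neg (show (-1:ℤ) < 0 by norm_num),
        qIz_one]
      ring
  | succ n =>
      have habs := bz_absorb (2*(n+1)) n
      rw [show (2*(n+1) - n) = n + 2 by omega] at habs
      rw [show ((n+1:ℕ):ℤ) - 1 = ((n:ℕ):ℤ) by push_cast; ring,
        show ((n+1:ℕ):ℤ) = ((n:ℕ):ℤ) + 1 by push_cast; ring]
      have e0 : qIz (n+1+1) = qIz (n+2) := rfl
      rw [e0]
      have e4 : qIz (n+2) = 1 + X * qIz (n+1) := qIz_succ' (n+1)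
      calc qIz (n+2) * (bz (2*(n+1)) ((n:ℤ)+1) - X * bz (2*(n+1)) ((n:ℤ)))
          = qIz (n+2) * bz (2*(n+1)) ((n:ℤ)+1) - X * (qIz (n+2) * bz (2*(n+1)) ((n:ℤ))) := by
            ring
        _ = qIz (n+2) * bz (2*(n+1)) ((n:ℤ)+1) - X * (qIz (n+1) * bz (2*(n+1)) ((n:ℤ)+1)) := by
            rw [← habs]
        _ = (qIz (n+2) - X * qIz (n+1)) * bz (2*(n+1)) ((n:ℤ)+1) := by ring
        _ = bz (2*(n+1)) ((n:ℤ)+1) := by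
            rw [e4]
            ring

/-! Section: combinatorial definitions -/

open scoped Classical

def Uns (P M : Finset (Finset ℕ)) : Prop :=
  ∀ B ∈ M, ∀ C ∈ P, ∀ x ∈ C, ∀ y ∈ C, x ≤ B.sup id → y ≤ B.sup id

noncomputable def MarkedS (n h : ℕ) : Finset (Finset (Finset ℕ) × Finset (Finset ℕ)) :=
  (((Finset.Icc 1 n).powerset.powerset) ×ˢ ((Finset.Icc 1 n).powerset.powerset)).filter
    (fun PM => IsPartitionOf n PM.1 ∧ IsNonCrossing PM.1 ∧ PM.2 ⊆ PM.1 ∧ PM.2.card = h ∧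
      Uns PM.1 PM.2)

def wtP (P : Finset (Finset ℕ)) : ℕ := ∑ B ∈ P, blockWt B

def wtM (M : Finset (Finset ℕ)) : ℕ := ∑ B ∈ M, B.sup id

noncomputable def W (n h : ℕ) : Polynomial ℕ :=
  ∑ PM ∈ MarkedS n h, (X : Polynomial ℕ) ^ (wtP PM.1 + wtM PM.2)

lemma mem_markedS {n h : ℕ} {PM : Finset (Finset ℕ) × Finset (Finset ℕ)} :
    PM ∈ MarkedS n h ↔ IsPartitionOf n PM.1 ∧ IsNonCrossing PM.1 ∧ PM.2 ⊆ PM.1 ∧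
      PM.2.card = h ∧ Uns PM.1 PM.2 := by
  unfold MarkedS
  rw [Finset.mem_filter, Finset.mem_product]
  constructor
  · rintro ⟨-, hc⟩; exact hc
  · intro hc
    refine ⟨⟨?_, ?_⟩, hc⟩
    · rw [Finset.mem_powerset]
      intro B hB
      rw [Finset.mem_powerset]
      exact hc.1.2.1 B hB
    · rw [Finset.mem_powerset]
      intro B hB
      rw [Finset.mem_powerset]
      exact hc.1.2.1 B (hc.2.2.1 hB)

/-! Section: basic helpers -/

lemma partition_unique {n : ℕ} {P : Finset (Finset ℕ)} (hP : IsPartitionOf n P)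
    {B C : Finset ℕ} {i : ℕ} (hB : B ∈ P) (hC : C ∈ P) (hiB : i ∈ B) (hiC : i ∈ C) :
    B = C := by
  have hi : i ∈ Finset.Icc 1 n := hP.2.1 B hB hiB
  obtain ⟨D, _, hUniq⟩ := hP.2.2 i hi
  rw [hUniq B ⟨hB, hiB⟩, hUniq C ⟨hC, hiC⟩]

lemma sup_eq_max' {B : Finset ℕ} (hne : B.Nonempty) : B.sup id = B.max' hne := by
  rw [Finset.max'_eq_sup', Finset.sup'_eq_sup]

lemma sup_mem {B : Finset ℕ} (hne : B.Nonempty) : B.sup id ∈ B := by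
  rw [sup_eq_max' hne]
  exact B.max'_mem hne

lemma le_sup_of_mem {B : Finset ℕ} {x : ℕ} (hx : x ∈ B) : x ≤ B.sup id :=
  Finset.le_sup (f := id) hx

lemma blockWt_of_two {B : Finset ℕ} (h2 : 2 ≤ B.card) (hne : B.Nonempty) :
    blockWt B = (∑ j ∈ B, 2 * j) + 1 - (B.min' hne + B.max' hne + B.card) := by
  rw [blockWt, dif_pos h2]

lemma blockWt_small {B : Finset ℕ} (h : ¬ 2 ≤ B.card) : blockWt B = 0 := by
  rw [blockWt, dif_neg h]

lemma blockWt_singleton (a : ℕ) : blockWt {a} = 0 :=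
  blockWt_small (by simp)

lemma blockWt_insert_top {n : ℕ} {B : Finset ℕ} (hne : B.Nonempty)
    (hsub : B ⊆ Finset.Icc 1 n) :
    blockWt (insert (n+1) B) = blockWt B + B.sup id + n := by
  have hle : ∀ x ∈ B, x ≤ n := fun x hx => (Finset.mem_Icc.mp (hsub hx)).2
  have hge : ∀ x ∈ B, 1 ≤ x := fun x hx => (Finset.mem_Icc.mp (hsub hx)).1
  have hnotin : (n+1) ∉ B := fun hmem => by have := hle _ hmem; omega
  have hne' : (insert (n+1) B).Nonempty := Finset.insert_nonempty _ _
  have hcard : (insert (n+1) B).card = B.card + 1 := Finset.card_insert_of_notMem hnotin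
  have hsum : (∑ j ∈ insert (n+1) B, 2*j) = 2*(n+1) + ∑ j ∈ B, 2*j :=
    Finset.sum_insert hnotin
  have hmax : (insert (n+1) B).max' hne' = n + 1 := by
    apply le_antisymm
    · apply Finset.max'_le
      intro y hy
      rcases Finset.mem_insert.mp hy with rfl | hyB
      · exact le_rfl
      · exact (hle y hyB).trans (by omega)
    · exact Finset.le_max' _ _ (Finset.mem_insert_self _ _)
  have hmin : (insert (n+1) B).min' hne' = B.min' hne := by
    apply le_antisymm
    · exact Finset.min'_le _ _ (Finset.mem_insert_of_mem (B.min'_mem hne))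
    · apply Finset.le_min'
      intro y hy
      rcases Finset.mem_insert.mp hy with rfl | hyB
      · have := hle _ (B.min'_mem hne); omega
      · exact Finset.min'_le _ _ hyB
  have hsup : B.sup id = B.max' hne := sup_eq_max' hne
  have hminle : B.min' hne ≤ n := hle _ (B.min'_mem hne)
  have hmaxle : B.max' hne ≤ n := hle _ (B.max'_mem hne)
  rcases Nat.lt_or_ge B.card 2 with h1 | h2
  · have hc1 : B.card = 1 := by
      have := Finset.card_pos.mpr hne
      omega
    obtain ⟨a, rfl⟩ := Finset.card_eq_one.mp hc1
    have h2' : 2 ≤ (insert (n+1) ({a} : Finset ℕ)).card := by omega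
    rw [blockWt_of_two h2' hne', blockWt_singleton, hmax, hmin, hsum, hcard]
    have hmin_a : ({a} : Finset ℕ).min' hne = a := Finset.min'_singleton a
    have hsup_a : ({a} : Finset ℕ).sup id = a := Finset.sup_singleton
    have hsum_a : (∑ j ∈ ({a} : Finset ℕ), 2*j) = 2*a := Finset.sum_singleton _ _
    have hcard_a : ({a} : Finset ℕ).card = 1 := Finset.card_singleton a
    rw [hmin_a, hsup_a, hsum_a, hcard_a]
    omega
  · have h2' : 2 ≤ (insert (n+1) B).card := by omega
    rw [blockWt_of_two h2' hne', blockWt_of_two h2 hne, hsum, hmax, hmin, hcard, hsup]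
    have hpair : ({B.min' hne, B.max' hne} : Finset ℕ) ⊆ B := by
      intro x hx
      rcases Finset.mem_insert.mp hx with rfl | hx'
      · exact B.min'_mem hne
      · exact (Finset.mem_singleton.mp hx') ▸ B.max'_mem hne
    have hmm : B.min' hne ≠ B.max' hne := by
      have := Finset.min'_lt_max'_of_card B (by omega)
      omega
    have hsumge : 2 * B.min' hne + 2 * B.max' hne ≤ ∑ j ∈ B, 2*j := by
      have h := Finset.sum_le_sum_of_subset (f := fun j => 2*j) hpair
      rwa [Finset.sum_pair hmm] at h
    have hcardle : B.card ≤ B.max' hne := by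
      have hsubI : B ⊆ Finset.Icc 1 (B.max' hne) := by
        intro x hx
        rw [Finset.mem_Icc]
        exact ⟨hge x hx, Finset.le_max' _ _ hx⟩
      have h := Finset.card_le_card hsubI
      rw [Nat.card_Icc] at h
      omega
    omega

/-! Section: noncrossing helpers -/

lemma nc_subset {P P' : Finset (Finset ℕ)} (hsub : P' ⊆ P) (h : IsNonCrossing P) :
    IsNonCrossing P' :=
  fun B₁ h₁ B₂ h₂ a ha c hc b hb d hd h1 h2 h3 =>
    h B₁ (hsub h₁) B₂ (hsub h₂) a ha c hc b hb d hd h1 h2 h3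

lemma nc_insert_singleton {n : ℕ} {P : Finset (Finset ℕ)}
    (hblocks : ∀ B ∈ P, B ⊆ Finset.Icc 1 n) (h : IsNonCrossing P) :
    IsNonCrossing (insert {n+1} P) := by
  intro B₁ h₁ B₂ h₂ a ha c hc b hb d hd h1 h2 h3
  rcases Finset.mem_insert.mp h₁ with rfl | h₁'
  · have ha' := Finset.mem_singleton.mp ha
    have hc' := Finset.mem_singleton.mp hc
    exact absurd h1 (by omega)
  rcases Finset.mem_insert.mp h₂ with rfl | h₂'
  · have hb' := Finset.mem_singleton.mp hb
    have hd' := Finset.mem_singleton.mp hd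
    exact absurd h2 (by omega)
  · exact h B₁ h₁' B₂ h₂' a ha c hc b hb d hd h1 h2 h3

lemma nc_detach {P : Finset (Finset ℕ)} {B0 : Finset ℕ} {e : ℕ}
    (h : IsNonCrossing P) (hB0 : B0 ∈ P) :
    IsNonCrossing (insert (B0.erase e) (P.erase B0)) := by
  intro B₁ h₁ B₂ h₂ a ha c hc b hb d hd h1 h2 h3
  rcases Finset.mem_insert.mp h₁ with rfl | h₁' <;>
    rcases Finset.mem_insert.mp h₂ with h₂x | h₂'
  · rw [h₂x]
  · have hC := Finset.mem_of_mem_erase h₂'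
    have hCne := Finset.ne_of_mem_erase h₂'
    have := h B0 hB0 B₂ hC a (Finset.mem_of_mem_erase ha) c (Finset.mem_of_mem_erase hc)
      b hb d hd h1 h2 h3
    exact absurd this.symm hCne
  · have hC := Finset.mem_of_mem_erase h₁'
    have hCne := Finset.ne_of_mem_erase h₁'
    rw [h₂x] at hb hd
    have := h B₁ hC B0 hB0 a ha c hc b (Finset.mem_of_mem_erase hb)
      d (Finset.mem_of_mem_erase hd) h1 h2 h3
    exact absurd this hCne
  · exact h B₁ (Finset.mem_of_mem_erase h₁') B₂ (Finset.mem_of_mem_erase h₂')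
      a ha c hc b hb d hd h1 h2 h3

lemma nc_attach {n : ℕ} {P : Finset (Finset ℕ)} {T : Finset ℕ}
    (hP : IsPartitionOf n P) (hNC : IsNonCrossing P) (hT : T ∈ P)
    (hUnsT : ∀ C ∈ P, ∀ x ∈ C, ∀ y ∈ C, x ≤ T.sup id → y ≤ T.sup id) :
    IsNonCrossing (insert (insert (n+1) T) (P.erase T)) := by
  intro B₁ h₁ B₂ h₂ a ha c hc b hb d hd h1 h2 h3
  have hTne : T.Nonempty := hP.1 T hT
  have hsupT : T.sup id ∈ T := sup_mem hTne
  rcases Finset.mem_insert.mp h₁ with rfl | h₁'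
  · rcases Finset.mem_insert.mp h₂ with h₂x | h₂'
    · rw [h₂x]
    · have hB₂P := Finset.mem_of_mem_erase h₂'
      have hB₂ne := Finset.ne_of_mem_erase h₂'
      have hd' : d ≤ n := (Finset.mem_Icc.mp (hP.2.1 _ hB₂P hd)).2
      have hc' : c ∈ T := by
        rcases Finset.mem_insert.mp hc with rfl | hcT
        · exact absurd h3 (by omega)
        · exact hcT
      have ha' : a ∈ T := by
        rcases Finset.mem_insert.mp ha with rfl | haT
        · have hc2 : c ≤ n := (Finset.mem_Icc.mp (hP.2.1 _ hT hc')).2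
          exact absurd (h1.trans h2) (by omega)
        · exact haT
      exact absurd (hNC T hT B₂ hB₂P a ha' c hc' b hb d hd h1 h2 h3).symm hB₂ne
  · have hB₁P := Finset.mem_of_mem_erase h₁'
    have hB₁ne := Finset.ne_of_mem_erase h₁'
    rcases Finset.mem_insert.mp h₂ with h₂x | h₂'
    · subst h₂x
      have hc2 : c ≤ n := (Finset.mem_Icc.mp (hP.2.1 _ hB₁P hc)).2
      have hb' : b ∈ T := by
        rcases Finset.mem_insert.mp hb with rfl | hbT
        · exact absurd h2 (by omega)
        · exact hbT
      rcases Finset.mem_insert.mp hd with rfl | hd'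
      · have hbs : b ≤ T.sup id := le_sup_of_mem hb'
        have has : a ≤ T.sup id := by omega
        have hcs : c ≤ T.sup id := hUnsT B₁ hB₁P a ha c hc has
        rcases eq_or_lt_of_le hcs with hceq | hclt
        · have hcT : c ∈ T := by rw [hceq]; exact hsupT
          exact absurd (partition_unique hP hB₁P hT hc hcT) hB₁ne
        · exact absurd
            (hNC B₁ hB₁P T hT a ha c hc b hb' (T.sup id) hsupT h1 h2 hclt) hB₁ne
      · exact absurd (hNC B₁ hB₁P T hT a ha c hc b hb' d hd' h1 h2 h3) hB₁ne
    · exact hNC B₁ hB₁P B₂ (Finset.mem_of_mem_erase h₂') a ha c hc b hb d hd h1 h2 h3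

/-! Section: partition helpers -/

lemma part_insert_singleton {n : ℕ} {P : Finset (Finset ℕ)} (hP : IsPartitionOf n P) :
    IsPartitionOf (n+1) (insert {n+1} P) := by
  refine ⟨?_, ?_, ?_⟩
  · intro B hB
    rcases Finset.mem_insert.mp hB with rfl | h
    · exact ⟨n+1, Finset.mem_singleton_self _⟩
    · exact hP.1 B h
  · intro B hB
    rcases Finset.mem_insert.mp hB with rfl | h
    · intro x hx
      rw [Finset.mem_singleton.mp hx, Finset.mem_Icc]
      omega
    · exact (hP.2.1 B h).trans (Finset.Icc_subset_Icc_right (by omega))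
  · intro i hi
    have hi' := Finset.mem_Icc.mp hi
    rcases Nat.lt_or_ge i (n+1) with hin | hin
    · obtain ⟨B, hBp, hu⟩ := hP.2.2 i (Finset.mem_Icc.mpr ⟨hi'.1, by omega⟩)
      refine ⟨B, ⟨Finset.mem_insert_of_mem hBp.1, hBp.2⟩, ?_⟩
      rintro C ⟨hC, hiC⟩
      rcases Finset.mem_insert.mp hC with rfl | hC'
      · exact absurd (Finset.mem_singleton.mp hiC) (by omega)
      · exact hu C ⟨hC', hiC⟩
    · have hieq : i = n+1 := by omega
      subst hieq
      refine ⟨{n+1}, ⟨Finset.mem_insert_self _ _, Finset.mem_singleton_self _⟩, ?_⟩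
      rintro C ⟨hC, hiC⟩
      rcases Finset.mem_insert.mp hC with rfl | hC'
      · rfl
      · have := Finset.mem_Icc.mp (hP.2.1 C hC' hiC)
        exact absurd this.2 (by omega)

lemma part_erase_singleton {n : ℕ} {P : Finset (Finset ℕ)} (hP : IsPartitionOf (n+1) P)
    (hs : ({n+1} : Finset ℕ) ∈ P) : IsPartitionOf n (P.erase {n+1}) := by
  refine ⟨fun B hB => hP.1 B (Finset.mem_of_mem_erase hB), ?_, ?_⟩
  · intro B hB x hx
    have hBP := Finset.mem_of_mem_erase hB
    have hBne := Finset.ne_of_mem_erase hB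
    have h1 := Finset.mem_Icc.mp (hP.2.1 B hBP hx)
    rw [Finset.mem_Icc]
    refine ⟨h1.1, ?_⟩
    by_contra hgt
    have hx1 : x = n+1 := by omega
    have : B = {n+1} :=
      partition_unique hP hBP hs hx (by rw [hx1]; exact Finset.mem_singleton_self _)
    exact hBne this
  · intro i hi
    have hi' := Finset.mem_Icc.mp hi
    obtain ⟨B, hBp, hu⟩ := hP.2.2 i (Finset.mem_Icc.mpr ⟨hi'.1, by omega⟩)
    have hBne : B ≠ {n+1} := by
      rintro rfl
      exact absurd (Finset.mem_singleton.mp hBp.2) (by omega)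
    refine ⟨B, ⟨Finset.mem_erase.mpr ⟨hBne, hBp.1⟩, hBp.2⟩, ?_⟩
    rintro C ⟨hC, hiC⟩
    exact hu C ⟨Finset.mem_of_mem_erase hC, hiC⟩

lemma part_attach {n : ℕ} {P : Finset (Finset ℕ)} {T : Finset ℕ}
    (hP : IsPartitionOf n P) (hT : T ∈ P) :
    IsPartitionOf (n+1) (insert (insert (n+1) T) (P.erase T)) := by
  refine ⟨?_, ?_, ?_⟩
  · intro B hB
    rcases Finset.mem_insert.mp hB with rfl | h
    · exact ⟨n+1, Finset.mem_insert_self _ _⟩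
    · exact hP.1 B (Finset.mem_of_mem_erase h)
  · intro B hB x hx
    rcases Finset.mem_insert.mp hB with rfl | h
    · rcases Finset.mem_insert.mp hx with rfl | hxT
      · rw [Finset.mem_Icc]; omega
      · have := Finset.mem_Icc.mp (hP.2.1 T hT hxT)
        rw [Finset.mem_Icc]; omega
    · have := Finset.mem_Icc.mp (hP.2.1 B (Finset.mem_of_mem_erase h) hx)
      rw [Finset.mem_Icc]; omega
  · intro i hi
    have hi' := Finset.mem_Icc.mp hi
    rcases Nat.lt_or_ge i (n+1) with hin | hin
    · obtain ⟨B, hBp, hu⟩ := hP.2.2 i (Finset.mem_Icc.mpr ⟨hi'.1, by omega⟩)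
      by_cases hBT : B = T
      · subst hBT
        refine ⟨insert (n+1) B, ⟨Finset.mem_insert_self _ _,
          Finset.mem_insert_of_mem hBp.2⟩, ?_⟩
        rintro C ⟨hC, hiC⟩
        rcases Finset.mem_insert.mp hC with rfl | hC'
        · rfl
        · have hCP := Finset.mem_of_mem_erase hC'
          exact absurd (hu C ⟨hCP, hiC⟩) (Finset.ne_of_mem_erase hC')
      · refine ⟨B, ⟨Finset.mem_insert_of_mem (Finset.mem_erase.mpr ⟨hBT, hBp.1⟩), hBp.2⟩, ?_⟩
        rintro C ⟨hC, hiC⟩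
        rcases Finset.mem_insert.mp hC with rfl | hC'
        · rcases Finset.mem_insert.mp hiC with heq | hiT
          · exact absurd heq (by omega)
          · exact absurd (hu T ⟨hT, hiT⟩) (fun q => hBT q.symm)
        · exact hu C ⟨Finset.mem_of_mem_erase hC', hiC⟩
    · have hieq : i = n+1 := by omega
      subst hieq
      refine ⟨insert (n+1) T, ⟨Finset.mem_insert_self _ _, Finset.mem_insert_self _ _⟩, ?_⟩
      rintro C ⟨hC, hiC⟩
      rcases Finset.mem_insert.mp hC with rfl | hC'
      · rfl
      · have := Finset.mem_Icc.mp (hP.2.1 C (Finset.mem_of_mem_erase hC') hiC)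
        exact absurd this.2 (by omega)

lemma part_detach {n : ℕ} {P : Finset (Finset ℕ)} {B0 : Finset ℕ}
    (hP : IsPartitionOf (n+1) P) (hB0 : B0 ∈ P) (hn : n+1 ∈ B0)
    (hne : (B0.erase (n+1)).Nonempty) :
    IsPartitionOf n (insert (B0.erase (n+1)) (P.erase B0)) := by
  have hnotinC : ∀ C ∈ P, C ≠ B0 → (n+1) ∉ C := by
    intro C hC hCne hmem
    exact hCne (partition_unique hP hC hB0 hmem hn)
  refine ⟨?_, ?_, ?_⟩
  · intro B hB
    rcases Finset.mem_insert.mp hB with rfl | h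
    · exact hne
    · exact hP.1 B (Finset.mem_of_mem_erase h)
  · intro B hB x hx
    rcases Finset.mem_insert.mp hB with rfl | h
    · have hx1 := Finset.mem_of_mem_erase hx
      have hx2 := Finset.ne_of_mem_erase hx
      have := Finset.mem_Icc.mp (hP.2.1 B0 hB0 hx1)
      rw [Finset.mem_Icc]; omega
    · have hCP := Finset.mem_of_mem_erase h
      have hCne := Finset.ne_of_mem_erase h
      have hxne : x ≠ n+1 := fun hxe => hnotinC B hCP hCne (hxe ▸ hx)
      have := Finset.mem_Icc.mp (hP.2.1 B hCP hx)
      rw [Finset.mem_Icc]; omega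
  · intro i hi
    have hi' := Finset.mem_Icc.mp hi
    obtain ⟨B, hBp, hu⟩ := hP.2.2 i (Finset.mem_Icc.mpr ⟨hi'.1, by omega⟩)
    by_cases hBB0 : B = B0
    · subst hBB0
      refine ⟨B.erase (n+1), ⟨Finset.mem_insert_self _ _,
        Finset.mem_erase.mpr ⟨by omega, hBp.2⟩⟩, ?_⟩
      rintro C ⟨hC, hiC⟩
      rcases Finset.mem_insert.mp hC with rfl | hC'
      · rfl
      · exact absurd (hu C ⟨Finset.mem_of_mem_erase hC', hiC⟩) (Finset.ne_of_mem_erase hC')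
    · refine ⟨B, ⟨Finset.mem_insert_of_mem (Finset.mem_erase.mpr ⟨hBB0, hBp.1⟩), hBp.2⟩, ?_⟩
      rintro C ⟨hC, hiC⟩
      rcases Finset.mem_insert.mp hC with rfl | hC'
      · exact absurd (hu B0 ⟨hB0, Finset.mem_of_mem_erase hiC⟩) (fun q => hBB0 q.symm)
      · exact hu C ⟨Finset.mem_of_mem_erase hC', hiC⟩

/-! Section: blockOf and topBlock -/

noncomputable def blockOf (P : Finset (Finset ℕ)) (e : ℕ) : Finset ℕ :=
  (P.filter (fun B => e ∈ B)).sup id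

lemma blockOf_eq {n : ℕ} {P : Finset (Finset ℕ)} {B : Finset ℕ} {e : ℕ}
    (hP : IsPartitionOf n P) (hB : B ∈ P) (he : e ∈ B) : blockOf P e = B := by
  have hfilter : P.filter (fun C => e ∈ C) = {B} := by
    ext C
    rw [Finset.mem_filter, Finset.mem_singleton]
    constructor
    · rintro ⟨hC, heC⟩
      exact partition_unique hP hC hB heC he
    · rintro rfl
      exact ⟨hB, he⟩
  rw [blockOf, hfilter, Finset.sup_singleton]
  rfl

noncomputable def topBlock (M : Finset (Finset ℕ)) : Finset ℕ :=
  (M.filter (fun B => B.sup id = M.sup (fun B => B.sup id))).sup id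

lemma topBlock_eq {M : Finset (Finset ℕ)} {T : Finset ℕ} (hT : T ∈ M)
    (hmax : ∀ C ∈ M, C ≠ T → C.sup id < T.sup id) : topBlock M = T := by
  have hsup : M.sup (fun B => B.sup id) = T.sup id := by
    apply le_antisymm
    · apply Finset.sup_le
      intro C hC
      rcases eq_or_ne C T with rfl | hne
      · exact le_rfl
      · exact (hmax C hC hne).le
    · exact Finset.le_sup hT
  have hfilter : M.filter (fun B => B.sup id = M.sup (fun B => B.sup id)) = {T} := by
    ext C
    rw [Finset.mem_filter, Finset.mem_singleton]
    constructor
    · rintro ⟨hC, hCs⟩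
      by_contra hne
      have h1 := hmax C hC hne
      rw [hsup] at hCs
      omega
    · rintro rfl
      exact ⟨hT, hsup.symm⟩
  rw [topBlock, hfilter, Finset.sup_singleton]
  rfl

/-! Section: detach/attach auxiliary facts -/

lemma blockOf_mem {n : ℕ} {P : Finset (Finset ℕ)} (hP : IsPartitionOf (n+1) P) :
    blockOf P (n+1) ∈ P ∧ (n+1) ∈ blockOf P (n+1) := by
  obtain ⟨B, hBp, -⟩ := hP.2.2 (n+1) (by rw [Finset.mem_Icc]; omega)
  rw [blockOf_eq hP hBp.1 hBp.2]
  exact hBp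

lemma detach_B0'_nonempty {n : ℕ} {P : Finset (Finset ℕ)} {B0 : Finset ℕ}
    (hB0 : B0 ∈ P) (hn : n+1 ∈ B0) (hc1 : ({n+1} : Finset ℕ) ∉ P) :
    (B0.erase (n+1)).Nonempty := by
  rcases Finset.eq_empty_or_nonempty (B0.erase (n+1)) with he | hne
  · have hB0eq : B0 = {n+1} := by
      apply Finset.Subset.antisymm
      · intro x hx
        by_contra hxne
        have hxe : x ∈ B0.erase (n+1) :=
          Finset.mem_erase.mpr ⟨fun q => hxne (Finset.mem_singleton.mpr q), hx⟩
        rw [he] at hxe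
        exact absurd hxe (Finset.notMem_empty x)
      · intro x hx
        rw [Finset.mem_singleton.mp hx]
        exact hn
    exact absurd (hB0eq ▸ hB0) hc1
  · exact hne

lemma detach_B0'_not_mem {n : ℕ} {P : Finset (Finset ℕ)} {B0 : Finset ℕ}
    (hP : IsPartitionOf (n+1) P) (hB0 : B0 ∈ P) (hn : n+1 ∈ B0)
    (hne : (B0.erase (n+1)).Nonempty) : B0.erase (n+1) ∉ P := by
  intro hmem
  obtain ⟨x, hx⟩ := hne
  have h1 := partition_unique hP hmem hB0 hx (Finset.mem_of_mem_erase hx)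
  have h2 := Finset.notMem_erase (n+1) B0
  rw [h1] at h2
  exact h2 hn

lemma detach_unstraddled {n : ℕ} {P : Finset (Finset ℕ)} {B0 : Finset ℕ}
    (hP : IsPartitionOf (n+1) P) (hNC : IsNonCrossing P)
    (hB0 : B0 ∈ P) (hn : n+1 ∈ B0) (hne : (B0.erase (n+1)).Nonempty) :
    ∀ C ∈ insert (B0.erase (n+1)) (P.erase B0), ∀ x ∈ C, ∀ y ∈ C,
      x ≤ (B0.erase (n+1)).sup id → y ≤ (B0.erase (n+1)).sup id := by
  have hsB0' : (B0.erase (n+1)).sup id ∈ B0.erase (n+1) := sup_mem hne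
  have hsB0 : (B0.erase (n+1)).sup id ∈ B0 := Finset.mem_of_mem_erase hsB0'
  intro C hC x hx y hy hxy
  rcases Finset.mem_insert.mp hC with rfl | hC'
  · exact le_sup_of_mem hy
  · have hCP := Finset.mem_of_mem_erase hC'
    have hCne := Finset.ne_of_mem_erase hC'
    by_contra hgt
    push_neg at hgt
    have hyn : y ≤ n := by
      have h1 := (Finset.mem_Icc.mp (hP.2.1 _ hCP hy)).2
      have hyne : y ≠ n+1 := fun q =>
        hCne (partition_unique hP hCP hB0 hy (by rw [q] at hy ⊢; exact hn))
      omega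
    have hxlt : x < (B0.erase (n+1)).sup id := by
      rcases eq_or_lt_of_le hxy with heq | hlt
      · have hxB0 : x ∈ B0 := by rw [heq]; exact hsB0
        exact absurd (partition_unique hP hCP hB0 hx hxB0) hCne
      · exact hlt
    exact hCne (hNC C hCP B0 hB0 x hx y hy ((B0.erase (n+1)).sup id) hsB0 (n+1) hn
      hxlt hgt (by omega))

lemma mark_sup_le {n : ℕ} {P B : Finset ℕ} (h : False) : True := trivial

lemma mark_lt_detach {n : ℕ} {P : Finset (Finset ℕ)} {B0 : Finset ℕ}
    {M : Finset (Finset ℕ)}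
    (hP : IsPartitionOf (n+1) P) (hMP : M ⊆ P) (hUns : Uns P M)
    (hB0 : B0 ∈ P) (hn : n+1 ∈ B0) (hne : (B0.erase (n+1)).Nonempty) :
    ∀ B ∈ M, B ≠ B0 → B.sup id < (B0.erase (n+1)).sup id := by
  intro B hB hBne
  have hs' : (B0.erase (n+1)).sup id ∈ B0 := Finset.mem_of_mem_erase (sup_mem hne)
  have hnB : (n+1) ∉ B := fun q => hBne (partition_unique hP (hMP hB) hB0 q hn)
  have hsupBn : B.sup id ≤ n := by
    apply Finset.sup_le
    intro b hb
    simp only [id_eq]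
    have h1 := (Finset.mem_Icc.mp (hP.2.1 _ (hMP hB) hb)).2
    have h2 : b ≠ n+1 := fun q => hnB (q ▸ hb)
    omega
  by_contra hle
  push_neg at hle
  have := hUns B hB B0 hB0 ((B0.erase (n+1)).sup id) hs' (n+1) hn hle
  omega

lemma top_exists {n : ℕ} {P M : Finset (Finset ℕ)} (hP : IsPartitionOf n P)
    (hMP : M ⊆ P) (hMne : M.Nonempty) :
    topBlock M ∈ M ∧ ∀ C ∈ M, C ≠ topBlock M → C.sup id < (topBlock M).sup id := by
  obtain ⟨T, hT, hTs⟩ := Finset.exists_mem_eq_sup M hMne (fun B => B.sup id)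
  have hdist : ∀ C ∈ M, C ≠ T → C.sup id < T.sup id := by
    intro C hC hne
    have hle : C.sup id ≤ T.sup id := by
      rw [← hTs]
      exact Finset.le_sup hC
    rcases eq_or_lt_of_le hle with heq | hlt
    · have hCne : C.Nonempty := hP.1 C (hMP hC)
      have hTne : T.Nonempty := hP.1 T (hMP hT)
      have h1 : C.sup id ∈ C := sup_mem hCne
      have h2 : C.sup id ∈ T := by rw [heq]; exact sup_mem hTne
      exact absurd (partition_unique hP (hMP hC) (hMP hT) h1 h2) hne
    · exact hlt
  have hTeq : topBlock M = T := topBlock_eq hT hdist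
  rw [hTeq]
  exact ⟨hT, hdist⟩

/-! Section: the case predicates -/

def C1 (n : ℕ) (PM : Finset (Finset ℕ) × Finset (Finset ℕ)) : Prop :=
  ({n+1} : Finset ℕ) ∈ PM.1

def C2 (n : ℕ) (PM : Finset (Finset ℕ) × Finset (Finset ℕ)) : Prop :=
  ∃ B ∈ PM.2, n+1 ∈ B

/-! Section: case A -/

lemma sum_caseA (n h : ℕ) :
    ∑ PM ∈ ((MarkedS (n+1) h).filter (C1 n)).filter (fun PM => ¬ C2 n PM),
      (X : Polynomial ℕ) ^ (wtP PM.1 + wtM PM.2) = W n h := by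
  rw [W]
  refine Finset.sum_bij' (fun PM _ => (PM.1.erase {n+1}, PM.2))
    (fun PM _ => (insert {n+1} PM.1, PM.2)) ?_ ?_ ?_ ?_ ?_
  · intro PM hPM
    rw [Finset.mem_filter, Finset.mem_filter] at hPM
    obtain ⟨⟨hM, hc1⟩, hc2⟩ := hPM
    rw [mem_markedS] at hM
    obtain ⟨hP, hNC, hMP, hcard, hUns⟩ := hM
    rw [mem_markedS]
    refine ⟨part_erase_singleton hP hc1, nc_subset (Finset.erase_subset _ _) hNC,
      ?_, hcard, ?_⟩
    · intro B hB
      refine Finset.mem_erase.mpr ⟨?_, hMP hB⟩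
      rintro rfl
      exact hc2 ⟨{n+1}, hB, Finset.mem_singleton_self _⟩
    · intro B hB C hC x hx y hy hxy
      exact hUns B hB C (Finset.mem_of_mem_erase hC) x hx y hy hxy
  · intro PM hPM
    rw [mem_markedS] at hPM
    obtain ⟨hP, hNC, hMP, hcard, hUns⟩ := hPM
    have hblocks : ∀ B ∈ PM.1, B ⊆ Finset.Icc 1 n := hP.2.1
    rw [Finset.mem_filter, Finset.mem_filter, mem_markedS]
    refine ⟨⟨⟨part_insert_singleton hP, nc_insert_singleton hblocks hNC,
      fun B hB => Finset.mem_insert_of_mem (hMP hB), hcard, ?_⟩,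
      Finset.mem_insert_self _ _⟩, ?_⟩
    · intro B hB C hC x hx y hy hxy
      rcases Finset.mem_insert.mp hC with rfl | hC'
      · have hx' := Finset.mem_singleton.mp hx
        have hy' := Finset.mem_singleton.mp hy
        have hsupB : B.sup id ≤ n :=
          Finset.sup_le (fun b hb => (Finset.mem_Icc.mp (hblocks _ (hMP hB) hb)).2)
        omega
      · exact hUns B hB C hC' x hx y hy hxy
    · rintro ⟨B, hB, hnB⟩
      have := (Finset.mem_Icc.mp (hblocks _ (hMP hB) hnB)).2
      omega
  · intro PM hPM
    rw [Finset.mem_filter, Finset.mem_filter] at hPM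
    obtain ⟨⟨-, hc1⟩, -⟩ := hPM
    show (insert {n+1} (PM.1.erase {n+1}), PM.2) = PM
    rw [Finset.insert_erase hc1]
  · intro PM hPM
    rw [mem_markedS] at hPM
    have hnotmem : ({n+1} : Finset ℕ) ∉ PM.1 := by
      intro hmem
      have := (Finset.mem_Icc.mp (hPM.1.2.1 _ hmem (Finset.mem_singleton_self _))).2
      omega
    show ((insert {n+1} PM.1).erase {n+1}, PM.2) = PM
    rw [Finset.erase_insert hnotmem]
  · intro PM hPM
    show (X : Polynomial ℕ) ^ (wtP PM.1 + wtM PM.2)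
      = X ^ (wtP (PM.1.erase {n+1}) + wtM PM.2)
    have h1 : wtP (PM.1.erase {n+1}) = wtP PM.1 :=
      Finset.sum_erase _ (blockWt_singleton (n+1))
    rw [h1]

/-! Section: case B -/

lemma sum_caseB (n h : ℕ) :
    ∑ PM ∈ ((MarkedS (n+1) (h+1)).filter (C1 n)).filter (fun PM => C2 n PM),
      (X : Polynomial ℕ) ^ (wtP PM.1 + wtM PM.2) = X ^ (n+1) * W n h := by
  rw [W, Finset.mul_sum]
  refine Finset.sum_bij' (fun PM _ => (PM.1.erase {n+1}, PM.2.erase {n+1}))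
    (fun PM _ => (insert {n+1} PM.1, insert {n+1} PM.2)) ?_ ?_ ?_ ?_ ?_
  · intro PM hPM
    rw [Finset.mem_filter, Finset.mem_filter] at hPM
    obtain ⟨⟨hM, hc1⟩, hc2⟩ := hPM
    rw [mem_markedS] at hM
    obtain ⟨hP, hNC, hMP, hcard, hUns⟩ := hM
    have hsM : ({n+1} : Finset ℕ) ∈ PM.2 := by
      obtain ⟨B, hB, hnB⟩ := hc2
      have hBeq : B = {n+1} :=
        partition_unique hP (hMP hB) hc1 hnB (Finset.mem_singleton_self _)
      rwa [hBeq] at hB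
    rw [mem_markedS]
    refine ⟨part_erase_singleton hP hc1, nc_subset (Finset.erase_subset _ _) hNC,
      ?_, ?_, ?_⟩
    · intro B hB
      exact Finset.mem_erase.mpr ⟨Finset.ne_of_mem_erase hB,
        hMP (Finset.mem_of_mem_erase hB)⟩
    · rw [Finset.card_erase_of_mem hsM, hcard]
      omega
    · intro B hB C hC x hx y hy hxy
      exact hUns B (Finset.mem_of_mem_erase hB) C (Finset.mem_of_mem_erase hC) x hx y hy hxy
  · intro PM hPM
    rw [mem_markedS] at hPM
    obtain ⟨hP, hNC, hMP, hcard, hUns⟩ := hPM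
    have hblocks : ∀ B ∈ PM.1, B ⊆ Finset.Icc 1 n := hP.2.1
    have hnotmem : ({n+1} : Finset ℕ) ∉ PM.1 := by
      intro hmem
      have := (Finset.mem_Icc.mp (hblocks _ hmem (Finset.mem_singleton_self _))).2
      omega
    rw [Finset.mem_filter, Finset.mem_filter, mem_markedS]
    refine ⟨⟨⟨part_insert_singleton hP, nc_insert_singleton hblocks hNC,
      Finset.insert_subset_insert _ hMP, ?_, ?_⟩,
      Finset.mem_insert_self _ _⟩,
      ⟨{n+1}, Finset.mem_insert_self _ _, Finset.mem_singleton_self _⟩⟩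
    · rw [Finset.card_insert_of_notMem (fun hmem => hnotmem (hMP hmem)), hcard]
    · intro B hB C hC x hx y hy hxy
      rcases Finset.mem_insert.mp hB with rfl | hB'
      · have hsupB : ({n+1} : Finset ℕ).sup id = n+1 := Finset.sup_singleton
        rw [hsupB] at hxy ⊢
        rcases Finset.mem_insert.mp hC with rfl | hC'
        · have := Finset.mem_singleton.mp hy
          omega
        · have := (Finset.mem_Icc.mp (hblocks _ hC' hy)).2
          omega
      · rcases Finset.mem_insert.mp hC with rfl | hC'
        · have hx' := Finset.mem_singleton.mp hx
          have hsupB : B.sup id ≤ n :=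
            Finset.sup_le (fun b hb => (Finset.mem_Icc.mp (hblocks _ (hMP hB') hb)).2)
          omega
        · exact hUns B hB' C hC' x hx y hy hxy
  · intro PM hPM
    rw [Finset.mem_filter, Finset.mem_filter] at hPM
    obtain ⟨⟨hM, hc1⟩, hc2⟩ := hPM
    rw [mem_markedS] at hM
    obtain ⟨hP, -, hMP, -, -⟩ := hM
    have hsM : ({n+1} : Finset ℕ) ∈ PM.2 := by
      obtain ⟨B, hB, hnB⟩ := hc2
      have hBeq : B = {n+1} :=
        partition_unique hP (hMP hB) hc1 hnB (Finset.mem_singleton_self _)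
      rwa [hBeq] at hB
    show (insert {n+1} (PM.1.erase {n+1}), insert {n+1} (PM.2.erase {n+1})) = PM
    rw [Finset.insert_erase hc1, Finset.insert_erase hsM]
  · intro PM hPM
    rw [mem_markedS] at hPM
    have hnotmem : ({n+1} : Finset ℕ) ∉ PM.1 := by
      intro hmem
      have := (Finset.mem_Icc.mp (hPM.1.2.1 _ hmem (Finset.mem_singleton_self _))).2
      omega
    show ((insert {n+1} PM.1).erase {n+1}, (insert {n+1} PM.2).erase {n+1}) = PM
    rw [Finset.erase_insert hnotmem,
      Finset.erase_insert (fun hmem => hnotmem (hPM.2.2.1 hmem))]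
  · intro PM hPM
    rw [Finset.mem_filter, Finset.mem_filter] at hPM
    obtain ⟨⟨hM, hc1⟩, hc2⟩ := hPM
    rw [mem_markedS] at hM
    obtain ⟨hP, -, hMP, -, -⟩ := hM
    have hsM : ({n+1} : Finset ℕ) ∈ PM.2 := by
      obtain ⟨B, hB, hnB⟩ := hc2
      have hBeq : B = {n+1} :=
        partition_unique hP (hMP hB) hc1 hnB (Finset.mem_singleton_self _)
      rwa [hBeq] at hB
    show (X : Polynomial ℕ) ^ (wtP PM.1 + wtM PM.2)
      = X ^ (n+1) * X ^ (wtP (PM.1.erase {n+1}) + wtM (PM.2.erase {n+1}))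
    have h1 : wtP (PM.1.erase {n+1}) = wtP PM.1 :=
      Finset.sum_erase _ (blockWt_singleton (n+1))
    have h2 : wtM PM.2 = (n+1) + wtM (PM.2.erase {n+1}) := by
      have h3 := Finset.add_sum_erase PM.2 (fun B => B.sup id) hsM
      simp only [Finset.sup_singleton, id_eq] at h3
      unfold wtM
      omega
    rw [← pow_add]
    congr 1
    omega

/-! Section: case C -/

lemma sum_caseC (n h : ℕ) :
    ∑ PM ∈ ((MarkedS (n+1) h).filter (fun PM => ¬ C1 n PM)).filter (fun PM => ¬ C2 n PM),
      (X : Polynomial ℕ) ^ (wtP PM.1 + wtM PM.2) = X ^ n * W n (h+1) := by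
  rw [W, Finset.mul_sum]
  refine Finset.sum_bij'
    (fun PM _ => (insert ((blockOf PM.1 (n+1)).erase (n+1)) (PM.1.erase (blockOf PM.1 (n+1))),
      insert ((blockOf PM.1 (n+1)).erase (n+1)) PM.2))
    (fun PM _ => (insert (insert (n+1) (topBlock PM.2)) (PM.1.erase (topBlock PM.2)),
      PM.2.erase (topBlock PM.2))) ?_ ?_ ?_ ?_ ?_
  · -- forward membership
    intro PM hPM
    rw [Finset.mem_filter, Finset.mem_filter] at hPM
    obtain ⟨⟨hM, hc1⟩, hc2⟩ := hPM
    rw [mem_markedS] at hM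
    obtain ⟨hP, hNC, hMP, hcard, hUns⟩ := hM
    obtain ⟨hB0mem, hB0n⟩ := blockOf_mem hP
    have hne : ((blockOf PM.1 (n+1)).erase (n+1)).Nonempty :=
      detach_B0'_nonempty hB0mem hB0n hc1
    have hB0'notP : (blockOf PM.1 (n+1)).erase (n+1) ∉ PM.1 :=
      detach_B0'_not_mem hP hB0mem hB0n hne
    rw [mem_markedS]
    refine ⟨part_detach hP hB0mem hB0n hne, nc_detach hNC hB0mem, ?_, ?_, ?_⟩
    · intro B hB
      rcases Finset.mem_insert.mp hB with rfl | hB'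
      · exact Finset.mem_insert_self _ _
      · have hBne : B ≠ blockOf PM.1 (n+1) := by
          rintro rfl
          exact hc2 ⟨blockOf PM.1 (n+1), hB', hB0n⟩
        exact Finset.mem_insert_of_mem (Finset.mem_erase.mpr ⟨hBne, hMP hB'⟩)
    · rw [Finset.card_insert_of_notMem (fun q => hB0'notP (hMP q)), hcard]
    · intro B hB C hC x hx y hy hxy
      rcases Finset.mem_insert.mp hB with rfl | hB'
      · exact detach_unstraddled hP hNC hB0mem hB0n hne C hC x hx y hy hxy
      · rcases Finset.mem_insert.mp hC with rfl | hC'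
        · exact hUns B hB' (blockOf PM.1 (n+1)) hB0mem x (Finset.mem_of_mem_erase hx)
            y (Finset.mem_of_mem_erase hy) hxy
        · exact hUns B hB' C (Finset.mem_of_mem_erase hC') x hx y hy hxy
  · -- backward membership
    intro PM hPM
    rw [mem_markedS] at hPM
    obtain ⟨hP, hNC, hMP, hcard, hUns⟩ := hPM
    have hMne : PM.2.Nonempty := Finset.card_pos.mp (by omega)
    obtain ⟨hTmem, hTtop⟩ := top_exists hP hMP hMne
    have hTP : topBlock PM.2 ∈ PM.1 := hMP hTmem
    have hTne : (topBlock PM.2).Nonempty := hP.1 _ hTP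
    have hblocks : ∀ B ∈ PM.1, B ⊆ Finset.Icc 1 n := hP.2.1
    have hUnsT : ∀ C ∈ PM.1, ∀ x ∈ C, ∀ y ∈ C,
        x ≤ (topBlock PM.2).sup id → y ≤ (topBlock PM.2).sup id :=
      fun C hC => hUns _ hTmem C hC
    rw [Finset.mem_filter, Finset.mem_filter, mem_markedS]
    refine ⟨⟨⟨part_attach hP hTP, nc_attach hP hNC hTP hUnsT, ?_, ?_, ?_⟩, ?_⟩, ?_⟩
    · intro B hB
      exact Finset.mem_insert_of_mem (Finset.mem_erase.mpr
        ⟨Finset.ne_of_mem_erase hB, hMP (Finset.mem_of_mem_erase hB)⟩)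
    · rw [Finset.card_erase_of_mem hTmem, hcard]
      omega
    · intro B hB C hC x hx y hy hxy
      have hBM := Finset.mem_of_mem_erase hB
      have hBneT := Finset.ne_of_mem_erase hB
      rcases Finset.mem_insert.mp hC with rfl | hC'
      · have hsupB : B.sup id ≤ n :=
          Finset.sup_le (fun b hb => (Finset.mem_Icc.mp (hblocks _ (hMP hBM) hb)).2)
        rcases Finset.mem_insert.mp hx with hxe | hxT
        · omega
        · have hallT : ∀ z ∈ topBlock PM.2, z ≤ B.sup id :=
            fun z hz => hUns B hBM _ hTP x hxT z hz hxy
          have h1 : (topBlock PM.2).sup id ≤ B.sup id :=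
            Finset.sup_le (fun z hz => hallT z hz)
          have h2 : B.sup id < (topBlock PM.2).sup id := hTtop B hBM hBneT
          omega
      · exact hUns B hBM C (Finset.mem_of_mem_erase hC') x hx y hy hxy
    · -- ¬ C1
      intro hmem
      rcases Finset.mem_insert.mp hmem with heq | hmem'
      · obtain ⟨t, ht⟩ := hTne
        have htT : t ∈ insert (n+1) (topBlock PM.2) := Finset.mem_insert_of_mem ht
        rw [← heq] at htT
        have h1 := Finset.mem_singleton.mp htT
        have h2 := (Finset.mem_Icc.mp (hblocks _ hTP ht)).2
        omega
      · have := (Finset.mem_Icc.mp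
          (hblocks _ (Finset.mem_of_mem_erase hmem') (Finset.mem_singleton_self _))).2
        omega
    · -- ¬ C2
      rintro ⟨B, hB, hnB⟩
      have := (Finset.mem_Icc.mp
        (hblocks _ (hMP (Finset.mem_of_mem_erase hB)) hnB)).2
      omega
  · -- left inverse
    intro PM hPM
    rw [Finset.mem_filter, Finset.mem_filter] at hPM
    obtain ⟨⟨hM, hc1⟩, hc2⟩ := hPM
    rw [mem_markedS] at hM
    obtain ⟨hP, hNC, hMP, hcard, hUns⟩ := hM
    obtain ⟨hB0mem, hB0n⟩ := blockOf_mem hP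
    have hne : ((blockOf PM.1 (n+1)).erase (n+1)).Nonempty :=
      detach_B0'_nonempty hB0mem hB0n hc1
    have hB0'notP : (blockOf PM.1 (n+1)).erase (n+1) ∉ PM.1 :=
      detach_B0'_not_mem hP hB0mem hB0n hne
    have htop : topBlock (insert ((blockOf PM.1 (n+1)).erase (n+1)) PM.2)
        = (blockOf PM.1 (n+1)).erase (n+1) := by
      apply topBlock_eq (Finset.mem_insert_self _ _)
      intro C hC hCne
      rcases Finset.mem_insert.mp hC with rfl | hC'
      · exact absurd rfl hCne
      · have hCneB0 : C ≠ blockOf PM.1 (n+1) := by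
          rintro rfl
          exact hc2 ⟨blockOf PM.1 (n+1), hC', hB0n⟩
        exact mark_lt_detach hP hMP hUns hB0mem hB0n hne C hC' hCneB0
    show (insert (insert (n+1) (topBlock (insert ((blockOf PM.1 (n+1)).erase (n+1)) PM.2)))
        ((insert ((blockOf PM.1 (n+1)).erase (n+1)) (PM.1.erase (blockOf PM.1 (n+1)))).erase
          (topBlock (insert ((blockOf PM.1 (n+1)).erase (n+1)) PM.2))),
      (insert ((blockOf PM.1 (n+1)).erase (n+1)) PM.2).erase
        (topBlock (insert ((blockOf PM.1 (n+1)).erase (n+1)) PM.2))) = PM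
    rw [htop, Finset.insert_erase hB0n,
      Finset.erase_insert (fun q => hB0'notP (Finset.mem_of_mem_erase q)),
      Finset.insert_erase hB0mem,
      Finset.erase_insert (fun q => hB0'notP (hMP q))]
  · -- right inverse
    intro PM hPM
    rw [mem_markedS] at hPM
    obtain ⟨hP, hNC, hMP, hcard, hUns⟩ := hPM
    have hMne : PM.2.Nonempty := Finset.card_pos.mp (by omega)
    obtain ⟨hTmem, hTtop⟩ := top_exists hP hMP hMne
    have hTP : topBlock PM.2 ∈ PM.1 := hMP hTmem
    have hblocks : ∀ B ∈ PM.1, B ⊆ Finset.Icc 1 n := hP.2.1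
    have hnT : (n+1) ∉ topBlock PM.2 := fun q => by
      have := (Finset.mem_Icc.mp (hblocks _ hTP q)).2
      omega
    have hT'notP : insert (n+1) (topBlock PM.2) ∉ PM.1.erase (topBlock PM.2) := by
      intro hmem
      have := (Finset.mem_Icc.mp (hblocks _ (Finset.mem_of_mem_erase hmem)
        (Finset.mem_insert_self (n+1) _))).2
      omega
    have hQP : IsPartitionOf (n+1)
        (insert (insert (n+1) (topBlock PM.2)) (PM.1.erase (topBlock PM.2))) :=
      part_attach hP hTP
    have hbo : blockOf
        (insert (insert (n+1) (topBlock PM.2)) (PM.1.erase (topBlock PM.2))) (n+1)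
        = insert (n+1) (topBlock PM.2) :=
      blockOf_eq hQP (Finset.mem_insert_self _ _) (Finset.mem_insert_self _ _)
    show (insert ((blockOf (insert (insert (n+1) (topBlock PM.2))
          (PM.1.erase (topBlock PM.2))) (n+1)).erase (n+1))
        ((insert (insert (n+1) (topBlock PM.2)) (PM.1.erase (topBlock PM.2))).erase
          (blockOf (insert (insert (n+1) (topBlock PM.2))
            (PM.1.erase (topBlock PM.2))) (n+1))),
      insert ((blockOf (insert (insert (n+1) (topBlock PM.2))
          (PM.1.erase (topBlock PM.2))) (n+1)).erase (n+1))
        (PM.2.erase (topBlock PM.2))) = PM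
    rw [hbo, Finset.erase_insert hnT, Finset.erase_insert hT'notP,
      Finset.insert_erase hTP, Finset.insert_erase hTmem]
  · -- weights
    intro PM hPM
    rw [Finset.mem_filter, Finset.mem_filter] at hPM
    obtain ⟨⟨hM, hc1⟩, hc2⟩ := hPM
    rw [mem_markedS] at hM
    obtain ⟨hP, hNC, hMP, hcard, hUns⟩ := hM
    obtain ⟨hB0mem, hB0n⟩ := blockOf_mem hP
    have hne : ((blockOf PM.1 (n+1)).erase (n+1)).Nonempty :=
      detach_B0'_nonempty hB0mem hB0n hc1
    have hB0'notP : (blockOf PM.1 (n+1)).erase (n+1) ∉ PM.1 :=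
      detach_B0'_not_mem hP hB0mem hB0n hne
    show (X : Polynomial ℕ) ^ (wtP PM.1 + wtM PM.2)
      = X ^ n * X ^ (wtP (insert ((blockOf PM.1 (n+1)).erase (n+1))
          (PM.1.erase (blockOf PM.1 (n+1))))
        + wtM (insert ((blockOf PM.1 (n+1)).erase (n+1)) PM.2))
    have e1 : blockWt (blockOf PM.1 (n+1)) + wtP (PM.1.erase (blockOf PM.1 (n+1)))
        = wtP PM.1 := Finset.add_sum_erase _ _ hB0mem
    have e2 : wtP (insert ((blockOf PM.1 (n+1)).erase (n+1))
        (PM.1.erase (blockOf PM.1 (n+1))))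
        = blockWt ((blockOf PM.1 (n+1)).erase (n+1))
          + wtP (PM.1.erase (blockOf PM.1 (n+1))) :=
      Finset.sum_insert (fun q => hB0'notP (Finset.mem_of_mem_erase q))
    have e3 : wtM (insert ((blockOf PM.1 (n+1)).erase (n+1)) PM.2)
        = ((blockOf PM.1 (n+1)).erase (n+1)).sup id + wtM PM.2 :=
      Finset.sum_insert (fun q => hB0'notP (hMP q))
    have e4 : blockWt (blockOf PM.1 (n+1))
        = blockWt ((blockOf PM.1 (n+1)).erase (n+1))
          + ((blockOf PM.1 (n+1)).erase (n+1)).sup id + n := by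
      have hsub' : (blockOf PM.1 (n+1)).erase (n+1) ⊆ Finset.Icc 1 n := by
        intro x hx
        have h1 := Finset.mem_Icc.mp (hP.2.1 _ hB0mem (Finset.mem_of_mem_erase hx))
        have h2 := Finset.ne_of_mem_erase hx
        rw [Finset.mem_Icc]
        omega
      have h5 := blockWt_insert_top hne hsub'
      rw [Finset.insert_erase hB0n] at h5
      exact h5
    rw [← pow_add]
    congr 1
    omega

/-! Section: case D -/

lemma sum_caseD (n h : ℕ) :
    ∑ PM ∈ ((MarkedS (n+1) (h+1)).filter (fun PM => ¬ C1 n PM)).filter (fun PM => C2 n PM),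
      (X : Polynomial ℕ) ^ (wtP PM.1 + wtM PM.2) = X ^ (2*n+1) * W n (h+1) := by
  rw [W, Finset.mul_sum]
  refine Finset.sum_bij'
    (fun PM _ => (insert ((blockOf PM.1 (n+1)).erase (n+1)) (PM.1.erase (blockOf PM.1 (n+1))),
      insert ((blockOf PM.1 (n+1)).erase (n+1)) (PM.2.erase (blockOf PM.1 (n+1)))))
    (fun PM _ => (insert (insert (n+1) (topBlock PM.2)) (PM.1.erase (topBlock PM.2)),
      insert (insert (n+1) (topBlock PM.2)) (PM.2.erase (topBlock PM.2)))) ?_ ?_ ?_ ?_ ?_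
  · -- forward membership
    intro PM hPM
    rw [Finset.mem_filter, Finset.mem_filter] at hPM
    obtain ⟨⟨hM, hc1⟩, hc2⟩ := hPM
    rw [mem_markedS] at hM
    obtain ⟨hP, hNC, hMP, hcard, hUns⟩ := hM
    obtain ⟨hB0mem, hB0n⟩ := blockOf_mem hP
    have hB0M : blockOf PM.1 (n+1) ∈ PM.2 := by
      obtain ⟨B, hB, hnB⟩ := hc2
      have hBeq : blockOf PM.1 (n+1) = B := blockOf_eq hP (hMP hB) hnB
      rwa [hBeq]
    have hne : ((blockOf PM.1 (n+1)).erase (n+1)).Nonempty :=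
      detach_B0'_nonempty hB0mem hB0n hc1
    have hB0'notP : (blockOf PM.1 (n+1)).erase (n+1) ∉ PM.1 :=
      detach_B0'_not_mem hP hB0mem hB0n hne
    rw [mem_markedS]
    refine ⟨part_detach hP hB0mem hB0n hne, nc_detach hNC hB0mem, ?_, ?_, ?_⟩
    · intro B hB
      rcases Finset.mem_insert.mp hB with rfl | hB'
      · exact Finset.mem_insert_self _ _
      · exact Finset.mem_insert_of_mem (Finset.mem_erase.mpr
          ⟨Finset.ne_of_mem_erase hB', hMP (Finset.mem_of_mem_erase hB')⟩)
    · rw [Finset.card_insert_of_notMem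
        (fun q => hB0'notP (hMP (Finset.mem_of_mem_erase q))),
        Finset.card_erase_of_mem hB0M, hcard]
      omega
    · intro B hB C hC x hx y hy hxy
      rcases Finset.mem_insert.mp hB with rfl | hB'
      · exact detach_unstraddled hP hNC hB0mem hB0n hne C hC x hx y hy hxy
      · have hBM := Finset.mem_of_mem_erase hB'
        rcases Finset.mem_insert.mp hC with rfl | hC'
        · exact hUns B hBM (blockOf PM.1 (n+1)) hB0mem x (Finset.mem_of_mem_erase hx)
            y (Finset.mem_of_mem_erase hy) hxy
        · exact hUns B hBM C (Finset.mem_of_mem_erase hC') x hx y hy hxy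
  · -- backward membership
    intro PM hPM
    rw [mem_markedS] at hPM
    obtain ⟨hP, hNC, hMP, hcard, hUns⟩ := hPM
    have hMne : PM.2.Nonempty := Finset.card_pos.mp (by omega)
    obtain ⟨hTmem, hTtop⟩ := top_exists hP hMP hMne
    have hTP : topBlock PM.2 ∈ PM.1 := hMP hTmem
    have hTne : (topBlock PM.2).Nonempty := hP.1 _ hTP
    have hblocks : ∀ B ∈ PM.1, B ⊆ Finset.Icc 1 n := hP.2.1
    have hUnsT : ∀ C ∈ PM.1, ∀ x ∈ C, ∀ y ∈ C,
        x ≤ (topBlock PM.2).sup id → y ≤ (topBlock PM.2).sup id :=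
      fun C hC => hUns _ hTmem C hC
    have hT'notP : insert (n+1) (topBlock PM.2) ∉ PM.1.erase (topBlock PM.2) := by
      intro hmem
      have := (Finset.mem_Icc.mp (hblocks _ (Finset.mem_of_mem_erase hmem)
        (Finset.mem_insert_self (n+1) _))).2
      omega
    have hsupT' : (insert (n+1) (topBlock PM.2)).sup id = n+1 := by
      apply le_antisymm
      · apply Finset.sup_le
        intro b hb
        rcases Finset.mem_insert.mp hb with rfl | hbT
        · exact le_rfl
        · have := (Finset.mem_Icc.mp (hblocks _ hTP hbT)).2
          simp only [id_eq]
          omega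
      · exact Finset.le_sup (f := id) (Finset.mem_insert_self _ _)
    rw [Finset.mem_filter, Finset.mem_filter, mem_markedS]
    refine ⟨⟨⟨part_attach hP hTP, nc_attach hP hNC hTP hUnsT, ?_, ?_, ?_⟩, ?_⟩, ?_⟩
    · intro B hB
      rcases Finset.mem_insert.mp hB with rfl | hB'
      · exact Finset.mem_insert_self _ _
      · exact Finset.mem_insert_of_mem (Finset.mem_erase.mpr
          ⟨Finset.ne_of_mem_erase hB', hMP (Finset.mem_of_mem_erase hB')⟩)
    · have hT'notM : insert (n+1) (topBlock PM.2) ∉ PM.2.erase (topBlock PM.2) := by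
        intro hmem
        have := (Finset.mem_Icc.mp (hblocks _ (hMP (Finset.mem_of_mem_erase hmem))
          (Finset.mem_insert_self (n+1) _))).2
        omega
      rw [Finset.card_insert_of_notMem hT'notM, Finset.card_erase_of_mem hTmem, hcard]
      omega
    · intro B hB C hC x hx y hy hxy
      rcases Finset.mem_insert.mp hB with rfl | hB'
      · -- B = T' : sup = n+1, everything fine
        rw [hsupT'] at hxy ⊢
        rcases Finset.mem_insert.mp hC with rfl | hC'
        · rcases Finset.mem_insert.mp hy with rfl | hyT
          · exact le_rfl
          · have := (Finset.mem_Icc.mp (hblocks _ hTP hyT)).2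
            omega
        · have := (Finset.mem_Icc.mp
            (hblocks _ (Finset.mem_of_mem_erase hC') hy)).2
          omega
      · have hBM := Finset.mem_of_mem_erase hB'
        have hBneT := Finset.ne_of_mem_erase hB'
        rcases Finset.mem_insert.mp hC with rfl | hC'
        · have hsupB : B.sup id ≤ n :=
            Finset.sup_le (fun b hb => (Finset.mem_Icc.mp (hblocks _ (hMP hBM) hb)).2)
          rcases Finset.mem_insert.mp hx with hxe | hxT
          · omega
          · have hallT : ∀ z ∈ topBlock PM.2, z ≤ B.sup id :=
              fun z hz => hUns B hBM _ hTP x hxT z hz hxy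
            have h1 : (topBlock PM.2).sup id ≤ B.sup id :=
              Finset.sup_le (fun z hz => hallT z hz)
            have h2 : B.sup id < (topBlock PM.2).sup id := hTtop B hBM hBneT
            omega
        · exact hUns B hBM C (Finset.mem_of_mem_erase hC') x hx y hy hxy
    · -- ¬ C1
      intro hmem
      rcases Finset.mem_insert.mp hmem with heq | hmem'
      · obtain ⟨t, ht⟩ := hTne
        have htT : t ∈ insert (n+1) (topBlock PM.2) := Finset.mem_insert_of_mem ht
        rw [← heq] at htT
        have h1 := Finset.mem_singleton.mp htT
        have h2 := (Finset.mem_Icc.mp (hblocks _ hTP ht)).2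
        omega
      · have := (Finset.mem_Icc.mp
          (hblocks _ (Finset.mem_of_mem_erase hmem') (Finset.mem_singleton_self _))).2
        omega
    · -- C2
      exact ⟨insert (n+1) (topBlock PM.2), Finset.mem_insert_self _ _,
        Finset.mem_insert_self _ _⟩
  · -- left inverse
    intro PM hPM
    rw [Finset.mem_filter, Finset.mem_filter] at hPM
    obtain ⟨⟨hM, hc1⟩, hc2⟩ := hPM
    rw [mem_markedS] at hM
    obtain ⟨hP, hNC, hMP, hcard, hUns⟩ := hM
    obtain ⟨hB0mem, hB0n⟩ := blockOf_mem hP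
    have hB0M : blockOf PM.1 (n+1) ∈ PM.2 := by
      obtain ⟨B, hB, hnB⟩ := hc2
      have hBeq : blockOf PM.1 (n+1) = B := blockOf_eq hP (hMP hB) hnB
      rwa [hBeq]
    have hne : ((blockOf PM.1 (n+1)).erase (n+1)).Nonempty :=
      detach_B0'_nonempty hB0mem hB0n hc1
    have hB0'notP : (blockOf PM.1 (n+1)).erase (n+1) ∉ PM.1 :=
      detach_B0'_not_mem hP hB0mem hB0n hne
    have htop : topBlock (insert ((blockOf PM.1 (n+1)).erase (n+1))
        (PM.2.erase (blockOf PM.1 (n+1)))) = (blockOf PM.1 (n+1)).erase (n+1) := by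
      apply topBlock_eq (Finset.mem_insert_self _ _)
      intro C hC hCne
      rcases Finset.mem_insert.mp hC with rfl | hC'
      · exact absurd rfl hCne
      · exact mark_lt_detach hP hMP hUns hB0mem hB0n hne C
          (Finset.mem_of_mem_erase hC') (Finset.ne_of_mem_erase hC')
    show (insert (insert (n+1) (topBlock (insert ((blockOf PM.1 (n+1)).erase (n+1))
          (PM.2.erase (blockOf PM.1 (n+1))))))
        ((insert ((blockOf PM.1 (n+1)).erase (n+1)) (PM.1.erase (blockOf PM.1 (n+1)))).erase
          (topBlock (insert ((blockOf PM.1 (n+1)).erase (n+1))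
            (PM.2.erase (blockOf PM.1 (n+1)))))),
      insert (insert (n+1) (topBlock (insert ((blockOf PM.1 (n+1)).erase (n+1))
          (PM.2.erase (blockOf PM.1 (n+1))))))
        ((insert ((blockOf PM.1 (n+1)).erase (n+1)) (PM.2.erase (blockOf PM.1 (n+1)))).erase
          (topBlock (insert ((blockOf PM.1 (n+1)).erase (n+1))
            (PM.2.erase (blockOf PM.1 (n+1))))))) = PM
    rw [htop, Finset.insert_erase hB0n,
      Finset.erase_insert (fun q => hB0'notP (Finset.mem_of_mem_erase q)),
      Finset.erase_insert (fun q => hB0'notP (hMP (Finset.mem_of_mem_erase q))),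
      Finset.insert_erase hB0mem, Finset.insert_erase hB0M]
  · -- right inverse
    intro PM hPM
    rw [mem_markedS] at hPM
    obtain ⟨hP, hNC, hMP, hcard, hUns⟩ := hPM
    have hMne : PM.2.Nonempty := Finset.card_pos.mp (by omega)
    obtain ⟨hTmem, hTtop⟩ := top_exists hP hMP hMne
    have hTP : topBlock PM.2 ∈ PM.1 := hMP hTmem
    have hblocks : ∀ B ∈ PM.1, B ⊆ Finset.Icc 1 n := hP.2.1
    have hnT : (n+1) ∉ topBlock PM.2 := fun q => by
      have := (Finset.mem_Icc.mp (hblocks _ hTP q)).2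
      omega
    have hT'notP : insert (n+1) (topBlock PM.2) ∉ PM.1.erase (topBlock PM.2) := by
      intro hmem
      have := (Finset.mem_Icc.mp (hblocks _ (Finset.mem_of_mem_erase hmem)
        (Finset.mem_insert_self (n+1) _))).2
      omega
    have hT'notM : insert (n+1) (topBlock PM.2) ∉ PM.2.erase (topBlock PM.2) := by
      intro hmem
      have := (Finset.mem_Icc.mp (hblocks _ (hMP (Finset.mem_of_mem_erase hmem))
        (Finset.mem_insert_self (n+1) _))).2
      omega
    have hQP : IsPartitionOf (n+1)
        (insert (insert (n+1) (topBlock PM.2)) (PM.1.erase (topBlock PM.2))) :=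
      part_attach hP hTP
    have hbo : blockOf
        (insert (insert (n+1) (topBlock PM.2)) (PM.1.erase (topBlock PM.2))) (n+1)
        = insert (n+1) (topBlock PM.2) :=
      blockOf_eq hQP (Finset.mem_insert_self _ _) (Finset.mem_insert_self _ _)
    show (insert ((blockOf (insert (insert (n+1) (topBlock PM.2))
          (PM.1.erase (topBlock PM.2))) (n+1)).erase (n+1))
        ((insert (insert (n+1) (topBlock PM.2)) (PM.1.erase (topBlock PM.2))).erase
          (blockOf (insert (insert (n+1) (topBlock PM.2))
            (PM.1.erase (topBlock PM.2))) (n+1))),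
      insert ((blockOf (insert (insert (n+1) (topBlock PM.2))
          (PM.1.erase (topBlock PM.2))) (n+1)).erase (n+1))
        ((insert (insert (n+1) (topBlock PM.2)) (PM.2.erase (topBlock PM.2))).erase
          (blockOf (insert (insert (n+1) (topBlock PM.2))
            (PM.1.erase (topBlock PM.2))) (n+1)))) = PM
    rw [hbo, Finset.erase_insert hnT, Finset.erase_insert hT'notP,
      Finset.erase_insert hT'notM,
      Finset.insert_erase hTP, Finset.insert_erase hTmem]
  · -- weights
    intro PM hPM
    rw [Finset.mem_filter, Finset.mem_filter] at hPM
    obtain ⟨⟨hM, hc1⟩, hc2⟩ := hPM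
    rw [mem_markedS] at hM
    obtain ⟨hP, hNC, hMP, hcard, hUns⟩ := hM
    obtain ⟨hB0mem, hB0n⟩ := blockOf_mem hP
    have hB0M : blockOf PM.1 (n+1) ∈ PM.2 := by
      obtain ⟨B, hB, hnB⟩ := hc2
      have hBeq : blockOf PM.1 (n+1) = B := blockOf_eq hP (hMP hB) hnB
      rwa [hBeq]
    have hne : ((blockOf PM.1 (n+1)).erase (n+1)).Nonempty :=
      detach_B0'_nonempty hB0mem hB0n hc1
    have hB0'notP : (blockOf PM.1 (n+1)).erase (n+1) ∉ PM.1 :=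
      detach_B0'_not_mem hP hB0mem hB0n hne
    show (X : Polynomial ℕ) ^ (wtP PM.1 + wtM PM.2)
      = X ^ (2*n+1) * X ^ (wtP (insert ((blockOf PM.1 (n+1)).erase (n+1))
          (PM.1.erase (blockOf PM.1 (n+1))))
        + wtM (insert ((blockOf PM.1 (n+1)).erase (n+1))
          (PM.2.erase (blockOf PM.1 (n+1)))))
    have e1 : blockWt (blockOf PM.1 (n+1)) + wtP (PM.1.erase (blockOf PM.1 (n+1)))
        = wtP PM.1 := Finset.add_sum_erase _ _ hB0mem
    have e2 : wtP (insert ((blockOf PM.1 (n+1)).erase (n+1))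
        (PM.1.erase (blockOf PM.1 (n+1))))
        = blockWt ((blockOf PM.1 (n+1)).erase (n+1))
          + wtP (PM.1.erase (blockOf PM.1 (n+1))) :=
      Finset.sum_insert (fun q => hB0'notP (Finset.mem_of_mem_erase q))
    have e3 : wtM (insert ((blockOf PM.1 (n+1)).erase (n+1))
        (PM.2.erase (blockOf PM.1 (n+1))))
        = ((blockOf PM.1 (n+1)).erase (n+1)).sup id
          + wtM (PM.2.erase (blockOf PM.1 (n+1))) :=
      Finset.sum_insert (fun q => hB0'notP (hMP (Finset.mem_of_mem_erase q)))
    have e5 : (blockOf PM.1 (n+1)).sup id + wtM (PM.2.erase (blockOf PM.1 (n+1)))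
        = wtM PM.2 := Finset.add_sum_erase _ _ hB0M
    have e6 : (blockOf PM.1 (n+1)).sup id = n+1 := by
      apply le_antisymm
      · apply Finset.sup_le
        intro b hb
        exact (Finset.mem_Icc.mp (hP.2.1 _ hB0mem hb)).2
      · exact Finset.le_sup (f := id) hB0n
    have e4 : blockWt (blockOf PM.1 (n+1))
        = blockWt ((blockOf PM.1 (n+1)).erase (n+1))
          + ((blockOf PM.1 (n+1)).erase (n+1)).sup id + n := by
      have hsub' : (blockOf PM.1 (n+1)).erase (n+1) ⊆ Finset.Icc 1 n := by
        intro x hx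
        have h1 := Finset.mem_Icc.mp (hP.2.1 _ hB0mem (Finset.mem_of_mem_erase hx))
        have h2 := Finset.ne_of_mem_erase hx
        rw [Finset.mem_Icc]
        omega
      have h5 := blockWt_insert_top hne hsub'
      rw [Finset.insert_erase hB0n] at h5
      exact h5
    rw [← pow_add]
    congr 1
    omega

/-! Section: recursion for W -/

lemma no_marked_zero {n : ℕ} {PM : Finset (Finset ℕ) × Finset (Finset ℕ)}
    (hM : PM ∈ MarkedS (n+1) 0) : ¬ C2 n PM := by
  rw [mem_markedS] at hM
  rintro ⟨B, hB, -⟩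
  have h2 := Finset.card_eq_zero.mp hM.2.2.2.1
  rw [h2] at hB
  exact absurd hB (Finset.notMem_empty B)

lemma W_split (n h : ℕ) :
    W (n+1) h
      = ((∑ PM ∈ ((MarkedS (n+1) h).filter (C1 n)).filter (fun PM => C2 n PM),
          (X : Polynomial ℕ) ^ (wtP PM.1 + wtM PM.2))
        + ∑ PM ∈ ((MarkedS (n+1) h).filter (C1 n)).filter (fun PM => ¬ C2 n PM),
          (X : Polynomial ℕ) ^ (wtP PM.1 + wtM PM.2))
      + ((∑ PM ∈ ((MarkedS (n+1) h).filter (fun PM => ¬ C1 n PM)).filter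
            (fun PM => C2 n PM),
          (X : Polynomial ℕ) ^ (wtP PM.1 + wtM PM.2))
        + ∑ PM ∈ ((MarkedS (n+1) h).filter (fun PM => ¬ C1 n PM)).filter
            (fun PM => ¬ C2 n PM),
          (X : Polynomial ℕ) ^ (wtP PM.1 + wtM PM.2)) := by
  rw [W,
    ← Finset.sum_filter_add_sum_filter_not (MarkedS (n+1) h) (C1 n)
      (fun PM => (X : Polynomial ℕ) ^ (wtP PM.1 + wtM PM.2)),
    ← Finset.sum_filter_add_sum_filter_not ((MarkedS (n+1) h).filter (C1 n)) (C2 n)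
      (fun PM => (X : Polynomial ℕ) ^ (wtP PM.1 + wtM PM.2)),
    ← Finset.sum_filter_add_sum_filter_not
      ((MarkedS (n+1) h).filter (fun PM => ¬ C1 n PM)) (C2 n)
      (fun PM => (X : Polynomial ℕ) ^ (wtP PM.1 + wtM PM.2))]

lemma W_rec_zero (n : ℕ) : W (n+1) 0 = W n 0 + X ^ n * W n 1 := by
  rw [W_split n 0]
  have hempty1 : ((MarkedS (n+1) 0).filter (C1 n)).filter (fun PM => C2 n PM) = ∅ := by
    rw [Finset.filter_eq_empty_iff]
    intro PM hPM
    rw [Finset.mem_filter] at hPM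
    exact no_marked_zero hPM.1
  have hempty2 : ((MarkedS (n+1) 0).filter (fun PM => ¬ C1 n PM)).filter
      (fun PM => C2 n PM) = ∅ := by
    rw [Finset.filter_eq_empty_iff]
    intro PM hPM
    rw [Finset.mem_filter] at hPM
    exact no_marked_zero hPM.1
  rw [hempty1, hempty2, Finset.sum_empty, sum_caseA n 0, sum_caseC n 0]
  ring

lemma W_rec_succ (n h : ℕ) :
    W (n+1) (h+1)
      = W n (h+1) + X ^ (n+1) * W n h + X ^ n * W n (h+2) + X ^ (2*n+1) * W n (h+1) := by
  rw [W_split n (h+1), sum_caseA n (h+1), sum_caseB n h, sum_caseC n (h+1), sum_caseD n h]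
  ring

/-! Section: base case -/

lemma part_zero_empty {P : Finset (Finset ℕ)} (hP : IsPartitionOf 0 P) : P = ∅ := by
  rcases Finset.eq_empty_or_nonempty P with he | ⟨B, hB⟩
  · exact he
  · obtain ⟨x, hx⟩ := hP.1 B hB
    have h1 := Finset.mem_Icc.mp (hP.2.1 B hB hx)
    omega

lemma markedS_zero_zero :
    MarkedS 0 0 = {((∅ : Finset (Finset ℕ)), (∅ : Finset (Finset ℕ)))} := by
  ext PM
  rw [mem_markedS, Finset.mem_singleton]
  constructor
  · rintro ⟨hP, -, hMP, -, -⟩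
    have hP1 : PM.1 = ∅ := part_zero_empty hP
    have hP2 : PM.2 = ∅ := by
      rw [hP1, Finset.subset_empty] at hMP
      exact hMP
    rw [Prod.ext_iff]
    exact ⟨hP1, hP2⟩
  · intro hPM
    rw [Prod.ext_iff] at hPM
    obtain ⟨h1, h2⟩ := hPM
    rw [h1, h2]
    refine ⟨⟨?_, ?_, ?_⟩, ?_, ?_, ?_, ?_⟩
    · intro B hB
      exact absurd hB (Finset.notMem_empty B)
    · intro B hB
      exact absurd hB (Finset.notMem_empty B)
    · intro i hi
      have := Finset.mem_Icc.mp hi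
      omega
    · intro B₁ h₁
      exact absurd h₁ (Finset.notMem_empty B₁)
    · exact Finset.Subset.refl _
    · exact Finset.card_empty
    · intro B hB
      exact absurd hB (Finset.notMem_empty B)

lemma W_zero_zero : W 0 0 = 1 := by
  rw [W, markedS_zero_zero, Finset.sum_singleton]
  simp [wtP, wtM]

lemma markedS_zero_succ (h : ℕ) : MarkedS 0 (h+1) = ∅ := by
  rw [Finset.eq_empty_iff_forall_notMem]
  intro PM hPM
  rw [mem_markedS] at hPM
  obtain ⟨hP, -, hMP, hcard, -⟩ := hPM
  have hP1 : PM.1 = ∅ := part_zero_empty hP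
  rw [hP1, Finset.subset_empty] at hMP
  rw [hMP] at hcard
  simp at hcard

lemma W_zero_succ (h : ℕ) : W 0 (h+1) = 0 := by
  rw [W, markedS_zero_succ, Finset.sum_empty]

/-! Section: cast and closed form -/

lemma W_cast : ∀ n h : ℕ, (W n h).map (Nat.castRingHom ℤ) = Phi n h := by
  intro n
  induction n with
  | zero =>
      intro h
      cases h with
      | zero =>
          rw [W_zero_zero, phi_zero_zero]
          simp
      | succ h =>
          rw [W_zero_succ, phi_zero_succ]
          simp
  | succ n ih =>
      intro h
      cases h with
      | zero =>
          rw [W_rec_zero, phi_rec_zero, Polynomial.map_add, Polynomial.map_mul,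
            Polynomial.map_pow, Polynomial.map_X, ih 0, ih 1]
      | succ h =>
          rw [W_rec_succ, phi_rec_succ, Polynomial.map_add, Polynomial.map_add,
            Polynomial.map_add, Polynomial.map_mul, Polynomial.map_mul,
            Polynomial.map_mul, Polynomial.map_pow, Polynomial.map_pow,
            Polynomial.map_pow, Polynomial.map_X, ih h, ih (h+1), ih (h+2)]

/-! Section: the NC sum equals W n 0 -/

lemma NC_sum_eq_W (n : ℕ) :
    (∑ P ∈ ((Finset.Icc 1 n).powerset.powerset).filter
        (fun P => IsPartitionOf n P ∧ IsNonCrossing P),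
      (X : Polynomial ℕ) ^ (∑ B ∈ P, blockWt B)) = W n 0 := by
  rw [W]
  refine Finset.sum_bij' (fun P _ => (P, (∅ : Finset (Finset ℕ))))
    (fun PM _ => PM.1) ?_ ?_ ?_ ?_ ?_
  · intro P hP
    rw [Finset.mem_filter, Finset.mem_powerset] at hP
    rw [mem_markedS]
    exact ⟨hP.2.1, hP.2.2, Finset.empty_subset _, Finset.card_empty,
      fun B hB => absurd hB (Finset.notMem_empty B)⟩
  · intro PM hPM
    rw [mem_markedS] at hPM
    rw [Finset.mem_filter, Finset.mem_powerset]
    refine ⟨?_, hPM.1, hPM.2.1⟩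
    intro B hB
    rw [Finset.mem_powerset]
    exact hPM.1.2.1 B hB
  · intro P hP
    rfl
  · intro PM hPM
    rw [mem_markedS] at hPM
    have h2 : PM.2 = ∅ := Finset.card_eq_zero.mp hPM.2.2.2.1
    show (PM.1, (∅ : Finset (Finset ℕ))) = PM
    rw [← h2]
  · intro P hP
    show (X : Polynomial ℕ) ^ (∑ B ∈ P, blockWt B) = X ^ (wtP P + wtM ∅)
    unfold wtP wtM
    rw [Finset.sum_empty, add_zero]

open scoped Classical in
/-- `∑_{π ∈ NC(n)} q^{∑_{B ∈ π} wt(B)} = (1/[n+1]) qbinom(2n, n)`, with the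
denominator cleared. -/
theorem NC_wt_gen_eq_qCatalan (n : ℕ) :
    qInt (n + 1) *
      (∑ P ∈ ((Finset.Icc 1 n).powerset.powerset).filter
          (fun P => IsPartitionOf n P ∧ IsNonCrossing P),
        (X : Polynomial ℕ) ^ (∑ B ∈ P, blockWt B)) = qBinom (2 * n) n := by
  apply Polynomial.map_injective (Nat.castRingHom ℤ) Nat.cast_injective
  rw [Polynomial.map_mul, NC_sum_eq_W n, W_cast n 0, phi_zero_form, ← bz_natCast]
  exact final_alg n
end

section
/- For a non-crossing partition π of [n] with blocks B_1,...,B_m, define wt'(π) = ∑_i ∑_{j ∈ B_i} (j - min B_i). Then ∑_{π ∈ NC(n)} q^{wt'(π)} = q^{binom(n,2)} C_n(q^{-1}), where C_n(q) is the Carlitz q-Catalan number. -/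
open Finset Polynomial

/-- `wt'(B) = ∑_{j ∈ B} (j - min B)`. -/
def blockWt' (B : Finset ℕ) : ℕ :=
  if h : B.Nonempty then ∑ j ∈ B, (j - B.min' h) else 0

/-- The Carlitz `q`-Catalan polynomials:
`C_{n+1}(q) = ∑_{k=0}^{n} C_k(q) C_{n-k}(q) q^{(k+1)(n-k)}`, `C_0 = 1`. -/
noncomputable def carlitz : ℕ → Polynomial ℕ
  | 0 => 1
  | n + 1 =>
    ∑ k ∈ (Finset.range (n + 1)).attach,
      carlitz k.1 * carlitz (n - k.1) * X ^ ((k.1 + 1) * (n - k.1))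
  decreasing_by
  · have := Finset.mem_range.mp k.2; omega
  · have := Finset.mem_range.mp k.2; omega

/-- `revAt D p = q^D · p(q⁻¹)` for `p` of degree at most `D`. -/
noncomputable def revAt (D : ℕ) (p : Polynomial ℕ) : Polynomial ℕ :=
  ∑ i ∈ Finset.range (D + 1), C (p.coeff (D - i)) * X ^ i

namespace NCaux


lemma choose2_add (a b : ℕ) : (a+b+1).choose 2 = a.choose 2 + b.choose 2 + (a*b + a + b) := by
  induction b with
  | zero =>
    simp [Nat.choose_succ_succ, Nat.choose_one_right]
    omega
  | succ b ih =>
    have h1 : a + (b+1) + 1 = (a + b + 1) + 1 := by omega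
    rw [h1, Nat.choose_succ_succ, Nat.choose_one_right, ih]
    have h2 : (b+1).choose 2 = b.choose 1 + b.choose 2 := Nat.choose_succ_succ b 1
    rw [h2, Nat.choose_one_right, Nat.mul_succ]
    omega

lemma carlitz_succ (n : ℕ) : carlitz (n+1) =
    ∑ k ∈ Finset.range (n + 1), carlitz k * carlitz (n - k) * X ^ ((k + 1) * (n - k)) := by
  rw [carlitz]
  exact Finset.sum_attach _ (fun k => carlitz k * carlitz (n - k) * X ^ ((k + 1) * (n - k)))

lemma carlitz_natDegree_le (n : ℕ) : (carlitz n).natDegree ≤ n.choose 2 := by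
  induction n using Nat.strong_induction_on with
  | _ n ih =>
    match n with
    | 0 => simp [carlitz]
    | n + 1 =>
      rw [carlitz_succ]
      apply Polynomial.natDegree_sum_le_of_forall_le
      intro k hk
      have hk' := Finset.mem_range.mp hk
      have h1 : (carlitz k * carlitz (n-k) * X ^ ((k + 1) * (n - k))).natDegree ≤
          k.choose 2 + (n-k).choose 2 + (k+1)*(n-k) := by
        calc (carlitz k * carlitz (n-k) * X ^ ((k + 1) * (n - k))).natDegree
            ≤ (carlitz k * carlitz (n-k)).natDegree + (X ^ ((k + 1) * (n - k)) : Polynomial ℕ).natDegree :=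
              natDegree_mul_le
          _ ≤ (carlitz k).natDegree + (carlitz (n-k)).natDegree + (k+1)*(n-k) := by
              have := natDegree_mul_le (p := carlitz k) (q := carlitz (n-k))
              have hx : (X ^ ((k + 1) * (n - k)) : Polynomial ℕ).natDegree ≤ (k+1)*(n-k) :=
                natDegree_X_pow_le _
              omega
          _ ≤ k.choose 2 + (n-k).choose 2 + (k+1)*(n-k) := by
              have := ih k (by omega)
              have := ih (n-k) (by omega)
              omega
      refine h1.trans ?_
      have h2 := choose2_add k (n-k)
      have h3 : k + (n-k) + 1 = n+1 := by omega
      rw [h3] at h2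
      have : (k+1)*(n-k) = k*(n-k) + (n-k) := by ring
      omega

noncomputable def A (n : ℕ) : Polynomial ℕ := reflect (n.choose 2) (carlitz n)

lemma reflect_sum {ι : Type*} (s : Finset ι) (f : ι → Polynomial ℕ) (N : ℕ) :
    reflect N (∑ i ∈ s, f i) = ∑ i ∈ s, reflect N (f i) := by
  classical
  induction s using Finset.induction with
  | empty => simp [reflect_zero]
  | insert a s h ih => rw [Finset.sum_insert h, Finset.sum_insert h, reflect_add, ih]

lemma A_natDegree_le (n : ℕ) : (A n).natDegree ≤ n.choose 2 := by
  rw [Polynomial.natDegree_le_iff_coeff_eq_zero]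
  intro N hN
  rw [A, coeff_reflect, Polynomial.revAt_eq_self_of_lt hN]
  exact Polynomial.coeff_eq_zero_of_natDegree_lt (lt_of_le_of_lt (carlitz_natDegree_le n) hN)

lemma A_zero : A 0 = 1 := by
  have : carlitz 0 = X ^ 0 := by simp [carlitz]
  rw [A, this, reflect_monomial]
  simp

lemma A_succ (n : ℕ) : A (n+1) = ∑ k ∈ Finset.range (n+1), X ^ k * A k * A (n-k) := by
  rw [A, carlitz_succ, reflect_sum]
  apply Finset.sum_congr rfl
  intro k hk
  have hk' : k ≤ n := by have := Finset.mem_range.mp hk; omega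
  have hch : (n+1).choose 2 = k.choose 2 + ((n-k).choose 2 + (k*(n-k) + n)) := by
    have h2 := choose2_add k (n-k)
    have h3 : k + (n-k) + 1 = n+1 := by omega
    rw [h3] at h2
    omega
  have hmul : (k+1)*(n-k) = k*(n-k) + (n-k) := by ring
  have hdegX : (X ^ ((k + 1) * (n - k)) : Polynomial ℕ).natDegree ≤ k*(n-k) + n :=
    le_trans (natDegree_X_pow_le _) (by omega)
  rw [hch, mul_assoc, reflect_mul _ _ (carlitz_natDegree_le k)
      (le_trans natDegree_mul_le (by have := carlitz_natDegree_le (n-k); omega)),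
    reflect_mul _ _ (carlitz_natDegree_le (n-k)) hdegX,
    reflect_monomial, Polynomial.revAt_le (by omega),
    (by omega : k*(n-k) + n - (k+1)*(n-k) = k)]
  rw [← A, ← A]
  ring

lemma revAt_eq_reflect {D : ℕ} {p : Polynomial ℕ} (h : p.natDegree ≤ D) :
    revAt D p = reflect D p := by
  ext j
  rw [_root_.revAt, finset_sum_coeff, coeff_reflect]
  by_cases hj : j ≤ D
  · rw [Polynomial.revAt_le hj]
    rw [Finset.sum_eq_single j]
    · simp
    · intro b _ hb
      simp only [coeff_C_mul, coeff_X_pow]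
      rw [if_neg (Ne.symm hb), mul_zero]
    · intro h'; exact absurd (Finset.mem_range.mpr (by omega)) h'
  · have h1 : (Polynomial.revAt D) j = j := Polynomial.revAt_eq_self_of_lt (by omega)
    rw [h1, Polynomial.coeff_eq_zero_of_natDegree_lt (by omega)]
    apply Finset.sum_eq_zero
    intro b hb
    have := Finset.mem_range.mp hb
    simp only [coeff_C_mul, coeff_X_pow]
    rw [if_neg (by omega), mul_zero]


open scoped Classical

def POn (S : Finset ℕ) (P : Finset (Finset ℕ)) : Prop :=
  (∀ B ∈ P, B.Nonempty) ∧ (∀ B ∈ P, B ⊆ S) ∧ (∀ i ∈ S, ∃! B, B ∈ P ∧ i ∈ B)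

noncomputable def NCS (n : ℕ) : Finset (Finset (Finset ℕ)) :=
  ((Finset.Icc 1 n).powerset.powerset).filter (fun P => IsPartitionOf n P ∧ IsNonCrossing P)

def wt (P : Finset (Finset ℕ)) : ℕ := ∑ B ∈ P, blockWt' B

noncomputable def F (n : ℕ) : Polynomial ℕ := ∑ P ∈ NCS n, (X : Polynomial ℕ) ^ wt P

lemma mem_NCS {n : ℕ} {P : Finset (Finset ℕ)} :
    P ∈ NCS n ↔ POn (Finset.Icc 1 n) P ∧ IsNonCrossing P := by
  constructor
  · intro h
    have h' := (Finset.mem_filter.mp h).2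
    exact ⟨h'.1, h'.2⟩
  · intro h
    refine Finset.mem_filter.mpr ⟨?_, h.1, h.2⟩
    rw [Finset.mem_powerset]
    intro B hB
    rw [Finset.mem_powerset]
    exact h.1.2.1 B hB

lemma NCS_zero : NCS 0 = {∅} := by
  ext P
  rw [mem_NCS, Finset.mem_singleton]
  constructor
  · rintro ⟨⟨h1, h2, _⟩, _⟩
    rw [Finset.eq_empty_iff_forall_notMem]
    intro B hB
    obtain ⟨x, hx⟩ := h1 B hB
    have := h2 B hB hx
    simp at this
  · rintro rfl
    refine ⟨⟨?_, ?_, ?_⟩, ?_⟩ <;> simp [IsNonCrossing]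

lemma blockWt'_eq {B : Finset ℕ} (h : B.Nonempty) :
    blockWt' B = ∑ j ∈ B, (j - B.min' h) := dif_pos h

lemma blockWt'_singleton (m : ℕ) : blockWt' {m} = 0 := by
  rw [blockWt'_eq ⟨m, Finset.mem_singleton_self m⟩]
  simp

lemma NC_subset {P Q : Finset (Finset ℕ)} (hQP : Q ⊆ P) (h : IsNonCrossing P) :
    IsNonCrossing Q :=
  fun B₁ h1 B₂ h2 a ha c hc b hb d hd hab hbc hcd =>
    h B₁ (hQP h1) B₂ (hQP h2) a ha c hc b hb d hd hab hbc hcd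

section Union
variable {S T : Finset ℕ} {P Q : Finset (Finset ℕ)}

lemma POn_disj (hST : ∀ x ∈ S, ∀ y ∈ T, x < y) (hP : POn S P) (hQ : POn T Q) :
    Disjoint P Q := by
  rw [Finset.disjoint_left]
  intro B hBP hBQ
  obtain ⟨x, hx⟩ := hP.1 B hBP
  exact lt_irrefl x (hST x (hP.2.1 B hBP hx) x (hQ.2.1 B hBQ hx))

lemma POn_union (hST : ∀ x ∈ S, ∀ y ∈ T, x < y) (hP : POn S P) (hQ : POn T Q) :
    POn (S ∪ T) (P ∪ Q) := by
  refine ⟨?_, ?_, ?_⟩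
  · intro B hB
    rcases Finset.mem_union.mp hB with h | h
    exacts [hP.1 B h, hQ.1 B h]
  · intro B hB
    rcases Finset.mem_union.mp hB with h | h
    exacts [(hP.2.1 B h).trans Finset.subset_union_left,
      (hQ.2.1 B h).trans Finset.subset_union_right]
  · intro i hi
    rcases Finset.mem_union.mp hi with h | h
    · obtain ⟨B, ⟨hB, hiB⟩, huniq⟩ := hP.2.2 i h
      refine ⟨B, ⟨Finset.mem_union_left _ hB, hiB⟩, ?_⟩
      rintro B' ⟨hB', hiB'⟩
      rcases Finset.mem_union.mp hB' with h' | h'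
      · exact huniq B' ⟨h', hiB'⟩
      · exact absurd (hST i h i (hQ.2.1 B' h' hiB')) (lt_irrefl i)
    · obtain ⟨B, ⟨hB, hiB⟩, huniq⟩ := hQ.2.2 i h
      refine ⟨B, ⟨Finset.mem_union_right _ hB, hiB⟩, ?_⟩
      rintro B' ⟨hB', hiB'⟩
      rcases Finset.mem_union.mp hB' with h' | h'
      · exact absurd (hST i (hP.2.1 B' h' hiB') i h) (lt_irrefl i)
      · exact huniq B' ⟨h', hiB'⟩

lemma NC_union (hST : ∀ x ∈ S, ∀ y ∈ T, x < y) (hPS : ∀ B ∈ P, B ⊆ S)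
    (hQT : ∀ B ∈ Q, B ⊆ T) (hP : IsNonCrossing P) (hQ : IsNonCrossing Q) :
    IsNonCrossing (P ∪ Q) := by
  intro B₁ h1 B₂ h2 a ha c hc b hb d hd hab hbc hcd
  rcases Finset.mem_union.mp h1 with h1' | h1' <;>
    rcases Finset.mem_union.mp h2 with h2' | h2'
  · exact hP B₁ h1' B₂ h2' a ha c hc b hb d hd hab hbc hcd
  · exact absurd (hST c (hPS B₁ h1' hc) b (hQT B₂ h2' hb)) (by omega)
  · exact absurd (hST b (hPS B₂ h2' hb) a (hQT B₁ h1' ha)) (by omega)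
  · exact hQ B₁ h1' B₂ h2' a ha c hc b hb d hd hab hbc hcd

lemma wt_union (h : Disjoint P Q) : wt (P ∪ Q) = wt P + wt Q :=
  Finset.sum_union h

end Union
section Shift
variable (t : ℕ)

def shB (B : Finset ℕ) : Finset ℕ := B.image (· + t)

noncomputable def sh (P : Finset (Finset ℕ)) : Finset (Finset ℕ) := P.image (shB t)

lemma add_inj : Function.Injective (· + t : ℕ → ℕ) := fun a b h => by simp only [] at h; omega

lemma shB_inj : Function.Injective (shB t) := Finset.image_injective (add_inj t)

lemma mem_shB {x : ℕ} {B : Finset ℕ} : x ∈ shB t B ↔ ∃ y ∈ B, y + t = x := by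
  simp [shB]

lemma shB_subset_Icc {B : Finset ℕ} {a b : ℕ} (h : B ⊆ Finset.Icc a b) :
    shB t B ⊆ Finset.Icc (a + t) (b + t) := by
  intro x hx
  obtain ⟨y, hy, rfl⟩ := (mem_shB t).mp hx
  have := h hy
  simp only [Finset.mem_Icc] at this ⊢
  omega

lemma blockWt'_shB (B : Finset ℕ) : blockWt' (shB t B) = blockWt' B := by
  rcases B.eq_empty_or_nonempty with rfl | h
  · simp [shB, blockWt']
  · have h' : (shB t B).Nonempty := h.image _
    rw [blockWt'_eq h, blockWt'_eq h']
    have hmin : (shB t B).min' h' = B.min' h + t := by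
      simp only [shB]
      exact Finset.min'_image (f := (· + t))
        (fun a b hab => Nat.add_le_add_right hab t) B _
    rw [hmin]
    simp only [shB]
    rw [Finset.sum_image (fun x _ y _ h => add_inj t h)]
    refine Finset.sum_congr rfl fun j hj => ?_
    omega

lemma wt_sh (P : Finset (Finset ℕ)) : wt (sh t P) = wt P := by
  rw [wt, sh, Finset.sum_image (fun x _ y _ h => shB_inj t h)]
  exact Finset.sum_congr rfl fun B _ => blockWt'_shB t B

lemma POn_sh {S : Finset ℕ} {P : Finset (Finset ℕ)} (h : POn S P) :
    POn (S.image (· + t)) (sh t P) := by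
  refine ⟨?_, ?_, ?_⟩
  · intro B hB
    obtain ⟨C, hC, rfl⟩ := Finset.mem_image.mp hB
    exact (h.1 C hC).image _
  · intro B hB
    obtain ⟨C, hC, rfl⟩ := Finset.mem_image.mp hB
    exact Finset.image_subset_image (h.2.1 C hC)
  · intro i hi
    obtain ⟨j, hj, rfl⟩ := Finset.mem_image.mp hi
    obtain ⟨B, ⟨hB, hjB⟩, huniq⟩ := h.2.2 j hj
    refine ⟨shB t B, ⟨Finset.mem_image_of_mem _ hB, Finset.mem_image_of_mem _ hjB⟩, ?_⟩
    rintro B' ⟨hB', hjB'⟩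
    obtain ⟨C, hC, rfl⟩ := Finset.mem_image.mp hB'
    obtain ⟨y, hy, hyj⟩ := (mem_shB t).mp hjB'
    have : y = j := by omega
    subst this
    rw [huniq C ⟨hC, hy⟩]

lemma POn_sh_rev {S : Finset ℕ} {P : Finset (Finset ℕ)}
    (h : POn (S.image (· + t)) (sh t P)) : POn S P := by
  refine ⟨?_, ?_, ?_⟩
  · intro B hB
    have := h.1 (shB t B) (Finset.mem_image_of_mem _ hB)
    obtain ⟨x, hx⟩ := this
    obtain ⟨y, hy, _⟩ := (mem_shB t).mp hx
    exact ⟨y, hy⟩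
  · intro B hB x hx
    have := h.2.1 (shB t B) (Finset.mem_image_of_mem _ hB)
      (Finset.mem_image_of_mem _ hx)
    obtain ⟨y, hy, hyx⟩ := Finset.mem_image.mp this
    have : y = x := by omega
    subst this
    exact hy
  · intro i hi
    obtain ⟨B', ⟨hB', hiB'⟩, huniq⟩ := h.2.2 (i + t) (Finset.mem_image_of_mem _ hi)
    obtain ⟨C, hC, rfl⟩ := Finset.mem_image.mp hB'
    obtain ⟨y, hy, hyi⟩ := (mem_shB t).mp hiB'
    have : y = i := by omega
    subst this
    refine ⟨C, ⟨hC, hy⟩, ?_⟩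
    rintro C' ⟨hC', hiC'⟩
    exact shB_inj t (huniq (shB t C')
      ⟨Finset.mem_image_of_mem _ hC', Finset.mem_image_of_mem _ hiC'⟩)

lemma NC_sh_rev {P : Finset (Finset ℕ)} (h : IsNonCrossing (sh t P)) :
    IsNonCrossing P := by
  intro B₁ h1 B₂ h2 a ha c hc b hb d hd hab hbc hcd
  have := h (shB t B₁) (Finset.mem_image_of_mem _ h1) (shB t B₂)
    (Finset.mem_image_of_mem _ h2) (a + t) (Finset.mem_image_of_mem _ ha)
    (c + t) (Finset.mem_image_of_mem _ hc) (b + t) (Finset.mem_image_of_mem _ hb)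
    (d + t) (Finset.mem_image_of_mem _ hd) (by omega) (by omega) (by omega)
  exact shB_inj t this

end Shift

section Augment
variable (l m : ℕ)

noncomputable def augf (B : Finset ℕ) : Finset ℕ :=
  if l ∈ B then insert (m + 1) B else B

noncomputable def aug (P : Finset (Finset ℕ)) : Finset (Finset ℕ) := P.image (augf l m)

variable {l m} {P : Finset (Finset ℕ)} (hP : POn (Finset.Icc l m) P) (hl : l ≤ m)

-- a member of augf B
lemma mem_augf {x : ℕ} {B : Finset ℕ} :
    x ∈ augf l m B ↔ x ∈ B ∨ (x = m + 1 ∧ l ∈ B) := by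
  unfold augf
  split <;> simp_all <;> tauto

include hP hl in
lemma augf_injOn : ∀ B₁ ∈ P, ∀ B₂ ∈ P, augf l m B₁ = augf l m B₂ → B₁ = B₂ := by
  intro B₁ h1 B₂ h2 heq
  have hm1 : ∀ B ∈ P, m + 1 ∉ B := fun B hB hc => by
    have := hP.2.1 B hB hc
    simp only [Finset.mem_Icc] at this
    omega
  obtain ⟨Bu, _, huniq⟩ := hP.2.2 l (Finset.mem_Icc.mpr ⟨le_refl l, hl⟩)
  unfold augf at heq
  split at heq <;> split at heq
  · next hl1 hl2 => rw [huniq B₁ ⟨h1, hl1⟩, huniq B₂ ⟨h2, hl2⟩]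
  · exact absurd (heq ▸ Finset.mem_insert_self (m+1) B₁) (hm1 B₂ h2)
  · exact absurd (heq.symm ▸ Finset.mem_insert_self (m+1) B₂) (hm1 B₁ h1)
  · exact heq

include hP in
lemma POn_aug (hl : l ≤ m) : POn (Finset.Icc l (m + 1)) (aug l m P) := by
  obtain ⟨Bl, ⟨hBl, hlBl⟩, huniql⟩ := hP.2.2 l (Finset.mem_Icc.mpr ⟨le_refl l, hl⟩)
  refine ⟨?_, ?_, ?_⟩
  · intro B hB
    obtain ⟨C, hC, rfl⟩ := Finset.mem_image.mp hB
    obtain ⟨x, hx⟩ := hP.1 C hC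
    exact ⟨x, mem_augf.mpr (Or.inl hx)⟩
  · intro B hB x hx
    obtain ⟨C, hC, rfl⟩ := Finset.mem_image.mp hB
    rcases mem_augf.mp hx with h | ⟨rfl, _⟩
    · have := hP.2.1 C hC h
      simp only [Finset.mem_Icc] at this ⊢
      omega
    · simp only [Finset.mem_Icc]
      omega
  · intro i hi
    simp only [Finset.mem_Icc] at hi
    by_cases him : i ≤ m
    · obtain ⟨B, ⟨hB, hiB⟩, huniq⟩ := hP.2.2 i (Finset.mem_Icc.mpr ⟨hi.1, him⟩)
      refine ⟨augf l m B, ⟨Finset.mem_image_of_mem _ hB, mem_augf.mpr (Or.inl hiB)⟩, ?_⟩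
      rintro B' ⟨hB', hiB'⟩
      obtain ⟨C, hC, rfl⟩ := Finset.mem_image.mp hB'
      rcases mem_augf.mp hiB' with h | ⟨rfl, _⟩
      · rw [huniq C ⟨hC, h⟩]
      · omega
    · have : i = m + 1 := by omega
      subst this
      refine ⟨augf l m Bl, ⟨Finset.mem_image_of_mem _ hBl,
        mem_augf.mpr (Or.inr ⟨rfl, hlBl⟩)⟩, ?_⟩
      rintro B' ⟨hB', hiB'⟩
      obtain ⟨C, hC, rfl⟩ := Finset.mem_image.mp hB'
      rcases mem_augf.mp hiB' with h | ⟨_, hlC⟩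
      · have := hP.2.1 C hC h
        simp only [Finset.mem_Icc] at this
        omega
      · rw [huniql C ⟨hC, hlC⟩]

include hP hl in
lemma NC_aug (hNC : IsNonCrossing P) : IsNonCrossing (aug l m P) := by
  intro B₁ h1 B₂ h2 a ha c hc b hb d hd hab hbc hcd
  obtain ⟨C₁, hC1, rfl⟩ := Finset.mem_image.mp h1
  obtain ⟨C₂, hC2, rfl⟩ := Finset.mem_image.mp h2
  have hsub : ∀ C ∈ P, ∀ x ∈ augf l m C, l ≤ x ∧ x ≤ m + 1 := by
    intro C hC x hx
    rcases mem_augf.mp hx with h | ⟨rfl, _⟩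
    · have := hP.2.1 C hC h
      simp only [Finset.mem_Icc] at this
      omega
    · omega
  -- a, b, c are ≤ m so they are in C₁ resp. C₂
  have hd' := hsub C₂ hC2 d hd
  have hb' := hsub C₂ hC2 b hb
  have hc' := hsub C₁ hC1 c hc
  have haC : a ∈ C₁ := by
    rcases mem_augf.mp ha with h | ⟨rfl, _⟩
    · exact h
    · omega
  have hcC : c ∈ C₁ := by
    rcases mem_augf.mp hc with h | ⟨rfl, _⟩
    · exact h
    · omega
  have hbC : b ∈ C₂ := by
    rcases mem_augf.mp hb with h | ⟨rfl, _⟩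
    · exact h
    · omega
  suffices hCC : C₁ = C₂ by rw [hCC]
  rcases mem_augf.mp hd with hdC | ⟨rfl, hlC2⟩
  · exact hNC C₁ hC1 C₂ hC2 a haC c hcC b hbC d hdC hab hbc hcd
  · -- d = m+1, l ∈ C₂
    have hla := (hsub C₁ hC1 a ha).1
    rcases eq_or_lt_of_le hla with h | h
    · -- l = a, so a ∈ C₁ ∩ C₂
      obtain ⟨Bu, _, huniq⟩ := hP.2.2 l (Finset.mem_Icc.mpr ⟨le_refl l, hl⟩)
      rw [huniq C₁ ⟨hC1, h ▸ haC⟩, huniq C₂ ⟨hC2, hlC2⟩]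
    · exact (hNC C₂ hC2 C₁ hC1 l hlC2 b hbC a haC c hcC h hab hbc).symm

include hP hl in
lemma wt_aug : wt (aug l m P) = wt P + (m + 1 - l) := by
  obtain ⟨Bl, ⟨hBl, hlBl⟩, huniql⟩ := hP.2.2 l (Finset.mem_Icc.mpr ⟨le_refl l, hl⟩)
  rw [wt, aug, Finset.sum_image (augf_injOn hP hl)]
  have hterm : ∀ B ∈ P, blockWt' (augf l m B) =
      blockWt' B + (if l ∈ B then m + 1 - l else 0) := by
    intro B hB
    by_cases hlB : l ∈ B
    · have hne : B.Nonempty := ⟨l, hlB⟩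
      have hm1 : m + 1 ∉ B := fun hc => by
        have := hP.2.1 B hB hc
        simp only [Finset.mem_Icc] at this
        omega
      have hge : ∀ x ∈ B, l ≤ x := fun x hx => by
        have := hP.2.1 B hB hx
        simp only [Finset.mem_Icc] at this
        exact this.1
      have hmin : B.min' hne = l :=
        le_antisymm (Finset.min'_le B l hlB) (Finset.le_min' _ _ _ hge)
      have hins : augf l m B = insert (m+1) B := if_pos hlB
      have hne' : (insert (m+1) B).Nonempty := Finset.insert_nonempty _ _
      have hmin' : (insert (m+1) B).min' hne' = l := by
        refine le_antisymm (Finset.min'_le _ l (Finset.mem_insert_of_mem hlB))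
          (Finset.le_min' _ _ _ fun x hx => ?_)
        rcases Finset.mem_insert.mp hx with rfl | h
        · omega
        · exact hge x h
      rw [hins, blockWt'_eq hne', blockWt'_eq hne, hmin, hmin',
        Finset.sum_insert hm1, if_pos hlB]
      omega
    · simp [augf, hlB]
  rw [Finset.sum_congr rfl hterm, Finset.sum_add_distrib]
  congr 1
  rw [Finset.sum_eq_single_of_mem Bl hBl
    (fun B hB hne => if_neg (fun hlB => hne (huniql B ⟨hB, hlB⟩))), if_pos hlBl]

end Augment

lemma NC_sh (t : ℕ) {P : Finset (Finset ℕ)} (h : IsNonCrossing P) :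
    IsNonCrossing (sh t P) := by
  intro B₁ h1 B₂ h2 a ha c hc b hb d hd hab hbc hcd
  obtain ⟨C₁, hC1, rfl⟩ := Finset.mem_image.mp h1
  obtain ⟨C₂, hC2, rfl⟩ := Finset.mem_image.mp h2
  obtain ⟨a₀, ha0, rfl⟩ := (mem_shB t).mp ha
  obtain ⟨c₀, hc0, rfl⟩ := (mem_shB t).mp hc
  obtain ⟨b₀, hb0, rfl⟩ := (mem_shB t).mp hb
  obtain ⟨d₀, hd0, rfl⟩ := (mem_shB t).mp hd
  rw [h C₁ hC1 C₂ hC2 a₀ ha0 c₀ hc0 b₀ hb0 d₀ hd0 (by omega) (by omega) (by omega)]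

lemma POn_singleton (m : ℕ) : POn (Finset.Icc m m) {({m} : Finset ℕ)} := by
  refine ⟨?_, ?_, ?_⟩
  · intro B hB
    rw [Finset.mem_singleton] at hB
    exact hB ▸ ⟨m, Finset.mem_singleton_self m⟩
  · intro B hB
    rw [Finset.mem_singleton] at hB
    subst hB
    intro x hx
    rw [Finset.mem_singleton] at hx
    simp [hx]
  · intro i hi
    simp only [Finset.mem_Icc] at hi
    have : i = m := by omega
    subst this
    exact ⟨{i}, ⟨Finset.mem_singleton_self _, Finset.mem_singleton_self _⟩,
      fun B hB => Finset.mem_singleton.mp hB.1⟩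

lemma NC_singleton (B : Finset ℕ) : IsNonCrossing {B} := by
  intro B₁ h1 B₂ h2 _ _ _ _ _ _ _ _ _ _ _
  rw [Finset.mem_singleton] at h1 h2
  rw [h1, h2]

section Decomp
variable (n : ℕ) (π : Finset (Finset ℕ))

noncomputable def topIdx : ℕ :=
  if h : ((Finset.Icc 1 (n+1)).filter (fun x => ∃ B ∈ π, x ∈ B ∧ n+1 ∈ B)).Nonempty
  then ((Finset.Icc 1 (n+1)).filter (fun x => ∃ B ∈ π, x ∈ B ∧ n+1 ∈ B)).min' h
  else n+1

noncomputable def lowPart : Finset (Finset ℕ) :=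
  π.filter (fun B => B ⊆ Finset.Icc 1 (topIdx n π - 1))

noncomputable def highPart : Finset (Finset ℕ) :=
  π.filter (fun B => ¬ B ⊆ Finset.Icc 1 (topIdx n π - 1))

noncomputable def part2 : Finset (Finset ℕ) :=
  ((highPart n π).image
    (fun B => (B.erase (n+1)).image (fun x => x - (topIdx n π - 1)))).erase ∅

noncomputable def asm (x : (_ : ℕ) × Finset (Finset ℕ) × Finset (Finset ℕ)) :
    Finset (Finset ℕ) :=
  x.2.1 ∪ aug (n - x.1 + 1) n (sh (n - x.1) x.2.2) ∪
    (if x.1 = 0 then {({n+1} : Finset ℕ)} else ∅)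

variable {n π}

lemma topIdx_eq (hP : POn (Finset.Icc 1 (n+1)) π) {B₀ : Finset ℕ} (hB₀ : B₀ ∈ π)
    (htop : n+1 ∈ B₀) : topIdx n π = B₀.min' ⟨n+1, htop⟩ := by
  have hset : (Finset.Icc 1 (n+1)).filter (fun x => ∃ B ∈ π, x ∈ B ∧ n+1 ∈ B) = B₀ := by
    ext x
    simp only [Finset.mem_filter]
    constructor
    · rintro ⟨hx, B, hB, hxB, htopB⟩
      obtain ⟨Bu, _, huniq⟩ := hP.2.2 (n+1) (Finset.mem_Icc.mpr ⟨by omega, le_refl _⟩)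
      have hBB : B = B₀ := (huniq B ⟨hB, htopB⟩).trans (huniq B₀ ⟨hB₀, htop⟩).symm
      exact hBB ▸ hxB
    · intro hx
      exact ⟨hP.2.1 B₀ hB₀ hx, B₀, hB₀, hx, htop⟩
  unfold topIdx
  rw [hset, dif_pos ⟨n+1, htop⟩]


theorem dis_spec (hP : POn (Finset.Icc 1 (n+1)) π) (hNC : IsNonCrossing π) :
    1 ≤ topIdx n π ∧ topIdx n π ≤ n + 1 ∧
    lowPart n π ∈ NCS (topIdx n π - 1) ∧
    part2 n π ∈ NCS (n + 1 - topIdx n π) ∧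
    π = asm n ⟨n + 1 - topIdx n π, (lowPart n π, part2 n π)⟩ := by
  obtain ⟨B₀, ⟨hB₀, htop⟩, huniqTop⟩ := hP.2.2 (n+1)
    (Finset.mem_Icc.mpr ⟨by omega, le_refl _⟩)
  have h0 : B₀.Nonempty := ⟨n+1, htop⟩
  have hieq : topIdx n π = B₀.min' h0 := topIdx_eq hP hB₀ htop
  set i := topIdx n π with hidef
  have hIccmem : ∀ B ∈ π, ∀ x ∈ B, 1 ≤ x ∧ x ≤ n+1 := fun B hB x hx => by
    have := hP.2.1 B hB hx; rwa [Finset.mem_Icc] at this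
  have himem : i ∈ B₀ := hieq ▸ B₀.min'_mem h0
  have hi1 : 1 ≤ i := (hIccmem B₀ hB₀ i himem).1
  have hin : i ≤ n+1 := hieq ▸ Finset.min'_le B₀ (n+1) htop
  have hile : ∀ x ∈ B₀, i ≤ x := fun x hx => hieq ▸ Finset.min'_le B₀ x hx
  have huniq : ∀ x, ∀ B ∈ π, ∀ B' ∈ π, x ∈ B → x ∈ B' → B = B' := by
    intro x B hB B' hB' hxB hxB'
    obtain ⟨Bu, _, hu⟩ := hP.2.2 x (hP.2.1 B hB hxB)
    rw [hu B ⟨hB, hxB⟩, hu B' ⟨hB', hxB'⟩]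
  have hsep : ∀ B ∈ π, B ⊆ Finset.Icc 1 (i-1) ∨ B ⊆ Finset.Icc i (n+1) := by
    intro B hB
    by_cases hs : B ⊆ Finset.Icc 1 (i-1)
    · exact Or.inl hs
    · right
      obtain ⟨y, hyB, hynot⟩ := Finset.not_subset.mp hs
      have hy := hIccmem B hB y hyB
      have hyi : i ≤ y := by rw [Finset.mem_Icc] at hynot; omega
      intro x hx
      have hxB := hIccmem B hB x hx
      rw [Finset.mem_Icc]
      refine ⟨?_, hxB.2⟩
      by_contra hxi
      push_neg at hxi
      by_cases hyB₀ : y ∈ B₀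
      · have hBB : B = B₀ := huniq y B hB B₀ hB₀ hyB hyB₀
        exact absurd (hile x (hBB ▸ hx)) (by omega)
      · have hyi' : i < y := lt_of_le_of_ne hyi (fun h => hyB₀ (h ▸ himem))
        have hyn : y < n+1 := lt_of_le_of_ne hy.2 (fun h => hyB₀ (h ▸ htop))
        have hBB := hNC B hB B₀ hB₀ x hx y hyB i himem (n+1) htop (by omega) hyi' hyn
        exact hyB₀ (hBB ▸ hyB)
  have hlowP : POn (Finset.Icc 1 (i-1)) (lowPart n π) := by
    refine ⟨fun B hB => hP.1 B (Finset.mem_filter.mp hB).1,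
      fun B hB => (Finset.mem_filter.mp hB).2, ?_⟩
    intro x hx
    rw [Finset.mem_Icc] at hx
    obtain ⟨B, ⟨hB, hxB⟩, hu⟩ := hP.2.2 x (Finset.mem_Icc.mpr ⟨hx.1, by omega⟩)
    have hBlow : B ∈ lowPart n π := by
      rw [lowPart, ← hidef, Finset.mem_filter]
      refine ⟨hB, ?_⟩
      rcases hsep B hB with h | h
      · exact h
      · exfalso; have := Finset.mem_Icc.mp (h hxB); omega
    refine ⟨B, ⟨hBlow, hxB⟩, fun B' hB' => ?_⟩
    rw [lowPart, ← hidef, Finset.mem_filter] at hB'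
    exact hu B' ⟨hB'.1.1, hB'.2⟩
  have hlowMem : lowPart n π ∈ NCS (i-1) :=
    mem_NCS.mpr ⟨hlowP, NC_subset (Finset.filter_subset _ _) hNC⟩
  have hmem_high : ∀ B, B ∈ highPart n π ↔ B ∈ π ∧ ¬ B ⊆ Finset.Icc 1 (i-1) := by
    intro B
    rw [highPart, ← hidef, Finset.mem_filter]
  have hhighsub : ∀ B ∈ highPart n π, B ⊆ Finset.Icc i (n+1) := by
    intro B hB
    obtain ⟨hBπ, hBn⟩ := (hmem_high B).mp hB
    rcases hsep B hBπ with h | h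
    · exact absurd h hBn
    · exact h
  have hhighP : POn (Finset.Icc i (n+1)) (highPart n π) := by
    refine ⟨fun B hB => hP.1 B ((hmem_high B).mp hB).1, hhighsub, ?_⟩
    intro x hx
    rw [Finset.mem_Icc] at hx
    obtain ⟨B, ⟨hB, hxB⟩, hu⟩ := hP.2.2 x (Finset.mem_Icc.mpr ⟨by omega, hx.2⟩)
    have hBhigh : B ∈ highPart n π := by
      rw [hmem_high]
      refine ⟨hB, fun hsub => ?_⟩
      have := Finset.mem_Icc.mp (hsub hxB); omega
    exact ⟨B, ⟨hBhigh, hxB⟩, fun B' hB' => hu B' ⟨((hmem_high B').mp hB'.1).1, hB'.2⟩⟩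
  have hB₀high : B₀ ∈ highPart n π := by
    rw [hmem_high]
    exact ⟨hB₀, fun hsub => by have := Finset.mem_Icc.mp (hsub htop); omega⟩
  have hlowhigh : lowPart n π ∪ highPart n π = π := by
    rw [lowPart, highPart, ← hidef]
    exact Finset.filter_union_filter_not_eq _ π
  by_cases hcase : i = n + 1
  · -- k = 0 case
    have hB₀eq : B₀ = {n+1} := by
      apply Finset.eq_singleton_iff_unique_mem.mpr
      refine ⟨htop, fun x hx => ?_⟩
      have h1 := hile x hx
      have h2 := hIccmem B₀ hB₀ x hx
      omega
    have hhigh_eq : highPart n π = {B₀} := by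
      ext B
      rw [hmem_high, Finset.mem_singleton]
      constructor
      · rintro ⟨hBπ, hBn⟩
        obtain ⟨x, hx⟩ := hP.1 B hBπ
        have hsub : B ⊆ Finset.Icc i (n+1) := by
          rcases hsep B hBπ with h | h
          · exact absurd h hBn
          · exact h
        have hx' := Finset.mem_Icc.mp (hsub hx)
        have hxn : x = n+1 := by omega
        exact huniq (n+1) B hBπ B₀ hB₀ (hxn ▸ hx) htop
      · intro hBe
        rw [hBe]
        exact (hmem_high B₀).mp hB₀high
    have hpart2 : part2 n π = ∅ := by
      rw [part2, ← hidef, hhigh_eq, Finset.image_singleton, hB₀eq]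
      simp
    have hk0 : n + 1 - i = 0 := by omega
    refine ⟨hi1, hin, hlowMem, ?_, ?_⟩
    · rw [hpart2, hk0, NCS_zero]; exact Finset.mem_singleton_self _
    · rw [asm, hk0, hpart2]
      simp only [if_pos rfl]
      have hshe : sh (n - 0) (∅ : Finset (Finset ℕ)) = ∅ := rfl
      rw [hshe]
      have hauge : aug (n - 0 + 1) n (∅ : Finset (Finset ℕ)) = ∅ := rfl
      rw [hauge, Finset.union_empty]
      simp only [if_true]
      conv_lhs => rw [← hlowhigh]
      rw [hhigh_eq, hB₀eq]
  · -- k ≥ 1 case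
    have hin' : i ≤ n := by omega
    set t := i - 1 with ht
    set k := n + 1 - i with hk
    have hk1 : 1 ≤ k := by omega
    have hkey : ∀ B ∈ highPart n π, (B.erase (n+1)).Nonempty ∧
        (∀ x ∈ B.erase (n+1), i ≤ x ∧ x ≤ n) := by
      intro B hB
      have hsub := hhighsub B hB
      constructor
      · by_cases hn1 : n + 1 ∈ B
        · have hBB : B = B₀ := huniq (n+1) B ((hmem_high B).mp hB).1 B₀ hB₀ hn1 htop
          exact ⟨i, Finset.mem_erase.mpr ⟨by omega, hBB ▸ himem⟩⟩
        · obtain ⟨x, hx⟩ := hP.1 B ((hmem_high B).mp hB).1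
          exact ⟨x, Finset.mem_erase.mpr ⟨fun h => hn1 (h ▸ hx), hx⟩⟩
      · intro x hx
        obtain ⟨hxne, hxB⟩ := Finset.mem_erase.mp hx
        have := Finset.mem_Icc.mp (hsub hxB)
        omega
    set R' := (highPart n π).image (fun B => B.erase (n+1)) with hR'
    have hR'P : POn (Finset.Icc i n) R' := by
      refine ⟨?_, ?_, ?_⟩
      · intro C hC
        obtain ⟨B, hB, rfl⟩ := Finset.mem_image.mp hC
        exact (hkey B hB).1
      · intro C hC x hx
        obtain ⟨B, hB, rfl⟩ := Finset.mem_image.mp hC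
        exact Finset.mem_Icc.mpr ((hkey B hB).2 x hx)
      · intro x hx
        rw [Finset.mem_Icc] at hx
        obtain ⟨B, ⟨hB, hxB⟩, hu⟩ := hhighP.2.2 x (Finset.mem_Icc.mpr ⟨hx.1, by omega⟩)
        refine ⟨B.erase (n+1), ⟨Finset.mem_image_of_mem _ hB,
          Finset.mem_erase.mpr ⟨by omega, hxB⟩⟩, ?_⟩
        rintro C ⟨hC, hxC⟩
        obtain ⟨B', hB', rfl⟩ := Finset.mem_image.mp hC
        rw [hu B' ⟨hB', Finset.mem_of_mem_erase hxC⟩]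
    have hR'NC : IsNonCrossing R' := by
      intro C₁ h1 C₂ h2 a ha c hc b hb d hd hab hbc hcd
      obtain ⟨B₁, hB1, rfl⟩ := Finset.mem_image.mp h1
      obtain ⟨B₂, hB2, rfl⟩ := Finset.mem_image.mp h2
      rw [hNC B₁ ((hmem_high B₁).mp hB1).1 B₂ ((hmem_high B₂).mp hB2).1
        a (Finset.mem_of_mem_erase ha) c (Finset.mem_of_mem_erase hc)
        b (Finset.mem_of_mem_erase hb) d (Finset.mem_of_mem_erase hd) hab hbc hcd]
    have hpart2_eq : part2 n π = R'.image (fun C => C.image (fun x => x - t)) := by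
      rw [part2, ← hidef, ← ht, hR', Finset.image_image]
      apply Finset.erase_eq_of_notMem
      intro hmem
      obtain ⟨B, hB, hBeq⟩ := Finset.mem_image.mp hmem
      have := ((hkey B hB).1.image (fun x => x - t))
      rw [hBeq] at this
      exact Finset.not_nonempty_empty this
    have hshpart : sh t (part2 n π) = R' := by
      rw [hpart2_eq, sh, Finset.image_image]
      have : ∀ C ∈ R', (shB t ∘ fun C => C.image (fun x => x - t)) C = C := by
        intro C hC
        simp only [Function.comp_apply, shB, Finset.image_image]
        rw [show ((fun x => x + t) ∘ fun x => x - t) = fun x => x - t + t from rfl]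
        rw [Finset.image_congr (g := id) ?_, Finset.image_id]
        intro x hx
        have := Finset.mem_Icc.mp (hR'P.2.1 C hC hx)
        simp only [id]
        omega
      rw [Finset.image_congr (g := id) this, Finset.image_id]
    have hIccim : (Finset.Icc 1 k).image (· + t) = Finset.Icc i n := by
      rw [Finset.image_add_right_Icc]
      congr 1 <;> omega
    have hpart2P : POn (Finset.Icc 1 k) (part2 n π) := by
      apply POn_sh_rev t
      rw [hIccim, hshpart]
      exact hR'P
    have hpart2NC : IsNonCrossing (part2 n π) := by
      apply NC_sh_rev t
      rw [hshpart]
      exact hR'NC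
    refine ⟨hi1, hin, hlowMem, mem_NCS.mpr ⟨hpart2P, hpart2NC⟩, ?_⟩
    rw [asm]
    simp only
    have hnk : n - k = t := by omega
    have hkne : ¬ (k = 0) := by omega
    rw [if_neg hkne, Finset.union_empty, hnk, hshpart]
    have haug : aug (t + 1) n R' = highPart n π := by
      rw [aug, hR', Finset.image_image]
      have : ∀ B ∈ highPart n π, (augf (t+1) n ∘ fun B => B.erase (n+1)) B = B := by
        intro B hB
        simp only [Function.comp_apply, augf]
        have hti : t + 1 = i := by omega
        by_cases hn1 : n + 1 ∈ B
        · have hBB : B = B₀ := huniq (n+1) B ((hmem_high B).mp hB).1 B₀ hB₀ hn1 htop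
          rw [if_pos (by rw [hti]; exact Finset.mem_erase.mpr ⟨by omega, hBB ▸ himem⟩)]
          exact Finset.insert_erase hn1
        · rw [Finset.erase_eq_of_notMem hn1]
          rw [if_neg ?_]
          intro hiB
          rw [hti] at hiB
          have hBB : B = B₀ := huniq i B ((hmem_high B).mp hB).1 B₀ hB₀ hiB himem
          exact hn1 (hBB.symm ▸ htop)
      rw [Finset.image_congr (g := id) this, Finset.image_id]
    rw [haug, hlowhigh]

theorem asm_spec {k : ℕ} (hkn : k ≤ n) {p₁ p₂ : Finset (Finset ℕ)}
    (hp₁ : p₁ ∈ NCS (n - k)) (hp₂ : p₂ ∈ NCS k) :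
    asm n ⟨k, (p₁, p₂)⟩ ∈ NCS (n+1) ∧
    wt (asm n ⟨k, (p₁, p₂)⟩) = k + wt p₁ + wt p₂ ∧
    topIdx n (asm n ⟨k, (p₁, p₂)⟩) = n + 1 - k ∧
    lowPart n (asm n ⟨k, (p₁, p₂)⟩) = p₁ ∧
    part2 n (asm n ⟨k, (p₁, p₂)⟩) = p₂ := by
  obtain ⟨hP1, hNC1⟩ := mem_NCS.mp hp₁
  obtain ⟨hP2, hNC2⟩ := mem_NCS.mp hp₂
  by_cases hk0 : k = 0
  · subst hk0
    have hp2e : p₂ = ∅ := by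
      rw [NCS_zero] at hp₂
      exact Finset.mem_singleton.mp hp₂
    subst hp2e
    have hπa : asm n ⟨0, (p₁, ∅)⟩ = p₁ ∪ {({n+1} : Finset ℕ)} := by
      rw [asm]
      simp only [if_pos rfl, if_true]
      have h1 : sh (n - 0) (∅ : Finset (Finset ℕ)) = ∅ := rfl
      have h2 : aug (n - 0 + 1) n (∅ : Finset (Finset ℕ)) = ∅ := rfl
      rw [h1, h2, Finset.union_empty]
    have hST : ∀ x ∈ Finset.Icc 1 n, ∀ y ∈ Finset.Icc (n+1) (n+1), x < y := by
      intro x hx y hy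
      rw [Finset.mem_Icc] at hx hy
      omega
    have hground : Finset.Icc 1 n ∪ Finset.Icc (n+1) (n+1) = Finset.Icc 1 (n+1) := by
      ext x
      simp only [Finset.mem_union, Finset.mem_Icc]
      omega
    have hP1' : POn (Finset.Icc 1 n) p₁ := by simpa using hP1
    have hPsing := POn_singleton (n+1)
    have hPa : POn (Finset.Icc 1 (n+1)) (p₁ ∪ {({n+1} : Finset ℕ)}) :=
      hground ▸ POn_union hST hP1' hPsing
    have hNCa : IsNonCrossing (p₁ ∪ {({n+1} : Finset ℕ)}) :=
      NC_union hST hP1'.2.1 hPsing.2.1 hNC1 (NC_singleton _)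
    have htopa : topIdx n (asm n ⟨0, (p₁, ∅)⟩) = n + 1 := by
      rw [hπa]
      rw [topIdx_eq (hπa ▸ hPa) (Finset.mem_union_right _ (Finset.mem_singleton_self _))
        (Finset.mem_singleton_self (n+1))]
      exact Finset.min'_singleton (n+1)
    refine ⟨?_, ?_, ?_, ?_, ?_⟩
    · rw [hπa]; exact mem_NCS.mpr ⟨hPa, hNCa⟩
    · rw [hπa, wt_union (POn_disj hST hP1' hPsing)]
      simp [wt, blockWt'_singleton]
    · exact htopa ▸ (by omega : n + 1 = n + 1 - 0)
    · rw [lowPart, htopa, hπa]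
      have h1 : n + 1 - 1 = n := by omega
      rw [h1, Finset.filter_union,
        Finset.filter_true_of_mem (fun B hB => hP1'.2.1 B hB),
        Finset.filter_false_of_mem ?_, Finset.union_empty]
      intro B hB
      rw [Finset.mem_singleton] at hB
      subst hB
      intro hsub
      have := Finset.mem_Icc.mp (hsub (Finset.mem_singleton_self (n+1)))
      omega
    · rw [part2, highPart, htopa, hπa]
      have h1 : n + 1 - 1 = n := by omega
      rw [h1, Finset.filter_union,
        Finset.filter_false_of_mem (fun B hB => not_not_intro (hP1'.2.1 B hB)),
        Finset.filter_true_of_mem ?_, Finset.empty_union]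
      · rw [Finset.image_singleton]
        simp
      · intro B hB
        rw [Finset.mem_singleton] at hB
        subst hB
        intro hsub
        have := Finset.mem_Icc.mp (hsub (Finset.mem_singleton_self (n+1)))
        omega
  · -- k ≥ 1
    have hk1 : 1 ≤ k := by omega
    have hπa : asm n ⟨k, (p₁, p₂)⟩ = p₁ ∪ aug (n - k + 1) n (sh (n - k) p₂) := by
      rw [asm]
      simp only [if_neg hk0]
      rw [Finset.union_empty]
    have hsh : POn (Finset.Icc (n - k + 1) n) (sh (n - k) p₂) := by
      have := POn_sh (n - k) hP2
      rwa [Finset.image_add_right_Icc, (by omega : 1 + (n - k) = n - k + 1),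
        (by omega : k + (n - k) = n)] at this
    have hshNC := NC_sh (n - k) hNC2
    have hl : n - k + 1 ≤ n := by omega
    have hupP : POn (Finset.Icc (n - k + 1) (n+1)) (aug (n - k + 1) n (sh (n - k) p₂)) :=
      POn_aug hsh hl
    have hupNC := NC_aug hsh hl hshNC
    have hST : ∀ x ∈ Finset.Icc 1 (n - k), ∀ y ∈ Finset.Icc (n - k + 1) (n+1), x < y := by
      intro x hx y hy
      rw [Finset.mem_Icc] at hx hy
      omega
    have hground : Finset.Icc 1 (n - k) ∪ Finset.Icc (n - k + 1) (n + 1) =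
        Finset.Icc 1 (n+1) := by
      ext x
      simp only [Finset.mem_union, Finset.mem_Icc]
      omega
    have hPa : POn (Finset.Icc 1 (n+1)) (asm n ⟨k, (p₁, p₂)⟩) := by
      rw [hπa]
      exact hground ▸ POn_union hST hP1 hupP
    have hNCa : IsNonCrossing (asm n ⟨k, (p₁, p₂)⟩) := by
      rw [hπa]
      exact NC_union hST hP1.2.1 hupP.2.1 hNC1 hupNC
    -- the block of n+1
    obtain ⟨b₁, ⟨hb₁, h1b₁⟩, _⟩ := hP2.2.2 1 (Finset.mem_Icc.mpr ⟨le_refl 1, hk1⟩)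
    have hb₁' : shB (n - k) b₁ ∈ sh (n - k) p₂ := Finset.mem_image_of_mem _ hb₁
    have hlb : n - k + 1 ∈ shB (n - k) b₁ :=
      (mem_shB (n - k)).mpr ⟨1, h1b₁, by omega⟩
    have hB₀mem : augf (n - k + 1) n (shB (n - k) b₁) ∈ aug (n - k + 1) n (sh (n - k) p₂) :=
      Finset.mem_image_of_mem _ hb₁'
    have hB₀eq : augf (n - k + 1) n (shB (n - k) b₁) = insert (n+1) (shB (n - k) b₁) :=
      if_pos hlb
    have htopB : n + 1 ∈ augf (n - k + 1) n (shB (n - k) b₁) :=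
      hB₀eq ▸ Finset.mem_insert_self _ _
    have hB₀π : augf (n - k + 1) n (shB (n - k) b₁) ∈ asm n ⟨k, (p₁, p₂)⟩ := by
      rw [hπa]
      exact Finset.mem_union_right _ hB₀mem
    have htopa : topIdx n (asm n ⟨k, (p₁, p₂)⟩) = n + 1 - k := by
      rw [topIdx_eq hPa hB₀π htopB]
      refine le_antisymm ?_ ?_
      · refine le_trans (Finset.min'_le _ (n - k + 1) ?_) (by omega)
        rw [hB₀eq]
        exact Finset.mem_insert_of_mem hlb
      · apply Finset.le_min'
        intro x hx
        rw [hB₀eq] at hx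
        rcases Finset.mem_insert.mp hx with rfl | hx'
        · omega
        · have := Finset.mem_Icc.mp (hsh.2.1 _ hb₁' hx')
          omega
    have hupnotlow : ∀ B ∈ aug (n - k + 1) n (sh (n - k) p₂),
        ¬ B ⊆ Finset.Icc 1 (n - k) := by
      intro B hB hsub
      obtain ⟨C, hC, rfl⟩ := Finset.mem_image.mp hB
      obtain ⟨x, hx⟩ := hsh.1 C hC
      have hx1 : x ∈ augf (n - k + 1) n C := mem_augf.mpr (Or.inl hx)
      have h2 := Finset.mem_Icc.mp (hsub hx1)
      have h3 := Finset.mem_Icc.mp (hsh.2.1 C hC hx)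
      omega
    have hlowa : lowPart n (asm n ⟨k, (p₁, p₂)⟩) = p₁ := by
      rw [lowPart, htopa]
      have h1 : n + 1 - k - 1 = n - k := by omega
      rw [h1]
      conv_lhs => rw [hπa]
      rw [Finset.filter_union, Finset.filter_true_of_mem (fun B hB => hP1.2.1 B hB),
        Finset.filter_false_of_mem hupnotlow, Finset.union_empty]
    have hhigha : highPart n (asm n ⟨k, (p₁, p₂)⟩) = aug (n - k + 1) n (sh (n - k) p₂) := by
      rw [highPart, htopa]
      have h1 : n + 1 - k - 1 = n - k := by omega
      rw [h1]
      conv_lhs => rw [hπa]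
      rw [Finset.filter_union,
        Finset.filter_false_of_mem (fun B hB => not_not_intro (hP1.2.1 B hB)),
        Finset.filter_true_of_mem hupnotlow, Finset.empty_union]
    have hpart2a : part2 n (asm n ⟨k, (p₁, p₂)⟩) = p₂ := by
      rw [part2, hhigha, htopa]
      have h1 : n + 1 - k - 1 = n - k := by omega
      rw [h1, aug, sh, Finset.image_image, Finset.image_image]
      have hpt : ∀ b ∈ p₂,
          (((fun B => (B.erase (n+1)).image (fun x => x - (n - k))) ∘
            augf (n - k + 1) n) ∘ shB (n - k)) b = b := by
        intro b hb
        simp only [Function.comp_apply]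
        have hnot : n + 1 ∉ shB (n - k) b := by
          intro hmem
          obtain ⟨y, hy, hy2⟩ := (mem_shB _).mp hmem
          have := Finset.mem_Icc.mp (hP2.2.1 b hb hy)
          omega
        have herase : (augf (n - k + 1) n (shB (n - k) b)).erase (n+1) = shB (n - k) b := by
          unfold augf
          split
          · exact Finset.erase_insert hnot
          · exact Finset.erase_eq_of_notMem hnot
        rw [herase, shB, Finset.image_image]
        rw [Finset.image_congr (g := id) ?_, Finset.image_id]
        intro x hx
        simp only [Function.comp_apply, id]
        omega
      rw [Finset.image_congr (g := id) hpt, Finset.image_id]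
      exact Finset.erase_eq_of_notMem (fun hmem => by
        obtain ⟨x, hx⟩ := hP2.1 ∅ hmem
        exact absurd hx (Finset.notMem_empty x))
    refine ⟨mem_NCS.mpr ⟨hPa, hNCa⟩, ?_, htopa, hlowa, hpart2a⟩
    rw [hπa, wt_union (POn_disj hST hP1 hupP), wt_aug hsh hl, wt_sh]
    omega

end Decomp

lemma F_zero : F 0 = 1 := by
  rw [F, NCS_zero, Finset.sum_singleton]
  simp [wt]

set_option maxHeartbeats 1000000 in
lemma F_succ (n : ℕ) :
    F (n + 1) = ∑ k ∈ Finset.range (n + 1), (X : Polynomial ℕ) ^ k * F k * F (n - k) := by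
  have key : ∑ P ∈ NCS (n+1), (X : Polynomial ℕ) ^ wt P =
      ∑ x ∈ (Finset.range (n+1)).sigma (fun k => NCS (n - k) ×ˢ NCS k),
        (X : Polynomial ℕ) ^ (x.1 + wt x.2.1 + wt x.2.2) := by
    refine Finset.sum_nbij'
      (fun π => ⟨n + 1 - topIdx n π, (lowPart n π, part2 n π)⟩) (asm n)
      ?_ ?_ ?_ ?_ ?_
    · intro π hπ
      obtain ⟨hP, hNC⟩ := mem_NCS.mp hπ
      obtain ⟨h1, h2, hlow, hpart, _⟩ := dis_spec hP hNC
      simp only [Finset.mem_sigma, Finset.mem_product]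
      refine ⟨Finset.mem_range.mpr (show n + 1 - topIdx n π < n + 1 by omega), ?_, hpart⟩
      show lowPart n π ∈ NCS (n - (n + 1 - topIdx n π))
      have he : n - (n + 1 - topIdx n π) = topIdx n π - 1 := by omega
      rw [he]
      exact hlow
    · intro x hx
      rw [Finset.mem_sigma] at hx
      obtain ⟨hk, hx2⟩ := hx
      obtain ⟨h1, h2⟩ := Finset.mem_product.mp hx2
      have hkn : x.1 ≤ n := Nat.lt_succ_iff.mp (Finset.mem_range.mp hk)
      exact (asm_spec hkn h1 h2).1
    · intro π hπ
      obtain ⟨hP, hNC⟩ := mem_NCS.mp hπ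
      exact (dis_spec hP hNC).2.2.2.2.symm
    · rintro ⟨k, p₁, p₂⟩ hx
      rw [Finset.mem_sigma] at hx
      obtain ⟨hk, hx2⟩ := hx
      obtain ⟨h1, h2⟩ := Finset.mem_product.mp hx2
      have hkn : k ≤ n := Nat.lt_succ_iff.mp (Finset.mem_range.mp hk)
      obtain ⟨_, _, htop, hlow, hpart⟩ := asm_spec hkn h1 h2
      show (⟨n + 1 - topIdx n (asm n ⟨k, (p₁, p₂)⟩), (lowPart n (asm n ⟨k, (p₁, p₂)⟩),
        part2 n (asm n ⟨k, (p₁, p₂)⟩))⟩ :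
          (_ : ℕ) × Finset (Finset ℕ) × Finset (Finset ℕ)) = ⟨k, (p₁, p₂)⟩
      rw [htop, hlow, hpart]
      have he : n + 1 - (n + 1 - k) = k := by omega
      rw [he]
    · intro π hπ
      obtain ⟨hP, hNC⟩ := mem_NCS.mp hπ
      obtain ⟨h1, h2, hlow, hpart, heq⟩ := dis_spec hP hNC
      have hkn : n + 1 - topIdx n π ≤ n := by omega
      have hlow' : lowPart n π ∈ NCS (n - (n + 1 - topIdx n π)) := by
        have he : n - (n + 1 - topIdx n π) = topIdx n π - 1 := by omega
        rw [he]
        exact hlow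
      obtain ⟨_, hwt, _, _, _⟩ := asm_spec hkn hlow' hpart
      show (X : Polynomial ℕ) ^ wt π = X ^ (n + 1 - topIdx n π + wt (lowPart n π) + wt (part2 n π))
      conv_lhs => rw [heq]
      rw [hwt]
  rw [F, key, Finset.sum_sigma]
  refine Finset.sum_congr rfl fun k hk => ?_
  rw [Finset.sum_product]
  simp only [pow_add]
  rw [F, F]
  simp only [Finset.mul_sum, Finset.sum_mul]
  refine Finset.sum_congr rfl fun p₁ _ => ?_
  refine Finset.sum_congr rfl fun p₂ _ => ?_
  ring


lemma F_eq_A : ∀ n, F n = A n := by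
  intro n
  induction n using Nat.strong_induction_on with
  | _ n ih =>
    match n with
    | 0 => rw [F_zero, A_zero]
    | n + 1 =>
      rw [F_succ, A_succ]
      refine Finset.sum_congr rfl fun k hk => ?_
      have hk' := Finset.mem_range.mp hk
      rw [ih k (by omega), ih (n - k) (by omega)]

end NCaux

open scoped Classical in
/-- `∑_{π ∈ NC(n)} q^{wt'(π)} = q^{binom(n,2)} C_n(q^{-1})`, where
`wt'(π) = ∑_{B ∈ π} ∑_{j ∈ B} (j - min B)` and `C_n` is the Carlitz `q`-Catalan
polynomial. -/
theorem NC_wt'_gen_eq_reversed_carlitz (n : ℕ) :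
    (∑ P ∈ ((Finset.Icc 1 n).powerset.powerset).filter
        (fun P => IsPartitionOf n P ∧ IsNonCrossing P),
      (X : Polynomial ℕ) ^ (∑ B ∈ P, blockWt' B)) =
    revAt (n.choose 2) (carlitz n) := by
  have h0 : (∑ P ∈ ((Finset.Icc 1 n).powerset.powerset).filter
        (fun P => IsPartitionOf n P ∧ IsNonCrossing P),
      (X : Polynomial ℕ) ^ (∑ B ∈ P, blockWt' B)) = NCaux.F n := rfl
  rw [h0, NCaux.F_eq_A n, NCaux.revAt_eq_reflect (NCaux.carlitz_natDegree_le n)]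
  rfl
end

section
/- For a 231-avoiding permutation π of [n], the descent set Des(π) = {i : π_i > π_{i+1}} ∪ {n} and the inverse descent set iDes(π) = Des(π^{-1}) have the same cardinality. -/
open Finset

/-- The value of `σ` at the 0-based position `i` (junk `0` out of range). -/
def permVal {n : ℕ} (σ : Equiv.Perm (Fin n)) (i : ℕ) : ℕ :=
  if h : i < n then (σ ⟨i, h⟩ : ℕ) else 0

/-- The augmented descent set `Des(σ) = {i : σ_i > σ_{i+1}} ∪ {n}` (1-based
positions). -/
def DesAug (n : ℕ) (σ : Equiv.Perm (Fin n)) : Finset ℕ :=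
  insert n (((Finset.range (n - 1)).filter
    (fun i => permVal σ (i + 1) < permVal σ i)).image (· + 1))

/-- A permutation is 231-avoiding: no `i < j < k` with `σ k < σ i < σ j`. -/
def PermAvoids231 {n : ℕ} (σ : Equiv.Perm (Fin n)) : Prop :=
  ¬ ∃ i j k : Fin n, i < j ∧ j < k ∧ σ k < σ i ∧ σ i < σ j

lemma permVal_eq {n : ℕ} (σ : Equiv.Perm (Fin n)) (i : ℕ) (h : i < n) :
    permVal σ i = (σ ⟨i, h⟩ : ℕ) := dif_pos h

lemma key_card {n : ℕ} (σ : Equiv.Perm (Fin n)) (hσ : PermAvoids231 σ) :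
    ((Finset.range (n - 1)).filter
      (fun i => permVal σ (i + 1) < permVal σ i)).card =
    ((Finset.range (n - 1)).filter
      (fun i => permVal σ⁻¹ (i + 1) < permVal σ⁻¹ i)).card := by
  apply Finset.card_bij (fun a _ => permVal σ a - 1)
  · -- maps into target
    intro a ha
    simp only [Finset.mem_filter, Finset.mem_range] at ha ⊢
    obtain ⟨ha1, hd⟩ := ha
    have hA : a < n := by omega
    have hB : a + 1 < n := by omega
    rw [permVal_eq σ a hA, permVal_eq σ (a+1) hB] at hd
    have hA1 : 1 ≤ (σ ⟨a, hA⟩ : ℕ) := by omega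
    have hAn : (σ ⟨a, hA⟩ : ℕ) < n := (σ ⟨a, hA⟩).isLt
    have hvm : (σ ⟨a, hA⟩ : ℕ) - 1 < n := by omega
    rw [permVal_eq σ a hA]
    refine ⟨by omega, ?_⟩
    have hplus : (σ ⟨a, hA⟩ : ℕ) - 1 + 1 = (σ ⟨a, hA⟩ : ℕ) := by omega
    rw [hplus, permVal_eq σ⁻¹ _ hAn, permVal_eq σ⁻¹ _ hvm]
    have h1 : σ⁻¹ ⟨(σ ⟨a, hA⟩ : ℕ), hAn⟩ = ⟨a, hA⟩ := by
      have he : (⟨(σ ⟨a, hA⟩ : ℕ), hAn⟩ : Fin n) = σ ⟨a, hA⟩ := rfl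
      rw [he]; exact σ.symm_apply_apply _
    rw [h1]
    show a < (σ⁻¹ ⟨(σ ⟨a, hA⟩ : ℕ) - 1, hvm⟩ : ℕ)
    by_contra hcon
    push_neg at hcon
    have hσp : σ (σ⁻¹ ⟨(σ ⟨a, hA⟩ : ℕ) - 1, hvm⟩) = ⟨(σ ⟨a, hA⟩ : ℕ) - 1, hvm⟩ :=
      σ.apply_symm_apply _
    have hpa : (σ⁻¹ ⟨(σ ⟨a, hA⟩ : ℕ) - 1, hvm⟩ : ℕ) ≠ a := by
      intro h
      have h2 : σ⁻¹ ⟨(σ ⟨a, hA⟩ : ℕ) - 1, hvm⟩ = ⟨a, hA⟩ := Fin.ext h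
      rw [h2] at hσp
      have h3 : (σ ⟨a, hA⟩ : ℕ) = (σ ⟨a, hA⟩ : ℕ) - 1 := congrArg Fin.val hσp
      omega
    have hBne : (σ ⟨a + 1, hB⟩ : ℕ) ≠ (σ ⟨a, hA⟩ : ℕ) - 1 := by
      intro h
      have h2 : σ ⟨a + 1, hB⟩ = σ (σ⁻¹ ⟨(σ ⟨a, hA⟩ : ℕ) - 1, hvm⟩) := by
        rw [hσp]; exact Fin.ext h
      have h3 : (⟨a + 1, hB⟩ : Fin n) = σ⁻¹ ⟨(σ ⟨a, hA⟩ : ℕ) - 1, hvm⟩ :=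
        σ.injective h2
      have h4 : a + 1 = (σ⁻¹ ⟨(σ ⟨a, hA⟩ : ℕ) - 1, hvm⟩ : ℕ) := congrArg Fin.val h3
      omega
    refine hσ ⟨σ⁻¹ ⟨(σ ⟨a, hA⟩ : ℕ) - 1, hvm⟩, ⟨a, hA⟩, ⟨a + 1, hB⟩, ?_, ?_, ?_, ?_⟩
    · rw [Fin.lt_def]
      show (σ⁻¹ ⟨(σ ⟨a, hA⟩ : ℕ) - 1, hvm⟩ : ℕ) < a
      omega
    · rw [Fin.lt_def]
      show a < a + 1
      omega
    · rw [Fin.lt_def, hσp]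
      show (σ ⟨a + 1, hB⟩ : ℕ) < (σ ⟨a, hA⟩ : ℕ) - 1
      omega
    · rw [Fin.lt_def, hσp]
      show (σ ⟨a, hA⟩ : ℕ) - 1 < (σ ⟨a, hA⟩ : ℕ)
      omega
  · -- injective
    intro a1 ha1 a2 ha2 heq
    simp only [Finset.mem_filter, Finset.mem_range] at ha1 ha2
    have h1 : a1 < n := by omega
    have h2 : a2 < n := by omega
    have h1' : a1 + 1 < n := by omega
    have h2' : a2 + 1 < n := by omega
    rw [permVal_eq σ a1 h1, permVal_eq σ (a1+1) h1'] at ha1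
    rw [permVal_eq σ a2 h2, permVal_eq σ (a2+1) h2'] at ha2
    rw [permVal_eq σ a1 h1, permVal_eq σ a2 h2] at heq
    have e : (σ ⟨a1, h1⟩ : ℕ) = (σ ⟨a2, h2⟩ : ℕ) := by omega
    have h3 : (⟨a1, h1⟩ : Fin n) = ⟨a2, h2⟩ := σ.injective (Fin.ext e)
    exact congrArg Fin.val h3
  · -- surjective
    intro v hv
    simp only [Finset.mem_filter, Finset.mem_range] at hv
    obtain ⟨hv1, hd⟩ := hv
    have hv1' : v < n := by omega
    have hv2 : v + 1 < n := by omega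
    rw [permVal_eq σ⁻¹ (v+1) hv2, permVal_eq σ⁻¹ v hv1'] at hd
    have hσi : σ (σ⁻¹ ⟨v + 1, hv2⟩) = ⟨v + 1, hv2⟩ := σ.apply_symm_apply _
    have hσq : σ (σ⁻¹ ⟨v, hv1'⟩) = ⟨v, hv1'⟩ := σ.apply_symm_apply _
    have hqn : (σ⁻¹ ⟨v, hv1'⟩ : ℕ) < n := (σ⁻¹ ⟨v, hv1'⟩).isLt
    have hin : (σ⁻¹ ⟨v + 1, hv2⟩ : ℕ) < n - 1 := by omega
    have hiN : (σ⁻¹ ⟨v + 1, hv2⟩ : ℕ) < n := by omega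
    have hi1 : (σ⁻¹ ⟨v + 1, hv2⟩ : ℕ) + 1 < n := by omega
    have hieta : (⟨(σ⁻¹ ⟨v + 1, hv2⟩ : ℕ), hiN⟩ : Fin n) = σ⁻¹ ⟨v + 1, hv2⟩ := rfl
    have hdesc : (σ ⟨(σ⁻¹ ⟨v + 1, hv2⟩ : ℕ) + 1, hi1⟩ : ℕ) < v + 1 := by
      by_contra hcon
      push_neg at hcon
      have hCne : (σ ⟨(σ⁻¹ ⟨v + 1, hv2⟩ : ℕ) + 1, hi1⟩ : ℕ) ≠ v + 1 := by
        intro h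
        have h2 : σ ⟨(σ⁻¹ ⟨v + 1, hv2⟩ : ℕ) + 1, hi1⟩ = σ (σ⁻¹ ⟨v + 1, hv2⟩) := by
          rw [hσi]; exact Fin.ext h
        have h3 := congrArg Fin.val (σ.injective h2)
        simp only at h3
        omega
      have hqne : (σ⁻¹ ⟨v, hv1'⟩ : ℕ) ≠ (σ⁻¹ ⟨v + 1, hv2⟩ : ℕ) + 1 := by
        intro h
        have h2 : σ⁻¹ ⟨v, hv1'⟩ = ⟨(σ⁻¹ ⟨v + 1, hv2⟩ : ℕ) + 1, hi1⟩ := Fin.ext h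
        rw [h2] at hσq
        have h3 : (σ ⟨(σ⁻¹ ⟨v + 1, hv2⟩ : ℕ) + 1, hi1⟩ : ℕ) = v := congrArg Fin.val hσq
        omega
      refine hσ ⟨σ⁻¹ ⟨v + 1, hv2⟩, ⟨(σ⁻¹ ⟨v + 1, hv2⟩ : ℕ) + 1, hi1⟩,
        σ⁻¹ ⟨v, hv1'⟩, ?_, ?_, ?_, ?_⟩
      · rw [Fin.lt_def]
        show (σ⁻¹ ⟨v + 1, hv2⟩ : ℕ) < (σ⁻¹ ⟨v + 1, hv2⟩ : ℕ) + 1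
        omega
      · rw [Fin.lt_def]
        show (σ⁻¹ ⟨v + 1, hv2⟩ : ℕ) + 1 < (σ⁻¹ ⟨v, hv1'⟩ : ℕ)
        omega
      · rw [Fin.lt_def, hσq, hσi]
        show v < v + 1
        omega
      · rw [Fin.lt_def, hσi]
        show v + 1 < (σ ⟨(σ⁻¹ ⟨v + 1, hv2⟩ : ℕ) + 1, hi1⟩ : ℕ)
        omega
    refine ⟨(σ⁻¹ ⟨v + 1, hv2⟩ : ℕ), ?_, ?_⟩
    · simp only [Finset.mem_filter, Finset.mem_range]
      refine ⟨hin, ?_⟩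
      rw [permVal_eq σ _ hi1, permVal_eq σ _ hiN, hieta, hσi]
      show (σ ⟨(σ⁻¹ ⟨v + 1, hv2⟩ : ℕ) + 1, hi1⟩ : ℕ) < v + 1
      exact hdesc
    · rw [permVal_eq σ _ hiN, hieta, hσi]
      show v + 1 - 1 = v
      omega

lemma desAug_card {n : ℕ} (σ : Equiv.Perm (Fin n)) :
    (DesAug n σ).card = ((Finset.range (n - 1)).filter
      (fun i => permVal σ (i + 1) < permVal σ i)).card + 1 := by
  rw [DesAug, Finset.card_insert_of_notMem, Finset.card_image_of_injective _
    (fun a b h => by omega)]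
  simp only [Finset.mem_image, Finset.mem_filter, Finset.mem_range]
  rintro ⟨a, ⟨ha, -⟩, hn⟩
  omega

/-- For a 231-avoiding permutation `σ`, the augmented descent set
`Des(σ) = {i : σ_i > σ_{i+1}} ∪ {n}` and the inverse descent set
`iDes(σ) = Des(σ⁻¹)` have the same cardinality. -/
theorem card_Des_eq_card_iDes_of_avoiding231 (n : ℕ) (σ : Equiv.Perm (Fin n))
    (hσ : PermAvoids231 σ) :
    (DesAug n σ).card = (DesAug n σ⁻¹).card := by
  rw [desAug_card, desAug_card, key_card σ hσ]
end
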